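/- arXiv:2603.27489 — 4 statements merged into one kernel-verified Lean document; each statement's English description precedes it below -/
import Mathlib

section
/- Let n > i ≥ 3 be integers, let p > 1, and let f be a positive first p-Dirichlet eigenfunction of the tadpole graph T_{n,i}, i.e. f : V(T_{n,i}) → ℝ satisfies f(t_n) = 0, f(t_k) > 0 for all 1 ≤ k ≤ n−1, and R_{p,T_{n,i}}[f] = λ_{1,p}(T_{n,i}). Then f does not achieve its maximum on the tail of T_{n,i}: for every k with i ≤ k ≤ n one has f(t_k) < max_{1 ≤ j ≤ n} f(t_j). -/
attribute [local instance] Classical.propDecidable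

open Finset

/-- The degree of a vertex `x` in a finite simple graph `G`. -/
noncomputable def deg {V : Type*} [Fintype V] (G : SimpleGraph V) (x : V) : ℕ :=
  (Finset.univ.filter (fun y => G.Adj x y)).card

/-- The `p`-energy `‖df‖_{p,G}^p = Σ_{{x,y} ∈ E(G)} |f x - f y|^p`
(each unordered edge counted once, i.e. half the double sum). -/
noncomputable def energy {V : Type*} [Fintype V] (G : SimpleGraph V) (p : ℝ) (f : V → ℝ) : ℝ :=
  (∑ x : V, ∑ y : V, if G.Adj x y then |f x - f y| ^ p else 0) / 2

/-- The weighted `p`-norm `‖f‖_{p,G}^p = Σ_x |f x|^p · deg x`. -/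
noncomputable def pnorm {V : Type*} [Fintype V] (G : SimpleGraph V) (p : ℝ) (f : V → ℝ) : ℝ :=
  ∑ x : V, |f x| ^ p * (deg G x : ℝ)

/-- The `p`-Rayleigh quotient `R_{p,G}[f]`. -/
noncomputable def rayleigh {V : Type*} [Fintype V] (G : SimpleGraph V) (p : ℝ) (f : V → ℝ) : ℝ :=
  energy G p f / pnorm G p f

/-- The first `p`-Dirichlet eigenvalue `λ_{1,p}(G)`: the infimum of Rayleigh quotients of
nonzero functions vanishing on the boundary `B(G)` (the set of pendant vertices). -/
noncomputable def lambda1 {V : Type*} [Fintype V] (G : SimpleGraph V) (p : ℝ) : ℝ :=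
  sInf { r : ℝ | ∃ f : V → ℝ, (∀ x : V, deg G x = 1 → f x = 0) ∧ f ≠ 0 ∧ r = rayleigh G p f }

/-- The number of edges with exactly one endpoint in `U`. -/
noncomputable def cutCard {V : Type*} [Fintype V] (G : SimpleGraph V) (U : Finset V) : ℕ :=
  ∑ x ∈ U, (Finset.univ.filter (fun y => G.Adj x y ∧ y ∉ U)).card

/-- The Dirichlet Cheeger constant `h_D(G)`. -/
noncomputable def cheeger {V : Type*} [Fintype V] (G : SimpleGraph V) : ℝ :=
  sInf { r : ℝ | ∃ U : Finset V, U.Nonempty ∧ (∀ x ∈ U, deg G x ≠ 1) ∧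
    r = (cutCard G U : ℝ) / ∑ x ∈ U, (deg G x : ℝ) }

/-- The tadpole graph `T_{n,i}` on vertices `0, …, n-1` (vertex `k-1` representing `t_k`):
edges between consecutive vertices together with the edge `t_1 ∼ t_i`. -/
def tadpole (n i : ℕ) : SimpleGraph (Fin n) :=
  SimpleGraph.fromRel (fun a b => b.val = a.val + 1 ∨ (a.val = 0 ∧ b.val = i - 1))

/-- The path graph on `n` vertices. -/
def pathG (n : ℕ) : SimpleGraph (Fin n) :=
  SimpleGraph.fromRel (fun a b => b.val = a.val + 1)

noncomputable def phi (p s : ℝ) : ℝ := |s| ^ (p-2) * s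

lemma phi_neg' (p s : ℝ) : phi p (-s) = - phi p s := by simp [phi]


lemma phi_pos {p s : ℝ} (hs : 0 < s) : 0 < phi p s :=
  mul_pos (Real.rpow_pos_of_pos (abs_pos.mpr hs.ne') _) hs

lemma phi_nonneg {p s : ℝ} (hs : 0 ≤ s) : 0 ≤ phi p s :=
  mul_nonneg (Real.rpow_nonneg (abs_nonneg s) _) hs

lemma phi_pos_iff {p s : ℝ} : 0 < phi p s ↔ 0 < s := by
  constructor
  · intro h
    by_contra hs
    push_neg at hs
    rcases eq_or_lt_of_le hs with h' | h'
    · subst h'; simp [phi] at h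
    · have := phi_pos (p := p) (neg_pos.mpr h')
      rw [phi_neg'] at this; linarith
  · exact phi_pos

lemma hasDerivAt_abs_rpow' {p : ℝ} (hp : 1 < p) (s : ℝ) :
    HasDerivAt (fun t : ℝ => |t| ^ p) (p * phi p s) s := by
  have := hasDerivAt_abs_rpow s hp
  rw [phi, ← mul_assoc]
  exact this

lemma hasDerivAt_abs_rpow_affine {p : ℝ} (hp : 1 < p) (a c : ℝ) :
    HasDerivAt (fun t : ℝ => |a + c * t| ^ p) (p * phi p a * c) 0 := by
  have h1 : HasDerivAt (fun t : ℝ => a + c * t) c 0 := by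
    simpa using ((hasDerivAt_id (0:ℝ)).const_mul c).const_add a
  have h2 := (hasDerivAt_abs_rpow' hp (a + c * 0)).comp 0 h1
  simpa [Function.comp_def] using h2

lemma energy_nonneg {V : Type*} [Fintype V] (G : SimpleGraph V) (p : ℝ) (f : V → ℝ) :
    0 ≤ energy G p f := by
  rw [energy]
  apply div_nonneg _ (by norm_num)
  apply Finset.sum_nonneg
  intro u _
  apply Finset.sum_nonneg
  intro v _
  split
  · exact Real.rpow_nonneg (abs_nonneg _) _
  · exact le_refl 0

lemma pnorm_nonneg {V : Type*} [Fintype V] (G : SimpleGraph V) (p : ℝ) (f : V → ℝ) :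
    0 ≤ pnorm G p f := by
  rw [pnorm]
  apply Finset.sum_nonneg
  intro u _
  exact mul_nonneg (Real.rpow_nonneg (abs_nonneg _) _) (Nat.cast_nonneg _)

lemma lambda1_le {V : Type*} [Fintype V] (G : SimpleGraph V) (p : ℝ) (g : V → ℝ)
    (h1 : ∀ x : V, deg G x = 1 → g x = 0) (h2 : g ≠ 0) :
    lambda1 G p ≤ rayleigh G p g := by
  rw [lambda1]
  apply csInf_le
  · refine ⟨0, ?_⟩
    rintro r ⟨h, _, _, rfl⟩
    exact div_nonneg (energy_nonneg G p h) (pnorm_nonneg G p h)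
  · exact ⟨g, h1, h2, rfl⟩

lemma eigen_eq_gen {V : Type*} [Fintype V] (G : SimpleGraph V) {p : ℝ} (hp : 1 < p) (f : V → ℝ)
    (hN0 : 0 < pnorm G p f)
    (heig : rayleigh G p f = lambda1 G p)
    (x : V)
    (hbdpres : ∀ v : V, deg G v = 1 → v ≠ x ∧ f v = 0)
    (hnz : ∃ y : V, y ≠ x ∧ f y ≠ 0) :
    ∑ v, (if G.Adj x v then phi p (f x - f v) else 0)
      = lambda1 G p * (phi p (f x) * (deg G x : ℝ)) := by
  classical
  set lam := lambda1 G p with hlam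
  set χ : V → ℝ := fun u => if u = x then 1 else 0 with hχ
  set g : ℝ → V → ℝ := fun t u => f u + χ u * t with hgdef
  have hg0 : g 0 = f := by funext u; simp [hgdef]
  set S : ℝ := ∑ v, (if G.Adj x v then phi p (f x - f v) else 0) with hS
  set A : V → V → ℝ := fun u v => if G.Adj u v then p * phi p (f u - f v) else 0 with hA
  -- energy derivative
  have hEterm : ∀ u ∈ (univ : Finset V), ∀ v ∈ (univ : Finset V),
      HasDerivAt (fun t => if G.Adj u v then |g t u - g t v| ^ p else 0)
        (A u v * (χ u - χ v)) 0 := by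
    intro u _ v _
    by_cases h : G.Adj u v
    · have heq : ∀ t : ℝ, (if G.Adj u v then |g t u - g t v| ^ p else 0)
          = |(f u - f v) + (χ u - χ v) * t| ^ p := by
        intro t; rw [if_pos h]; congr 1; simp only [hgdef]; ring_nf
      simp only [heq, hA, if_pos h]
      exact hasDerivAt_abs_rpow_affine hp _ _
    · simp only [if_neg h, hA]
      simpa using hasDerivAt_const (0:ℝ) (0:ℝ)
  have hE : HasDerivAt (fun t => energy G p (g t))
      ((∑ u : V, ∑ v : V, A u v * (χ u - χ v)) / 2) 0 := by
    have := HasDerivAt.fun_sum (u := (univ : Finset V))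
      (fun u _ => HasDerivAt.fun_sum (u := (univ : Finset V)) (hEterm u (mem_univ u)))
    exact this.div_const 2
  -- simplify the energy derivative
  have hsum : (∑ u : V, ∑ v : V, A u v * (χ u - χ v)) = 2 * (p * S) := by
    have hexp : ∀ u v : V, A u v * (χ u - χ v) = A u v * χ u - A u v * χ v := by
      intro u v; ring
    simp only [hexp, Finset.sum_sub_distrib]
    have h1 : (∑ u : V, ∑ v : V, A u v * χ u) = p * S := by
      have : ∀ u : V, (∑ v : V, A u v * χ u) = (if u = x then (∑ v : V, A u v) else 0) := by
        intro u
        by_cases hu : u = x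
        · simp only [hχ, if_pos hu, mul_one]
        · simp only [hχ, if_neg hu, mul_zero, Finset.sum_const_zero]
      rw [Finset.sum_congr rfl (fun u _ => this u), Finset.sum_ite_eq' univ x
        (fun u => ∑ v : V, A u v)]
      simp only [mem_univ, if_pos]
      rw [hS, Finset.mul_sum]
      apply Finset.sum_congr rfl
      intro v _
      by_cases h : G.Adj x v <;> simp [hA, h]
    have h2 : (∑ u : V, ∑ v : V, A u v * χ v) = - (p * S) := by
      rw [Finset.sum_comm]
      have : ∀ v : V, (∑ u : V, A u v * χ v) = (if v = x then (∑ u : V, A u v) else 0) := by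
        intro v
        by_cases hv : v = x
        · simp only [hχ, if_pos hv, mul_one]
        · simp only [hχ, if_neg hv, mul_zero, Finset.sum_const_zero]
      rw [Finset.sum_congr rfl (fun v _ => this v), Finset.sum_ite_eq' univ x
        (fun v => ∑ u : V, A u v)]
      simp only [mem_univ, if_pos]
      rw [hS, Finset.mul_sum, ← Finset.sum_neg_distrib]
      apply Finset.sum_congr rfl
      intro u _
      by_cases h : G.Adj u x
      · have h' : G.Adj x u := h.symm
        have hneg : f u - f x = -(f x - f u) := by ring
        simp only [hA, if_pos h, if_pos h', hneg, phi_neg']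
        ring
      · have h' : ¬ G.Adj x u := fun hc => h hc.symm
        simp [hA, h, h']
    rw [h1, h2]; ring
  have hE' : HasDerivAt (fun t => energy G p (g t)) (p * S) 0 := by
    rw [hsum] at hE
    convert hE using 1; ring
  -- pnorm derivative
  have hNterm : ∀ u ∈ (univ : Finset V),
      HasDerivAt (fun t => |g t u| ^ p * (deg G u : ℝ))
        ((if u = x then p * phi p (f u) * (deg G u : ℝ) else 0)) 0 := by
    intro u _
    have heq : ∀ t : ℝ, g t u = f u + χ u * t := fun t => rfl
    have h1 : HasDerivAt (fun t => |g t u| ^ p) (p * phi p (f u) * χ u) 0 := by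
      simp only [heq]
      exact hasDerivAt_abs_rpow_affine hp _ _
    have h2 := h1.mul_const (deg G u : ℝ)
    refine HasDerivAt.congr_deriv h2 ?_
    by_cases hu : u = x <;> simp [hχ, hu] <;> ring
  have hN : HasDerivAt (fun t => pnorm G p (g t))
      (p * phi p (f x) * (deg G x : ℝ)) 0 := by
    have := HasDerivAt.fun_sum (u := (univ : Finset V)) hNterm
    rwa [Finset.sum_ite_eq' univ x (fun u => p * phi p (f u) * (deg G u : ℝ)),
      if_pos (mem_univ x)] at this
  -- rayleigh derivative and local min
  have hvalN : pnorm G p (g 0) = pnorm G p f := by rw [hg0]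
  have hvalE : energy G p (g 0) = energy G p f := by rw [hg0]
  have hR : HasDerivAt (fun t => rayleigh G p (g t))
      ((p * S * pnorm G p f - energy G p f * (p * phi p (f x) * (deg G x : ℝ)))
        / (pnorm G p f) ^ 2) 0 := by
    have := hE'.div hN (by rw [hvalN]; exact hN0.ne')
    simp only [hvalN, hvalE] at this
    exact this
  have hmin : IsLocalMin (fun t => rayleigh G p (g t)) 0 := by
    apply Filter.Eventually.of_forall
    intro t
    have hmem : lam ≤ rayleigh G p (g t) := by
      apply lambda1_le
      · intro v hv
        obtain ⟨hvx, hfv⟩ := hbdpres v hv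
        simp [hgdef, hχ, hvx, hfv]
      · obtain ⟨y, hyx, hfy⟩ := hnz
        intro hzero
        have := congrFun hzero y
        simp [hgdef, hχ, hyx] at this
        exact hfy this
    simp only [hg0, heig]
    exact hmem
  have hcrit := hmin.hasDerivAt_eq_zero hR
  -- extract the equation
  have hnum : p * S * pnorm G p f - energy G p f * (p * phi p (f x) * (deg G x : ℝ)) = 0 := by
    have hsq : (pnorm G p f) ^ 2 ≠ 0 := pow_ne_zero 2 hN0.ne'
    field_simp at hcrit
    linear_combination hcrit
  have hEN : energy G p f = lam * pnorm G p f := by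
    rw [← heig, rayleigh, div_mul_cancel₀]
    exact hN0.ne'
  rw [hEN] at hnum
  have hpne : p ≠ 0 := by linarith
  have : S * (p * pnorm G p f) = (lam * (phi p (f x) * (deg G x : ℝ))) * (p * pnorm G p f) := by
    linear_combination hnum
  have := mul_right_cancel₀ (mul_ne_zero hpne hN0.ne') this
  rw [hS] at this ⊢
  exact this

lemma sum_ite_pair {V : Type*} [Fintype V] {M : Type*} [AddCommMonoid M]
    (P : V → Prop) (h : V → M) (a b : V) (hab : a ≠ b)
    (hchar : ∀ y, P y ↔ (y = a ∨ y = b)) :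
    ∑ y, (if P y then h y else 0) = h a + h b := by
  have key : ∀ y, (if P y then h y else 0)
      = (if y = a then h a else 0) + (if y = b then h b else 0) := by
    intro y
    by_cases ha : y = a
    · subst ha; simp [hab, (hchar y).mpr (Or.inl rfl)]
    · by_cases hb : y = b
      · subst hb; simp [ha, (hchar y).mpr (Or.inr rfl)]
      · have : ¬ P y := fun hP => by rcases (hchar y).mp hP with h|h <;> simp_all
        simp [this, ha, hb]
  rw [Finset.sum_congr rfl (fun y _ => key y), Finset.sum_add_distrib]
  simp

lemma sum_ite_triple {V : Type*} [Fintype V] {M : Type*} [AddCommMonoid M]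
    (P : V → Prop) (h : V → M) (a b c : V) (hab : a ≠ b) (hac : a ≠ c) (hbc : b ≠ c)
    (hchar : ∀ y, P y ↔ (y = a ∨ y = b ∨ y = c)) :
    ∑ y, (if P y then h y else 0) = h a + h b + h c := by
  have key : ∀ y, (if P y then h y else 0)
      = (if y = a then h a else 0) + ((if y = b then h b else 0) + (if y = c then h c else 0)) := by
    intro y
    by_cases ha : y = a
    · subst ha; simp [hab, hac, (hchar y).mpr (Or.inl rfl)]
    · by_cases hb : y = b
      · subst hb; simp [ha, hbc, (hchar y).mpr (Or.inr (Or.inl rfl))]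
      · by_cases hc : y = c
        · subst hc; simp [ha, hb, (hchar y).mpr (Or.inr (Or.inr rfl))]
        · have : ¬ P y := fun hP => by rcases (hchar y).mp hP with h|h|h <;> simp_all
          simp [this, ha, hb, hc]
  rw [Finset.sum_congr rfl (fun y _ => key y), Finset.sum_add_distrib, Finset.sum_add_distrib]
  simp [add_assoc]

lemma sum_ite_single {V : Type*} [Fintype V] {M : Type*} [AddCommMonoid M]
    (P : V → Prop) (h : V → M) (a : V)
    (hchar : ∀ y, P y ↔ y = a) :
    ∑ y, (if P y then h y else 0) = h a := by
  have key : ∀ y, (if P y then h y else 0) = (if y = a then h a else 0) := by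
    intro y
    by_cases ha : y = a
    · subst ha; simp [(hchar y).mpr rfl]
    · have : ¬ P y := fun hP => ha ((hchar y).mp hP)
      simp [this, ha]
  rw [Finset.sum_congr rfl (fun y _ => key y)]
  simp

section tad
variable {n i : ℕ}

lemma tadpole_adj (a b : Fin n) :
    (tadpole n i).Adj a b ↔ a.val ≠ b.val ∧ (b.val = a.val + 1 ∨ a.val = b.val + 1 ∨
      (a.val = 0 ∧ b.val = i - 1) ∨ (b.val = 0 ∧ a.val = i - 1)) := by
  show (SimpleGraph.fromRel _).Adj a b ↔ _
  rw [SimpleGraph.fromRel_adj]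
  constructor
  · rintro ⟨hne, h | h⟩
    · exact ⟨fun hv => hne (Fin.ext hv), by tauto⟩
    · exact ⟨fun hv => hne (Fin.ext hv), by tauto⟩
  · rintro ⟨hne, h⟩
    exact ⟨fun hv => hne (congrArg Fin.val hv), by tauto⟩

lemma adj_mid (hi : 3 ≤ i) (hin : i < n) (k : ℕ) (h1 : 1 ≤ k) (h2 : k ≤ n - 2) (h3 : k ≠ i - 1) (y : Fin n) :
    (tadpole n i).Adj ⟨k, by omega⟩ y ↔ (y = ⟨k-1, by omega⟩ ∨ y = ⟨k+1, by omega⟩) := by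
  have hy := y.isLt
  rw [tadpole_adj]
  simp only [Fin.ext_iff, Fin.val_mk, true_and, and_true, true_or, or_true, false_and, and_false, false_or, or_false]
  omega

lemma adj_zero (hi : 3 ≤ i) (hin : i < n) (y : Fin n) :
    (tadpole n i).Adj ⟨0, by clear hi; omega⟩ y ↔ (y = ⟨1, by omega⟩ ∨ y = ⟨i-1, by omega⟩) := by
  have hy := y.isLt
  rw [tadpole_adj]
  simp only [Fin.ext_iff, Fin.val_mk, true_and, and_true, true_or, or_true, false_and, and_false, false_or, or_false]
  omega

lemma adj_loop (hi : 3 ≤ i) (hin : i < n) (y : Fin n) :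
    (tadpole n i).Adj ⟨i-1, by omega⟩ y ↔
      (y = ⟨i-2, by omega⟩ ∨ y = ⟨i, by omega⟩ ∨ y = ⟨0, by clear hi; omega⟩) := by
  have hy := y.isLt
  rw [tadpole_adj]
  simp only [Fin.ext_iff, Fin.val_mk, true_and, and_true, true_or, or_true, false_and, and_false, false_or, or_false]
  omega

lemma adj_last (hi : 3 ≤ i) (hin : i < n) (y : Fin n) :
    (tadpole n i).Adj ⟨n-1, by clear hi; omega⟩ y ↔ y = ⟨n-2, by omega⟩ := by
  have hy := y.isLt
  rw [tadpole_adj]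
  simp only [Fin.ext_iff, Fin.val_mk, true_and, and_true, true_or, or_true, false_and, and_false, false_or, or_false]
  omega

lemma deg_eq_one_imp (hi : 3 ≤ i) (hin : i < n) (v : Fin n) (hv : deg (tadpole n i) v = 1) : v.val = n - 1 := by
  by_contra hne
  have hvlt : v.val < n - 1 := by have := v.isLt; omega
  have h2 : ∃ a b : Fin n, a ≠ b ∧ (tadpole n i).Adj v a ∧ (tadpole n i).Adj v b := by
    by_cases h0 : v.val = 0
    · refine ⟨⟨1, by omega⟩, ⟨i-1, by omega⟩, ?_, ?_, ?_⟩
      · simp only [ne_eq, Fin.ext_iff, Fin.val_mk]; omega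
      · rw [tadpole_adj]; simp only [Fin.val_mk, true_and, and_true, true_or, or_true, false_and, and_false, false_or, or_false]; omega
      · rw [tadpole_adj]; simp only [Fin.val_mk, true_and, and_true, true_or, or_true, false_and, and_false, false_or, or_false]; omega
    · refine ⟨⟨v.val - 1, by omega⟩, ⟨v.val + 1, by omega⟩, ?_, ?_, ?_⟩
      · simp only [ne_eq, Fin.ext_iff, Fin.val_mk]; omega
      · rw [tadpole_adj]; simp only [Fin.val_mk, true_and, and_true, true_or, or_true, false_and, and_false, false_or, or_false]; omega
      · rw [tadpole_adj]; simp only [Fin.val_mk, true_and, and_true, true_or, or_true, false_and, and_false, false_or, or_false]; omega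
  obtain ⟨a, b, hab, ha, hb⟩ := h2
  have hsub : ({a, b} : Finset (Fin n)) ⊆ univ.filter (fun y => (tadpole n i).Adj v y) := by
    intro y hy
    simp only [Finset.mem_insert, Finset.mem_singleton] at hy
    rcases hy with rfl | rfl <;> simp [ha, hb]
  have hc := Finset.card_le_card hsub
  rw [Finset.card_pair hab] at hc
  rw [deg] at hv
  omega

lemma deg_zero (hi : 3 ≤ i) (hin : i < n) : deg (tadpole n i) ⟨0, by clear hi; omega⟩ = 2 := by
  rw [deg, Finset.card_filter, sum_ite_pair _ _ ⟨1, by omega⟩ ⟨i-1, by omega⟩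
    (by simp only [ne_eq, Fin.ext_iff, Fin.val_mk]; omega) (adj_zero hi hin)]

lemma deg_mid (hi : 3 ≤ i) (hin : i < n) (k : ℕ) (h1 : 1 ≤ k) (h2 : k ≤ n - 2) (h3 : k ≠ i - 1) :
    deg (tadpole n i) ⟨k, by omega⟩ = 2 := by
  rw [deg, Finset.card_filter, sum_ite_pair _ _ ⟨k-1, by omega⟩ ⟨k+1, by omega⟩
    (by simp only [ne_eq, Fin.ext_iff, Fin.val_mk]; omega) (adj_mid hi hin k h1 h2 h3)]

lemma deg_loop (hi : 3 ≤ i) (hin : i < n) : deg (tadpole n i) ⟨i-1, by omega⟩ = 3 := by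
  rw [deg, Finset.card_filter, sum_ite_triple _ _ ⟨i-2, by omega⟩ ⟨i, by omega⟩ ⟨0, by omega⟩
    (by simp only [ne_eq, Fin.ext_iff, Fin.val_mk]; omega)
    (by simp only [ne_eq, Fin.ext_iff, Fin.val_mk]; omega)
    (by simp only [ne_eq, Fin.ext_iff, Fin.val_mk]; omega)
    (adj_loop hi hin)]

end tad


/-- A positive first `p`-Dirichlet eigenfunction of the tadpole graph `T_{n,i}` does not
achieve its maximum on the tail `t_i ∼ t_{i+1} ∼ ⋯ ∼ t_n` (vertex `k-1` represents `t_k`). -/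
theorem max_not_on_tail (n i : ℕ) (hi : 3 ≤ i) (hin : i < n)
    (p : ℝ) (hp : 1 < p) (f : Fin n → ℝ)
    (hbd : f ⟨n - 1, by omega⟩ = 0)
    (hpos : ∀ j : Fin n, j.val < n - 1 → 0 < f j)
    (heig : rayleigh (tadpole n i) p f = lambda1 (tadpole n i) p) :
    ∀ j : Fin n, i - 1 ≤ j.val →
      f j < Finset.univ.sup' (Finset.univ_nonempty_iff.mpr ⟨⟨0, by omega⟩⟩) f := by
  set lam := lambda1 (tadpole n i) p with hlamdef
  -- positivity of pnorm
  have hN0 : 0 < pnorm (tadpole n i) p f := by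
    rw [pnorm]
    apply Finset.sum_pos'
    · intro u _
      exact mul_nonneg (Real.rpow_nonneg (abs_nonneg _) _) (Nat.cast_nonneg _)
    · refine ⟨⟨0, by omega⟩, mem_univ _, ?_⟩
      apply mul_pos
      · exact Real.rpow_pos_of_pos (abs_pos.mpr (hpos ⟨0, by omega⟩ (by simp; omega)).ne') _
      · rw [deg_zero hi hin]; norm_num
  -- positivity of energy
  have hE0 : 0 < energy (tadpole n i) p f := by
    rw [energy]
    apply div_pos _ (by norm_num)
    apply Finset.sum_pos'
    · intro u _
      apply Finset.sum_nonneg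
      intro v _
      split
      · exact Real.rpow_nonneg (abs_nonneg _) _
      · exact le_refl 0
    · refine ⟨⟨n-2, by omega⟩, mem_univ _, ?_⟩
      apply Finset.sum_pos'
      · intro v _
        split
        · exact Real.rpow_nonneg (abs_nonneg _) _
        · exact le_refl 0
      · refine ⟨⟨n-1, by omega⟩, mem_univ _, ?_⟩
        have hadj : (tadpole n i).Adj ⟨n-2, by omega⟩ ⟨n-1, by omega⟩ := by
          rw [tadpole_adj]
          simp only [Fin.val_mk, true_and, and_true, true_or, or_true, false_and, and_false,
            false_or, or_false]
          omega
        rw [if_pos hadj, hbd]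
        have := hpos ⟨n-2, by omega⟩ (by simp; omega)
        exact Real.rpow_pos_of_pos (by rw [sub_zero]; exact abs_pos.mpr this.ne') _
  have hlampos : 0 < lam := by
    rw [← heig, rayleigh]
    exact div_pos hE0 hN0
  -- eigen equations
  have heq : ∀ x : Fin n, x.val < n - 1 →
      ∑ v, (if (tadpole n i).Adj x v then phi p (f x - f v) else 0)
        = lam * (phi p (f x) * (deg (tadpole n i) x : ℝ)) := by
    intro x hx
    apply eigen_eq_gen (tadpole n i) hp f hN0 heig x
    · intro v hv
      have hv' := deg_eq_one_imp hi hin v hv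
      constructor
      · intro h; rw [h] at hv'; omega
      · have : v = ⟨n-1, by omega⟩ := Fin.ext (by simp [hv'])
        rw [this]; exact hbd
    · by_cases h0 : x.val = 0
      · refine ⟨⟨1, by omega⟩, ?_, (hpos ⟨1, by omega⟩ (by simp; omega)).ne'⟩
        intro h; rw [Fin.ext_iff] at h; simp at h; omega
      · refine ⟨⟨0, by omega⟩, ?_, (hpos ⟨0, by omega⟩ (by simp; omega)).ne'⟩
        intro h; rw [Fin.ext_iff] at h; simp at h; omega
  -- values as a function of the index
  set fv : ℕ → ℝ := fun k => if h : k < n then f ⟨k, h⟩ else 0 with hfvdef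
  have hfveq' : ∀ (k : ℕ) (h : k < n), f ⟨k, h⟩ = fv k := by
    intro k h; simp [hfvdef, h]
  have hfvpos : ∀ k, k < n - 1 → 0 < fv k := by
    intro k h
    rw [← hfveq' k (by omega)]
    exact hpos _ (by simp [h])
  -- equation at vertex 0
  have eqA : phi p (fv 0 - fv 1) + phi p (fv 0 - fv (i-1)) = lam * (phi p (fv 0) * 2) := by
    have h := heq ⟨0, by omega⟩ (by simp; omega)
    rw [sum_ite_pair _ _ ⟨1, by omega⟩ ⟨i-1, by omega⟩
      (by simp only [ne_eq, Fin.ext_iff, Fin.val_mk]; omega) (adj_zero hi hin),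
      deg_zero hi hin] at h
    simp only [hfveq'] at h
    push_cast at h
    exact h
  -- equation at interior path vertices
  have eqB : ∀ k, 1 ≤ k → k ≤ n - 2 → k ≠ i - 1 →
      phi p (fv k - fv (k-1)) + phi p (fv k - fv (k+1)) = lam * (phi p (fv k) * 2) := by
    intro k h1 h2 h3
    have h := heq ⟨k, by omega⟩ (by simp; omega)
    rw [sum_ite_pair _ _ ⟨k-1, by omega⟩ ⟨k+1, by omega⟩
      (by simp only [ne_eq, Fin.ext_iff, Fin.val_mk]; omega) (adj_mid hi hin k h1 h2 h3),
      deg_mid hi hin k h1 h2 h3] at h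
    simp only [hfveq'] at h
    push_cast at h
    exact h
  -- equation at the junction vertex i-1
  have eqC : phi p (fv (i-1) - fv (i-2)) + phi p (fv (i-1) - fv i) + phi p (fv (i-1) - fv 0)
      = lam * (phi p (fv (i-1)) * 3) := by
    have h := heq ⟨i-1, by omega⟩ (by simp; omega)
    rw [sum_ite_triple _ _ ⟨i-2, by omega⟩ ⟨i, by omega⟩ ⟨0, by omega⟩
      (by simp only [ne_eq, Fin.ext_iff, Fin.val_mk]; omega)
      (by simp only [ne_eq, Fin.ext_iff, Fin.val_mk]; omega)
      (by simp only [ne_eq, Fin.ext_iff, Fin.val_mk]; omega)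
      (adj_loop hi hin), deg_loop hi hin] at h
    simp only [hfveq'] at h
    push_cast at h
    exact h
  -- telescoping along the head
  have tele : ∀ k, k ≤ i - 2 →
      phi p (fv k - fv (k+1)) + phi p (fv 0 - fv (i-1))
        = lam * 2 * ∑ j ∈ Finset.range (k+1), phi p (fv j) := by
    intro k
    induction k with
    | zero =>
      intro _
      rw [Finset.sum_range_one]
      linarith [eqA]
    | succ k ih =>
      intro hk
      have ihh := ih (by omega)
      have hB := eqB (k+1) (by omega) (by omega) (by omega)
      simp only [Nat.add_sub_cancel] at hB
      rw [Finset.sum_range_succ]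
      have hflip : phi p (fv (k+1) - fv k) = - phi p (fv k - fv (k+1)) := by
        rw [show fv (k+1) - fv k = -(fv k - fv (k+1)) by ring, phi_neg']
      linarith [ihh, hB, hflip]
  -- the key identity
  have star : phi p (fv (i-1) - fv i)
      = lam * 2 * ∑ j ∈ Finset.range (i-1), phi p (fv j) + lam * 3 * phi p (fv (i-1)) := by
    have t2 := tele (i-2) le_rfl
    rw [show i - 2 + 1 = i - 1 by omega] at t2
    have hf1 : phi p (fv (i-1) - fv (i-2)) = - phi p (fv (i-2) - fv (i-1)) := by
      rw [show fv (i-1) - fv (i-2) = -(fv (i-2) - fv (i-1)) by ring, phi_neg']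
    have hf2 : phi p (fv (i-1) - fv 0) = - phi p (fv 0 - fv (i-1)) := by
      rw [show fv (i-1) - fv 0 = -(fv 0 - fv (i-1)) by ring, phi_neg']
    linarith [t2, eqC, hf1, hf2]
  have hsumpos : 0 < ∑ j ∈ Finset.range (i-1), phi p (fv j) := by
    apply Finset.sum_pos
    · intro j hj
      rw [Finset.mem_range] at hj
      exact phi_pos (p := p) (hfvpos j (by omega))
    · exact ⟨0, Finset.mem_range.mpr (by omega)⟩
  have hstar_pos : 0 < phi p (fv (i-1) - fv i) := by
    rw [star]
    have h1 := mul_pos (mul_pos hlampos (by norm_num : (0:ℝ) < 2)) hsumpos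
    have h2 := mul_pos (mul_pos hlampos (by norm_num : (0:ℝ) < 3))
      (phi_pos (p := p) (hfvpos (i-1) (by omega)))
    linarith
  -- strictly decreasing along the tail
  have hdec : ∀ d, i - 1 + d ≤ n - 2 → 0 < phi p (fv (i-1+d) - fv (i-1+d+1)) := by
    intro d
    induction d with
    | zero =>
      intro _
      simp only [Nat.add_zero]
      rw [show i - 1 + 1 = i by omega]
      exact hstar_pos
    | succ d ih =>
      intro hk
      have ihh := ih (by omega)
      have hB := eqB (i-1+d+1) (by omega) (by omega) (by omega)
      rw [show i - 1 + d + 1 - 1 = i - 1 + d by omega] at hB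
      have hflip : phi p (fv (i-1+d+1) - fv (i-1+d)) = - phi p (fv (i-1+d) - fv (i-1+d+1)) := by
        rw [show fv (i-1+d+1) - fv (i-1+d) = -(fv (i-1+d) - fv (i-1+d+1)) by ring, phi_neg']
      have hphik : 0 < phi p (fv (i-1+d+1)) := phi_pos (p := p) (hfvpos _ (by omega))
      have hlp := mul_pos hlampos hphik
      show 0 < phi p (fv (i-1+(d+1)) - fv (i-1+(d+1)+1))
      rw [show i - 1 + (d+1) = i - 1 + d + 1 by omega]
      linarith [hB, ihh, hflip, hlp]
  have hdec' : ∀ d, i - 1 + d ≤ n - 2 → fv (i-1+d+1) < fv (i-1+d) := by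
    intro d hd
    have := phi_pos_iff.mp (hdec d hd)
    linarith
  have hchain : ∀ d, i - 1 + d + 1 ≤ n - 1 → fv (i-1+d+1) < fv (i-1) := by
    intro d
    induction d with
    | zero =>
      intro hd
      have := hdec' 0 (by omega)
      simpa using this
    | succ d ih =>
      intro hd
      have h1 := hdec' (d+1) (by omega)
      have h2 := ih (by omega)
      calc fv (i-1+(d+1)+1) < fv (i-1+(d+1)) := h1
        _ = fv (i-1+d+1) := by rw [show i-1+(d+1) = i-1+d+1 by omega]
        _ < fv (i-1) := h2
  -- the max
  set M : ℝ := Finset.univ.sup' (Finset.univ_nonempty_iff.mpr ⟨⟨0, by omega⟩⟩) f with hMdef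
  have hM : ∀ v : Fin n, f v ≤ M := fun v => Finset.le_sup' f (mem_univ v)
  have hfvM : ∀ k, (h : k < n) → fv k ≤ M := by
    intro k h
    rw [← hfveq' k h]
    exact hM _
  have hlti1 : fv (i-1) < M := by
    rcases lt_or_eq_of_le (hfvM (i-1) (by omega)) with h | h
    · exact h
    · exfalso
      have h1 : 0 ≤ phi p (fv (i-1) - fv (i-2)) := by
        apply phi_nonneg
        have := hfvM (i-2) (by omega)
        rw [h] at *
        linarith
      have h2 : 0 ≤ phi p (fv (i-1) - fv 0) := by
        apply phi_nonneg
        have := hfvM 0 (by omega)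
        rw [h] at *
        linarith
      have := mul_pos (mul_pos hlampos (by norm_num : (0:ℝ) < 2)) hsumpos
      linarith [eqC, star, h1, h2]
  intro j hj
  have hjlt := j.isLt
  have hjf : f j = fv j.val := by
    rw [← hfveq' j.val j.isLt]
  rw [hjf]
  by_cases hji : j.val = i - 1
  · rw [hji]; exact hlti1
  · have hji' : i ≤ j.val := by omega
    have hlt := hchain (j.val - i) (by omega)
    rw [show i - 1 + (j.val - i) + 1 = j.val by omega] at hlt
    calc fv j.val < fv (i-1) := hlt
      _ ≤ M := hfvM (i-1) (by omega)
end

section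
/- For every integer n ≥ 5 and every real p > 1, λ_{1,p}(T_{n,4}) > λ_{1,p}(T_{n,3}). -/
attribute [local instance] Classical.propDecidable

open Finset

namespace Tad

lemma ite4 {P Q R S : Prop} [Decidable P] [Decidable Q] [Decidable R] [Decidable S]
    [Decidable (P ∨ Q ∨ R ∨ S)] (t : ℝ) (hPQ : ¬(P ∧ Q)) (hPR : ¬(P ∧ R)) (hPS : ¬(P ∧ S))
    (hQR : ¬(Q ∧ R)) (hQS : ¬(Q ∧ S)) (hRS : ¬(R ∧ S)) :
    (if P ∨ Q ∨ R ∨ S then t else 0)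
      = (if P then t else 0) + (if Q then t else 0) + (if R then t else 0) + (if S then t else 0) := by
  by_cases hP : P <;> by_cases hQ : Q <;> by_cases hR : R <;> by_cases hS : S <;> simp_all

lemma tadpole_adj (n c i : ℕ) (hi : i = c + 1) (hc2 : 2 ≤ c) (a b : Fin n) :
    (tadpole n i).Adj a b ↔
      (b.val = a.val + 1 ∨ a.val = b.val + 1 ∨ (a.val = 0 ∧ b.val = c) ∨ (b.val = 0 ∧ a.val = c)) := by
  subst hi
  have ha := a.isLt; have hb := b.isLt
  simp only [tadpole, SimpleGraph.fromRel_adj, ne_eq, Fin.ext_iff, Nat.add_sub_cancel]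
  omega

lemma succ_sum (n : ℕ) (φ : ℝ → ℝ → ℝ) (v : ℕ → ℝ) :
    (∑ x : Fin n, ∑ y : Fin n, if y.val = x.val + 1 then φ (v x.val) (v y.val) else 0)
      = ∑ k ∈ range (n - 1), φ (v k) (v (k + 1)) := by
  have eA : ∀ x : Fin n, (∑ y : Fin n, if y.val = x.val + 1 then φ (v x.val) (v y.val) else 0)
      = (if x.val + 1 < n then φ (v x.val) (v (x.val + 1)) else 0) := by
    intro x
    by_cases h : x.val + 1 < n
    · rw [if_pos h, Finset.sum_congr rfl
        (fun y _ => if_congr (show (y.val = x.val + 1) ↔ (y = ⟨x.val + 1, h⟩) by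
          simp [Fin.ext_iff]) rfl rfl), Finset.sum_ite_eq' Finset.univ (⟨x.val + 1, h⟩ : Fin n)]
      simp
    · rw [if_neg h]
      apply Finset.sum_eq_zero
      intro y _
      rw [if_neg]
      have := y.isLt; omega
  rw [Finset.sum_congr rfl (fun x _ => eA x),
    Fin.sum_univ_eq_sum_range (fun k => if k + 1 < n then φ (v k) (v (k + 1)) else 0) n,
    ← Finset.sum_subset (Finset.range_subset_range.2 (show n - 1 ≤ n by omega))]
  · apply Finset.sum_congr rfl
    intro k hk
    rw [if_pos]
    simp only [Finset.mem_range] at hk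
    omega
  · intro k hk hk'
    simp only [Finset.mem_range] at hk hk'
    rw [if_neg]
    omega

lemma chord_sum (n c : ℕ) (hc : c < n) (hn : 0 < n) (φ : ℝ → ℝ → ℝ) (v : ℕ → ℝ) :
    (∑ x : Fin n, ∑ y : Fin n, if x.val = 0 ∧ y.val = c then φ (v x.val) (v y.val) else 0)
      = φ (v 0) (v c) := by
  have eC : ∀ x : Fin n, (∑ y : Fin n, if x.val = 0 ∧ y.val = c then φ (v x.val) (v y.val) else 0)
      = (if x.val = 0 then φ (v x.val) (v c) else 0) := by
    intro x
    by_cases hx : x.val = 0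
    · rw [if_pos hx, Finset.sum_congr rfl (fun y _ => if_congr
        (show (x.val = 0 ∧ y.val = c) ↔ (y = ⟨c, hc⟩) by simp [Fin.ext_iff, hx]) rfl rfl),
        Finset.sum_ite_eq' Finset.univ (⟨c, hc⟩ : Fin n)]
      simp
    · rw [if_neg hx]
      apply Finset.sum_eq_zero
      intro y _
      rw [if_neg]
      tauto
  rw [Finset.sum_congr rfl (fun x _ => eC x), Finset.sum_congr rfl
    (fun x _ => if_congr (show (x.val = 0) ↔ (x = ⟨0, hn⟩) by simp [Fin.ext_iff]) rfl rfl),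
    Finset.sum_ite_eq' Finset.univ (⟨0, hn⟩ : Fin n)]
  simp

lemma sum_adj (n c i : ℕ) (hi : i = c + 1) (hc2 : 2 ≤ c) (hcn : c + 2 ≤ n)
    (φ : ℝ → ℝ → ℝ) (hφ : ∀ a b, φ a b = φ b a) (v : ℕ → ℝ) :
    (∑ x : Fin n, ∑ y : Fin n, if (tadpole n i).Adj x y then φ (v x.val) (v y.val) else 0)
      = 2 * ((∑ k ∈ range (n - 1), φ (v k) (v (k + 1))) + φ (v 0) (v c)) := by
  have key : ∀ x y : Fin n, (if (tadpole n i).Adj x y then φ (v x.val) (v y.val) else 0)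
      = (if y.val = x.val + 1 then φ (v x.val) (v y.val) else 0)
      + (if x.val = y.val + 1 then φ (v x.val) (v y.val) else 0)
      + (if x.val = 0 ∧ y.val = c then φ (v x.val) (v y.val) else 0)
      + (if y.val = 0 ∧ x.val = c then φ (v x.val) (v y.val) else 0) := by
    intro x y
    rw [if_congr (tadpole_adj n c i hi hc2 x y) rfl rfl]
    have hx := x.isLt; have hy := y.isLt
    apply ite4 <;> omega
  rw [Finset.sum_congr rfl (fun x _ => Finset.sum_congr rfl (fun y _ => key x y))]
  simp only [Finset.sum_add_distrib]
  have hB : (∑ x : Fin n, ∑ y : Fin n, if x.val = y.val + 1 then φ (v x.val) (v y.val) else 0)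
      = ∑ k ∈ range (n - 1), φ (v k) (v (k + 1)) := by
    rw [Finset.sum_comm]
    rw [succ_sum n (fun a b => φ b a) v]
    exact Finset.sum_congr rfl (fun k _ => hφ _ _)
  have hD : (∑ x : Fin n, ∑ y : Fin n, if y.val = 0 ∧ x.val = c then φ (v x.val) (v y.val) else 0)
      = φ (v 0) (v c) := by
    rw [Finset.sum_comm]
    rw [chord_sum n c (by omega) (by omega) (fun a b => φ b a) v]
    exact hφ _ _
  rw [succ_sum n φ v, hB, chord_sum n c (by omega) (by omega) φ v, hD]
  ring

end Tad

namespace Tad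

noncomputable def EE (c n : ℕ) (p : ℝ) (v : ℕ → ℝ) : ℝ :=
  (∑ k ∈ range (n - 1), |v k - v (k + 1)| ^ p) + |v 0 - v c| ^ p

noncomputable def NN (c n : ℕ) (p : ℝ) (v : ℕ → ℝ) : ℝ :=
  (∑ k ∈ range (n - 1), (|v k| ^ p + |v (k + 1)| ^ p)) + (|v 0| ^ p + |v c| ^ p)

lemma EE_nonneg (c n : ℕ) (p : ℝ) (v : ℕ → ℝ) : 0 ≤ EE c n p v := by
  unfold EE
  have h1 : (0:ℝ) ≤ ∑ k ∈ range (n - 1), |v k - v (k + 1)| ^ p :=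
    Finset.sum_nonneg fun k _ => Real.rpow_nonneg (abs_nonneg _) p
  have h2 : (0:ℝ) ≤ |v 0 - v c| ^ p := Real.rpow_nonneg (abs_nonneg _) p
  linarith

lemma NN_nonneg (c n : ℕ) (p : ℝ) (v : ℕ → ℝ) : 0 ≤ NN c n p v := by
  unfold NN
  have h1 : (0:ℝ) ≤ ∑ k ∈ range (n - 1), (|v k| ^ p + |v (k + 1)| ^ p) :=
    Finset.sum_nonneg fun k _ =>
      add_nonneg (Real.rpow_nonneg (abs_nonneg _) p) (Real.rpow_nonneg (abs_nonneg _) p)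
  have h2 : (0:ℝ) ≤ |v 0| ^ p := Real.rpow_nonneg (abs_nonneg _) p
  have h3 : (0:ℝ) ≤ |v c| ^ p := Real.rpow_nonneg (abs_nonneg _) p
  linarith

lemma term_le_NN (c n : ℕ) (p : ℝ) (v : ℕ → ℝ) (hn : 2 ≤ n) (k : ℕ) (hk : k ≤ n - 1) :
    |v k| ^ p ≤ NN c n p v := by
  unfold NN
  have hchord : (0:ℝ) ≤ |v 0| ^ p + |v c| ^ p :=
    add_nonneg (Real.rpow_nonneg (abs_nonneg _) p) (Real.rpow_nonneg (abs_nonneg _) p)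
  have hnn : ∀ j ∈ range (n-1), (0:ℝ) ≤ |v j| ^ p + |v (j + 1)| ^ p := fun j _ =>
    add_nonneg (Real.rpow_nonneg (abs_nonneg _) p) (Real.rpow_nonneg (abs_nonneg _) p)
  rcases Nat.lt_or_ge k (n-1) with h | h
  · have := Finset.single_le_sum hnn (Finset.mem_range.2 h)
    have h2 : (0:ℝ) ≤ |v (k+1)| ^ p := Real.rpow_nonneg (abs_nonneg _) p
    linarith
  · have hk' : k = n - 1 := by omega
    have hm : n - 2 ∈ range (n-1) := Finset.mem_range.2 (by omega)
    have := Finset.single_le_sum hnn hm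
    have h2 : (0:ℝ) ≤ |v (n-2)| ^ p := Real.rpow_nonneg (abs_nonneg _) p
    have h3 : n - 2 + 1 = k := by omega
    rw [h3] at this
    linarith

lemma NN_zero (c n : ℕ) (p : ℝ) (hp : p ≠ 0) (hc : c ≤ n - 1) (v : ℕ → ℝ)
    (hv : ∀ k ≤ n - 1, v k = 0) : NN c n p v = 0 := by
  unfold NN
  have hz : ∀ j, j ≤ n - 1 → |v j| ^ p = 0 := by
    intro j hj
    rw [hv j hj, abs_zero, Real.zero_rpow hp]
  rw [Finset.sum_eq_zero, hz 0 (by omega), hz c hc]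
  · ring
  · intro k hk
    simp only [Finset.mem_range] at hk
    rw [hz k (by omega), hz (k+1) (by omega)]
    ring

lemma energy_eq (n c i : ℕ) (hi : i = c + 1) (hc2 : 2 ≤ c) (hcn : c + 2 ≤ n) (p : ℝ)
    (f : Fin n → ℝ) (v : ℕ → ℝ) (hv : ∀ x : Fin n, v x.val = f x) :
    energy (tadpole n i) p f = EE c n p v := by
  unfold energy EE
  simp only [← hv]
  rw [sum_adj n c i hi hc2 hcn (fun a b => |a - b| ^ p) (fun a b => by show |a-b|^p = |b-a|^p; rw [abs_sub_comm]) v]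
  ring

lemma pnorm_eq (n c i : ℕ) (hi : i = c + 1) (hc2 : 2 ≤ c) (hcn : c + 2 ≤ n) (p : ℝ)
    (f : Fin n → ℝ) (v : ℕ → ℝ) (hv : ∀ x : Fin n, v x.val = f x) :
    pnorm (tadpole n i) p f = NN c n p v := by
  have hdouble : pnorm (tadpole n i) p f
      = (∑ x : Fin n, ∑ y : Fin n, if (tadpole n i).Adj x y then |f x| ^ p else 0) := by
    unfold pnorm deg
    apply Finset.sum_congr rfl
    intro x _
    rw [Finset.card_filter]
    push_cast [apply_ite (fun (k : ℕ) => (k : ℝ))]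
    rw [Finset.mul_sum]
    apply Finset.sum_congr rfl
    intro y _
    by_cases h : (tadpole n i).Adj x y <;> simp [h]
  have hswap : (∑ x : Fin n, ∑ y : Fin n, if (tadpole n i).Adj x y then |f y| ^ p else 0)
      = (∑ x : Fin n, ∑ y : Fin n, if (tadpole n i).Adj x y then |f x| ^ p else 0) := by
    rw [Finset.sum_comm]
    apply Finset.sum_congr rfl; intro x _
    apply Finset.sum_congr rfl; intro y _
    exact if_congr (by rw [SimpleGraph.adj_comm]) rfl rfl
  have htwo : 2 * pnorm (tadpole n i) p f
      = (∑ x : Fin n, ∑ y : Fin n, if (tadpole n i).Adj x y then |f x| ^ p + |f y| ^ p else 0) := by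
    have : ∀ x y : Fin n, (if (tadpole n i).Adj x y then |f x| ^ p + |f y| ^ p else 0)
        = (if (tadpole n i).Adj x y then |f x| ^ p else 0)
          + (if (tadpole n i).Adj x y then |f y| ^ p else 0) := by
      intro x y
      by_cases h : (tadpole n i).Adj x y <;> simp [h]
    rw [Finset.sum_congr rfl (fun x _ => Finset.sum_congr rfl (fun y _ => this x y))]
    simp only [Finset.sum_add_distrib]
    rw [hswap, hdouble]
    ring
  have := htwo
  rw [show (∑ x : Fin n, ∑ y : Fin n, if (tadpole n i).Adj x y then |f x| ^ p + |f y| ^ p else 0)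
      = (∑ x : Fin n, ∑ y : Fin n, if (tadpole n i).Adj x y
          then (fun a b => |a| ^ p + |b| ^ p) (v x.val) (v y.val) else 0) by
        apply Finset.sum_congr rfl; intro x _; apply Finset.sum_congr rfl; intro y _
        simp only [hv]] at this
  rw [sum_adj n c i hi hc2 hcn (fun a b => |a| ^ p + |b| ^ p) (fun a b => by ring) v] at this
  unfold NN
  linarith

lemma deg_two_le (n c i : ℕ) (hi : i = c + 1) (hc2 : 2 ≤ c) (hcn : c + 2 ≤ n)
    (x : Fin n) (hx : x.val < n - 1) : 2 ≤ deg (tadpole n i) x := by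
  have hn : 0 < n := by omega
  by_cases hx0 : x.val = 0
  · have h1 : (⟨1, by omega⟩ : Fin n) ∈ Finset.univ.filter (fun y => (tadpole n i).Adj x y) := by
      simp only [Finset.mem_filter, Finset.mem_univ, true_and]
      rw [tadpole_adj n c i hi hc2]
      refine Or.inl ?_
      show (1:ℕ) = x.val + 1
      omega
    have h2 : (⟨c, by omega⟩ : Fin n) ∈ Finset.univ.filter (fun y => (tadpole n i).Adj x y) := by
      simp only [Finset.mem_filter, Finset.mem_univ, true_and]
      rw [tadpole_adj n c i hi hc2]
      exact Or.inr (Or.inr (Or.inl ⟨hx0, rfl⟩))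
    have hsub : ({⟨1, by omega⟩, ⟨c, by omega⟩} : Finset (Fin n))
        ⊆ Finset.univ.filter (fun y => (tadpole n i).Adj x y) := by
      intro y hy
      simp only [Finset.mem_insert, Finset.mem_singleton] at hy
      rcases hy with rfl | rfl <;> assumption
    have hcard : ({⟨1, by omega⟩, ⟨c, by omega⟩} : Finset (Fin n)).card = 2 := by
      rw [Finset.card_pair]
      simp only [ne_eq, Fin.ext_iff]
      omega
    calc 2 = ({⟨1, by omega⟩, ⟨c, by omega⟩} : Finset (Fin n)).card := hcard.symm
    _ ≤ _ := Finset.card_le_card hsub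
  · have h1 : (⟨x.val - 1, by omega⟩ : Fin n) ∈ Finset.univ.filter (fun y => (tadpole n i).Adj x y) := by
      simp only [Finset.mem_filter, Finset.mem_univ, true_and]
      rw [tadpole_adj n c i hi hc2]
      refine Or.inr (Or.inl ?_)
      show x.val = (x.val - 1) + 1
      omega
    have h2 : (⟨x.val + 1, by omega⟩ : Fin n) ∈ Finset.univ.filter (fun y => (tadpole n i).Adj x y) := by
      simp only [Finset.mem_filter, Finset.mem_univ, true_and]
      rw [tadpole_adj n c i hi hc2]
      exact Or.inl rfl
    have hsub : ({⟨x.val - 1, by omega⟩, ⟨x.val + 1, by omega⟩} : Finset (Fin n))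
        ⊆ Finset.univ.filter (fun y => (tadpole n i).Adj x y) := by
      intro y hy
      simp only [Finset.mem_insert, Finset.mem_singleton] at hy
      rcases hy with rfl | rfl <;> assumption
    have hcard : ({⟨x.val - 1, by omega⟩, ⟨x.val + 1, by omega⟩} : Finset (Fin n)).card = 2 := by
      rw [Finset.card_pair]
      simp only [ne_eq, Fin.ext_iff]
      omega
    calc 2 = ({⟨x.val - 1, by omega⟩, ⟨x.val + 1, by omega⟩} : Finset (Fin n)).card := hcard.symm
    _ ≤ _ := Finset.card_le_card hsub

lemma deg_one_imp (n c i : ℕ) (hi : i = c + 1) (hc2 : 2 ≤ c) (hcn : c + 2 ≤ n)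
    (x : Fin n) (hx : deg (tadpole n i) x = 1) : x.val = n - 1 := by
  by_contra h
  have : x.val < n - 1 := by have := x.isLt; omega
  have := deg_two_le n c i hi hc2 hcn x this
  omega

lemma deg_last (n c i : ℕ) (hi : i = c + 1) (hc2 : 2 ≤ c) (hcn : c + 2 ≤ n) :
    deg (tadpole n i) (⟨n - 1, by omega⟩ : Fin n) = 1 := by
  unfold deg
  have : Finset.univ.filter (fun y => (tadpole n i).Adj (⟨n - 1, by omega⟩ : Fin n) y)
      = {(⟨n - 2, by omega⟩ : Fin n)} := by
    ext y
    simp only [Finset.mem_filter, Finset.mem_univ, true_and, Finset.mem_singleton,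
      Fin.ext_iff]
    rw [tadpole_adj n c i hi hc2]
    have := y.isLt
    simp only [Fin.ext_iff, Fin.val_mk]
    omega
  rw [this, Finset.card_singleton]

end Tad

namespace Tad

variable {V : Type*} [Fintype V]

lemma energy_nonneg (G : SimpleGraph V) (p : ℝ) (f : V → ℝ) : 0 ≤ energy G p f := by
  unfold energy
  apply div_nonneg _ (by norm_num)
  apply Finset.sum_nonneg; intro x _
  apply Finset.sum_nonneg; intro y _
  by_cases h : G.Adj x y <;> simp [h, Real.rpow_nonneg (abs_nonneg _)]

lemma pnorm_nonneg (G : SimpleGraph V) (p : ℝ) (f : V → ℝ) : 0 ≤ pnorm G p f := by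
  unfold pnorm
  apply Finset.sum_nonneg; intro x _
  exact mul_nonneg (Real.rpow_nonneg (abs_nonneg _) p) (Nat.cast_nonneg _)

lemma rayleigh_nonneg (G : SimpleGraph V) (p : ℝ) (f : V → ℝ) : 0 ≤ rayleigh G p f :=
  div_nonneg (energy_nonneg G p f) (pnorm_nonneg G p f)

lemma lambda1_bdd (G : SimpleGraph V) (p : ℝ) :
    BddBelow { r : ℝ | ∃ f : V → ℝ, (∀ x : V, deg G x = 1 → f x = 0) ∧ f ≠ 0 ∧ r = rayleigh G p f } := by
  refine ⟨0, ?_⟩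
  rintro r ⟨f, -, -, rfl⟩
  exact rayleigh_nonneg G p f

lemma lambda1_le (G : SimpleGraph V) (p : ℝ) (f : V → ℝ)
    (hadm : ∀ x : V, deg G x = 1 → f x = 0) (hne : f ≠ 0) :
    lambda1 G p ≤ rayleigh G p f :=
  csInf_le (lambda1_bdd G p) ⟨f, hadm, hne, rfl⟩

lemma pnorm_zero (G : SimpleGraph V) (p : ℝ) (hp : p ≠ 0) : pnorm G p (0 : V → ℝ) = 0 := by
  unfold pnorm
  simp [Real.zero_rpow hp]

lemma energy_smul (G : SimpleGraph V) (p : ℝ) (hp : 0 ≤ p) (s : ℝ) (hs : 0 ≤ s) (f : V → ℝ) :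
    energy G p (fun x => s * f x) = s ^ p * energy G p f := by
  unfold energy
  rw [mul_div_assoc']
  congr 1
  rw [Finset.mul_sum]
  apply Finset.sum_congr rfl; intro x _
  rw [Finset.mul_sum]
  apply Finset.sum_congr rfl; intro y _
  by_cases h : G.Adj x y
  · rw [if_pos h, if_pos h, show s * f x - s * f y = s * (f x - f y) by ring, abs_mul,
      abs_of_nonneg hs, Real.mul_rpow hs (abs_nonneg _)]
  · simp [h]

lemma pnorm_smul (G : SimpleGraph V) (p : ℝ) (hp : 0 ≤ p) (s : ℝ) (hs : 0 ≤ s) (f : V → ℝ) :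
    pnorm G p (fun x => s * f x) = s ^ p * pnorm G p f := by
  unfold pnorm
  rw [Finset.mul_sum]
  apply Finset.sum_congr rfl; intro x _
  rw [abs_mul, abs_of_nonneg hs, Real.mul_rpow hs (abs_nonneg _)]
  ring

lemma pnorm_continuous (G : SimpleGraph V) (p : ℝ) (hp : 0 ≤ p) :
    Continuous fun f : V → ℝ => pnorm G p f := by
  unfold pnorm
  apply continuous_finset_sum; intro x _
  exact (Continuous.rpow_const (continuous_abs.comp (continuous_apply x))
    (fun _ => Or.inr hp)).mul continuous_const

lemma energy_continuous (G : SimpleGraph V) (p : ℝ) (hp : 0 ≤ p) :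
    Continuous fun f : V → ℝ => energy G p f := by
  unfold energy
  apply Continuous.div_const
  apply continuous_finset_sum; intro x _
  apply continuous_finset_sum; intro y _
  by_cases h : G.Adj x y
  · simp only [if_pos h]
    exact Continuous.rpow_const
      (continuous_abs.comp ((continuous_apply x).sub (continuous_apply y))) (fun _ => Or.inr hp)
  · simp only [if_neg h]
    exact continuous_const

lemma pnorm_pos (n c i : ℕ) (hi : i = c + 1) (hc2 : 2 ≤ c) (hcn : c + 2 ≤ n) (p : ℝ)
    (hp : 0 < p) (f : Fin n → ℝ) (hf : f ≠ 0) : 0 < pnorm (tadpole n i) p f := by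
  set v : ℕ → ℝ := fun k => if h : k < n then f ⟨k, h⟩ else 0 with hvdef
  have hv : ∀ x : Fin n, v x.val = f x := by
    intro x
    simp only [hvdef, x.isLt, dif_pos, Fin.eta]
  have hpe : pnorm (tadpole n i) p f = NN c n p v := pnorm_eq n c i hi hc2 hcn p f v hv
  obtain ⟨x, hx⟩ : ∃ x : Fin n, f x ≠ 0 := by
    by_contra h
    push_neg at h
    exact hf (funext h)
  have h1 : |v x.val| ^ p ≤ NN c n p v :=
    term_le_NN c n p v (by omega) x.val (by have := x.isLt; omega)
  have h2 : 0 < |v x.val| ^ p := by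
    apply Real.rpow_pos_of_pos
    rw [hv x]
    exact abs_pos.2 hx
  rw [hpe]
  linarith

lemma exists_minimizer (n c i : ℕ) (hi : i = c + 1) (hc2 : 2 ≤ c) (hcn : c + 2 ≤ n)
    (hn : 5 ≤ n) (p : ℝ) (hp : 1 < p) :
    ∃ f : Fin n → ℝ, (∀ x : Fin n, deg (tadpole n i) x = 1 → f x = 0) ∧
      pnorm (tadpole n i) p f = 1 ∧ rayleigh (tadpole n i) p f = lambda1 (tadpole n i) p := by
  have hp0 : 0 < p := by linarith
  have hpne : p ≠ 0 := ne_of_gt hp0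
  set G := tadpole n i with hG
  set S := { r : ℝ | ∃ f : Fin n → ℝ, (∀ x : Fin n, deg G x = 1 → f x = 0) ∧ f ≠ 0 ∧ r = rayleigh G p f } with hS
  set K : Set (Fin n → ℝ) := { f | (∀ x : Fin n, deg G x = 1 → f x = 0) ∧ pnorm G p f = 1 } with hK
  -- scaling
  have scale : ∀ f : Fin n → ℝ, f ≠ 0 → ∃ g : Fin n → ℝ,
      (∀ x, f x = 0 → g x = 0) ∧ pnorm G p g = 1 ∧ rayleigh G p g = rayleigh G p f := by
    intro f hf
    have hP : 0 < pnorm G p f := pnorm_pos n c i hi hc2 hcn p hp0 f hf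
    set s : ℝ := (pnorm G p f) ^ (-(1/p)) with hsdef
    have hs0 : 0 < s := Real.rpow_pos_of_pos hP _
    have hsp : s ^ p = (pnorm G p f)⁻¹ := by
      rw [hsdef, ← Real.rpow_mul hP.le, show -(1/p)*p = (-1 : ℝ) by field_simp]
      exact Real.rpow_neg_one _
    refine ⟨fun x => s * f x, ?_, ?_, ?_⟩
    · intro x hx; show s * f x = 0; rw [hx, mul_zero]
    · rw [pnorm_smul G p hp0.le s hs0.le f, hsp, inv_mul_cancel₀ (ne_of_gt hP)]
    · unfold rayleigh
      rw [pnorm_smul G p hp0.le s hs0.le f, energy_smul G p hp0.le s hs0.le f,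
        mul_div_mul_left _ _ (ne_of_gt (Real.rpow_pos_of_pos hs0 p))]
  have hSK : S = rayleigh G p '' K := by
    ext r
    constructor
    · rintro ⟨f, hadm, hne, rfl⟩
      obtain ⟨g, hg0, hgp, hgr⟩ := scale f hne
      exact ⟨g, ⟨fun x hx => hg0 x (hadm x hx), hgp⟩, hgr⟩
    · rintro ⟨f, ⟨hadm, hpn⟩, rfl⟩
      refine ⟨f, hadm, ?_, rfl⟩
      intro h
      rw [h, pnorm_zero G p hpne] at hpn
      norm_num at hpn
  have hKb : ∀ f ∈ K, ∀ x : Fin n, |f x| ≤ 1 := by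
    intro f hf x
    set v : ℕ → ℝ := fun k => if h : k < n then f ⟨k, h⟩ else 0 with hvdef
    have hv : ∀ x : Fin n, v x.val = f x := by
      intro x; simp only [hvdef, x.isLt, dif_pos, Fin.eta]
    have hpe : pnorm G p f = NN c n p v := pnorm_eq n c i hi hc2 hcn p f v hv
    have h1 : |v x.val| ^ p ≤ 1 := by
      rw [← hf.2, hpe]
      exact term_le_NN c n p v (by omega) x.val (by have := x.isLt; omega)
    by_contra hgt
    push_neg at hgt
    have : (1:ℝ) < |f x| ^ p := by
      calc (1:ℝ) = 1 ^ p := (Real.one_rpow p).symm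
      _ < |f x| ^ p := Real.rpow_lt_rpow (by norm_num) hgt hp0
    rw [hv x] at h1
    linarith
  have hKclosed : IsClosed K := by
    have : K = (⋂ x : Fin n, { f : Fin n → ℝ | deg G x = 1 → f x = 0 })
        ∩ { f : Fin n → ℝ | pnorm G p f = 1 } := by
      ext f
      simp only [hK, Set.mem_setOf_eq, Set.mem_inter_iff, Set.mem_iInter]
    rw [this]
    apply IsClosed.inter
    · apply isClosed_iInter
      intro x
      by_cases hx : deg G x = 1
      · have : { f : Fin n → ℝ | deg G x = 1 → f x = 0 } = { f : Fin n → ℝ | f x = 0 } := by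
          ext f; simp [hx]
        rw [this]
        exact isClosed_eq (continuous_apply x) continuous_const
      · have : { f : Fin n → ℝ | deg G x = 1 → f x = 0 } = Set.univ := by
          ext f; simp [hx]
        rw [this]
        exact isClosed_univ
    · exact isClosed_eq (pnorm_continuous G p hp0.le) continuous_const
  have hKcompact : IsCompact K := by
    apply IsCompact.of_isClosed_subset (isCompact_closedBall (0 : Fin n → ℝ) 1) hKclosed
    intro f hf
    rw [Metric.mem_closedBall]
    refine (dist_pi_le_iff (by norm_num)).2 ?_
    intro x
    simpa [Real.dist_eq] using hKb f hf x
  have hKne : K.Nonempty := by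
    set f1 : Fin n → ℝ := fun x => if x.val = 0 then 1 else 0 with hf1
    have hne : f1 ≠ 0 := by
      intro h
      have := congrFun h (⟨0, by omega⟩ : Fin n)
      simp [hf1] at this
    obtain ⟨g, hg0, hgp, -⟩ := scale f1 hne
    refine ⟨g, ?_, hgp⟩
    intro x hx
    apply hg0
    have := deg_one_imp n c i hi hc2 hcn x hx
    simp only [hf1]
    rw [if_neg]
    omega
  have hcont : ContinuousOn (rayleigh G p) K := by
    apply ContinuousOn.div (energy_continuous G p hp0.le).continuousOn
      (pnorm_continuous G p hp0.le).continuousOn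
    intro f hf
    rw [hf.2]
    norm_num
  have hScompact : IsCompact S := by
    rw [hSK]
    exact hKcompact.image_of_continuousOn hcont
  have hSne : S.Nonempty := by
    rw [hSK]
    exact hKne.image _
  have hmem : sInf S ∈ S := hScompact.sInf_mem hSne
  rw [hSK] at hmem
  obtain ⟨f, hfK, hfr⟩ := hmem
  exact ⟨f, hfK.1, hfK.2, by rw [hfr, ← hSK]; rfl⟩

end Tad

namespace Tad

lemma convex_abs_rpow {p : ℝ} (hp : 1 ≤ p) : ConvexOn ℝ Set.univ fun x : ℝ => |x| ^ p := by
  have himg : (fun x : ℝ => |x|) '' Set.univ = Set.Ici 0 := by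
    ext y
    constructor
    · rintro ⟨x, -, rfl⟩; exact abs_nonneg x
    · intro hy; exact ⟨y, Set.mem_univ y, abs_of_nonneg hy⟩
  have h1 : ConvexOn ℝ Set.univ (fun x : ℝ => |x|) := by
    exact convexOn_univ_norm (E := ℝ)
  have h2 : ConvexOn ℝ ((fun x : ℝ => |x|) '' Set.univ) (fun y : ℝ => y ^ p) := by
    rw [himg]; exact convexOn_rpow hp
  have h3 : MonotoneOn (fun y : ℝ => y ^ p) ((fun x : ℝ => |x|) '' Set.univ) := by
    rw [himg]
    intro a ha b hb hab
    exact Real.rpow_le_rpow ha hab (by linarith)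
  exact h2.comp h1 h3

lemma two_point {p : ℝ} (hp : 1 ≤ p) (s t x : ℝ) (h1 : t ≤ x) (h2 : x ≤ s) :
    |x| ^ p + |s + t - x| ^ p ≤ |s| ^ p + |t| ^ p := by
  have hconv := convex_abs_rpow hp
  rcases eq_or_lt_of_le (h1.trans h2) with h | h
  · have hx : x = s := le_antisymm h2 (h ▸ h1)
    have ht : t = s := h
    rw [hx, ht]
    rw [show s + s - s = s by ring]
  · set θ : ℝ := (s - x) / (s - t) with hθdef
    have hst : 0 < s - t := by linarith
    have hθ0 : 0 ≤ θ := div_nonneg (by linarith) hst.le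
    have hθ1 : θ ≤ 1 := (div_le_one hst).2 (by linarith)
    have hx : θ • t + (1 - θ) • s = x := by
      simp only [smul_eq_mul, hθdef]
      field_simp
      ring
    have hy : θ • s + (1 - θ) • t = s + t - x := by
      simp only [smul_eq_mul, hθdef]
      field_simp
      ring
    have A := hconv.2 (Set.mem_univ t) (Set.mem_univ s) (show (0:ℝ) ≤ θ from hθ0)
      (show (0:ℝ) ≤ 1 - θ by linarith) (show θ + (1 - θ) = 1 by ring)
    have B := hconv.2 (Set.mem_univ s) (Set.mem_univ t) (show (0:ℝ) ≤ θ from hθ0)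
      (show (0:ℝ) ≤ 1 - θ by linarith) (show θ + (1 - θ) = 1 by ring)
    rw [hx] at A
    rw [hy] at B
    simp only [smul_eq_mul] at A B
    nlinarith [A, B]

lemma fourpoint {p : ℝ} (hp : 1 ≤ p) (a a' b b' : ℝ) :
    |max a a' - max b b'| ^ p + |min a a' - min b b'| ^ p ≤ |a - b| ^ p + |a' - b'| ^ p := by
  rcases le_total a' a with haa | haa
  · rcases le_total b' b with hbb | hbb
    · rw [max_eq_left haa, max_eq_left hbb, min_eq_right haa, min_eq_right hbb]
    · rw [max_eq_left haa, max_eq_right hbb, min_eq_right haa, min_eq_left hbb]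
      have h := two_point hp (a - b) (a' - b') (a - b') (by linarith) (by linarith)
      rw [show a - b + (a' - b') - (a - b') = a' - b by ring] at h
      linarith
  · rcases le_total b b' with hbb | hbb
    · rw [max_eq_right haa, max_eq_right hbb, min_eq_left haa, min_eq_left hbb]
      linarith
    · rw [max_eq_right haa, max_eq_left hbb, min_eq_left haa, min_eq_right hbb]
      have h := two_point hp (a' - b') (a - b) (a' - b) (by linarith) (by linarith)
      rw [show a' - b' + (a - b) - (a' - b) = a - b' by ring] at h
      linarith

lemma EE_maxmin (c n : ℕ) {p : ℝ} (hp : 1 ≤ p) (v w : ℕ → ℝ) :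
    EE c n p (fun k => max (v k) (w k)) + EE c n p (fun k => min (v k) (w k))
      ≤ EE c n p v + EE c n p w := by
  unfold EE
  have h1 : (∑ k ∈ range (n-1), |max (v k) (w k) - max (v (k+1)) (w (k+1))| ^ p)
      + (∑ k ∈ range (n-1), |min (v k) (w k) - min (v (k+1)) (w (k+1))| ^ p)
      ≤ (∑ k ∈ range (n-1), |v k - v (k+1)| ^ p) + (∑ k ∈ range (n-1), |w k - w (k+1)| ^ p) := by
    rw [← Finset.sum_add_distrib, ← Finset.sum_add_distrib]
    exact Finset.sum_le_sum fun k _ => fourpoint hp (v k) (w k) (v (k+1)) (w (k+1))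
  have h2 := fourpoint hp (v 0) (w 0) (v c) (w c)
  linarith

lemma maxmin_abs_rpow (p : ℝ) (a b : ℝ) :
    |max a b| ^ p + |min a b| ^ p = |a| ^ p + |b| ^ p := by
  rcases le_total a b with h | h
  · rw [max_eq_right h, min_eq_left h]; ring
  · rw [max_eq_left h, min_eq_right h]

lemma NN_maxmin (c n : ℕ) (p : ℝ) (v w : ℕ → ℝ) :
    NN c n p (fun k => max (v k) (w k)) + NN c n p (fun k => min (v k) (w k))
      = NN c n p v + NN c n p w := by
  unfold NN
  have h1 : (∑ k ∈ range (n-1), (|max (v k) (w k)| ^ p + |max (v (k+1)) (w (k+1))| ^ p))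
      + (∑ k ∈ range (n-1), (|min (v k) (w k)| ^ p + |min (v (k+1)) (w (k+1))| ^ p))
      = (∑ k ∈ range (n-1), (|v k| ^ p + |v (k+1)| ^ p))
        + (∑ k ∈ range (n-1), (|w k| ^ p + |w (k+1)| ^ p)) := by
    rw [← Finset.sum_add_distrib, ← Finset.sum_add_distrib]
    apply Finset.sum_congr rfl
    intro k _
    have e1 := maxmin_abs_rpow p (v k) (w k)
    have e2 := maxmin_abs_rpow p (v (k+1)) (w (k+1))
    linarith
  have e0 := maxmin_abs_rpow p (v 0) (w 0)
  have ec := maxmin_abs_rpow p (v c) (w c)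
  linarith

lemma NN_mono (c n : ℕ) (p : ℝ) (hc : c ≤ n - 1) (v w : ℕ → ℝ)
    (h : ∀ j, j ≤ n - 1 → |v j| ^ p ≤ |w j| ^ p) : NN c n p v ≤ NN c n p w := by
  unfold NN
  have h1 : (∑ k ∈ range (n-1), (|v k| ^ p + |v (k+1)| ^ p))
      ≤ (∑ k ∈ range (n-1), (|w k| ^ p + |w (k+1)| ^ p)) := by
    apply Finset.sum_le_sum
    intro k hk
    simp only [Finset.mem_range] at hk
    exact add_le_add (h k (by omega)) (h (k+1) (by omega))
  have h2 := h 0 (by omega)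
  have h3 := h c hc
  linarith

end Tad

namespace Tad

lemma EE_abs_le (c n : ℕ) {p : ℝ} (hp : 0 ≤ p) (v : ℕ → ℝ) :
    EE c n p (fun k => |v k|) ≤ EE c n p v := by
  unfold EE
  apply add_le_add
  · apply Finset.sum_le_sum
    intro k _
    exact Real.rpow_le_rpow (abs_nonneg _) (abs_abs_sub_abs_le_abs_sub _ _) hp
  · exact Real.rpow_le_rpow (abs_nonneg _) (abs_abs_sub_abs_le_abs_sub _ _) hp

lemma NN_abs (c n : ℕ) (p : ℝ) (v : ℕ → ℝ) :
    NN c n p (fun k => |v k|) = NN c n p v := by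
  unfold NN
  simp [abs_abs]

def sw : ℕ → ℕ := fun k => if k = 0 then 2 else if k = 2 then 0 else k

lemma sw_large (k : ℕ) (h : 3 ≤ k) : sw k = k := by
  unfold sw
  rw [if_neg (by omega), if_neg (by omega)]

lemma sum_peel4 (m : ℕ) (F : ℕ → ℝ) :
    ∑ k ∈ range (m + 4), F k = (∑ k ∈ range m, F (k + 4)) + (F 0 + F 1 + F 2 + F 3) := by
  rw [Finset.sum_range_succ' F (m + 3)]
  rw [Finset.sum_range_succ' (fun i => F (i + 1)) (m + 2)]
  rw [Finset.sum_range_succ' (fun i => F (i + 1 + 1)) (m + 1)]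
  rw [Finset.sum_range_succ' (fun i => F (i + 1 + 1 + 1)) m]
  rw [Finset.sum_congr rfl (fun k _ => show F (k + 1 + 1 + 1 + 1) = F (k + 4) by norm_num)]
  norm_num
  ring

lemma EE_swap (m : ℕ) (p : ℝ) (v : ℕ → ℝ) :
    EE 3 (m + 5) p (fun k => v (sw k)) = EE 3 (m + 5) p v := by
  unfold EE
  have hm : m + 5 - 1 = m + 4 := by omega
  rw [hm]
  rw [sum_peel4 m (fun k => |v (sw k) - v (sw (k + 1))| ^ p)]
  rw [sum_peel4 m (fun k => |v k - v (k + 1)| ^ p)]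
  have htail : ∀ k ∈ range m, |v (sw (k + 4)) - v (sw (k + 4 + 1))| ^ p
      = |v (k + 4) - v (k + 4 + 1)| ^ p := by
    intro k _
    rw [sw_large (k + 4) (by omega), sw_large (k + 4 + 1) (by omega)]
  rw [Finset.sum_congr rfl htail]
  have h0 : sw 0 = 2 := rfl
  have h1 : sw 1 = 1 := rfl
  have h2 : sw 2 = 0 := rfl
  have h3 : sw 3 = 3 := rfl
  have h4 : sw 4 = 4 := rfl
  simp only [h0, h1, h2, h3, h4]
  rw [abs_sub_comm (v 2) (v 1), abs_sub_comm (v 1) (v 0)]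
  ring

lemma NN_swap (m : ℕ) (p : ℝ) (v : ℕ → ℝ) :
    NN 3 (m + 5) p (fun k => v (sw k)) = NN 3 (m + 5) p v := by
  unfold NN
  have hm : m + 5 - 1 = m + 4 := by omega
  rw [hm]
  rw [sum_peel4 m (fun k => |v (sw k)| ^ p + |v (sw (k + 1))| ^ p)]
  rw [sum_peel4 m (fun k => |v k| ^ p + |v (k + 1)| ^ p)]
  have htail : ∀ k ∈ range m, |v (sw (k + 4))| ^ p + |v (sw (k + 4 + 1))| ^ p
      = |v (k + 4)| ^ p + |v (k + 4 + 1)| ^ p := by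
    intro k _
    rw [sw_large (k + 4) (by omega), sw_large (k + 4 + 1) (by omega)]
  rw [Finset.sum_congr rfl htail]
  have h0 : sw 0 = 2 := rfl
  have h1 : sw 1 = 1 := rfl
  have h2 : sw 2 = 0 := rfl
  have h3 : sw 3 = 3 := rfl
  have h4 : sw 4 = 4 := rfl
  simp only [h0, h1, h2, h3, h4]
  ring

def DD (w : ℕ → ℝ) (n : ℕ) : ℕ → ℝ := fun j =>
  Nat.rec (w (n - 1)) (fun j ih => max (w (n - 2 - j)) ih) j

lemma DD_zero (w : ℕ → ℝ) (n : ℕ) : DD w n 0 = w (n - 1) := rfl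

lemma DD_succ (w : ℕ → ℝ) (n : ℕ) (j : ℕ) : DD w n (j + 1) = max (w (n - 2 - j)) (DD w n j) := rfl

lemma DD_mono (w : ℕ → ℝ) (n : ℕ) : Monotone (DD w n) :=
  monotone_nat_of_le_succ fun j => by rw [DD_succ]; exact le_max_right _ _

lemma DD_nonneg (w : ℕ → ℝ) (n : ℕ) (hw : ∀ k, 0 ≤ w k) : ∀ j, 0 ≤ DD w n j := by
  intro j
  induction j with
  | zero => exact hw _
  | succ j ih => rw [DD_succ]; exact le_max_of_le_right ih

lemma w_le_DD (w : ℕ → ℝ) (n : ℕ) : ∀ j, j ≤ n - 2 → w (n - 1 - j) ≤ DD w n j := by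
  intro j
  induction j with
  | zero => intro _; rw [DD_zero, Nat.sub_zero]
  | succ j ih =>
    intro hj
    rw [DD_succ, show n - 1 - (j + 1) = n - 2 - j by omega]
    exact le_max_left _ _

noncomputable def MM (w : ℕ → ℝ) (n : ℕ) : ℕ → ℝ := fun k =>
  if k = 0 then DD w n (n - 3) else DD w n (n - 1 - k)

lemma MM_zero (w : ℕ → ℝ) (n : ℕ) (hn : 5 ≤ n) : MM w n 0 = MM w n 2 := by
  unfold MM
  rw [if_pos rfl, if_neg (by omega), show n - 1 - 2 = n - 3 by omega]

lemma MM_last (w : ℕ → ℝ) (n : ℕ) (hn : 5 ≤ n) : MM w n (n - 1) = w (n - 1) := by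
  unfold MM
  rw [if_neg (by omega), show n - 1 - (n - 1) = 0 by omega, DD_zero]

lemma MM_rec (w : ℕ → ℝ) (n : ℕ) (hn : 5 ≤ n) (k : ℕ) (h1 : 1 ≤ k) (h2 : k ≤ n - 2) :
    MM w n k = max (w k) (MM w n (k + 1)) := by
  unfold MM
  rw [if_neg (by omega), if_neg (by omega), show n - 1 - k = (n - 2 - k) + 1 by omega, DD_succ,
    show n - 2 - (n - 2 - k) = k by omega, show n - 2 - k = n - 1 - (k + 1) by omega]

lemma MM_ge (w : ℕ → ℝ) (n : ℕ) (hn : 5 ≤ n) (k : ℕ) (h1 : 1 ≤ k) (h2 : k ≤ n - 1) :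
    w k ≤ MM w n k := by
  unfold MM
  rw [if_neg (by omega)]
  have := w_le_DD w n (n - 1 - k) (by omega)
  rw [show n - 1 - (n - 1 - k) = k by omega] at this
  exact this

lemma MM_le_one (w : ℕ → ℝ) (n : ℕ) (hn : 5 ≤ n) (k : ℕ) (hk : k ≤ n - 1) :
    MM w n k ≤ MM w n 1 := by
  have h1 : MM w n 1 = DD w n (n - 2) := by
    unfold MM
    rw [if_neg one_ne_zero, show n - 1 - 1 = n - 2 by omega]
  by_cases h0 : k = 0
  · have h2 : MM w n k = DD w n (n - 3) := by unfold MM; rw [if_pos h0]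
    rw [h2, h1]
    exact DD_mono w n (by omega)
  · have h3 : MM w n k = DD w n (n - 1 - k) := by unfold MM; rw [if_neg h0]
    rw [h3, h1]
    exact DD_mono w n (by omega)

lemma MM_nonneg (w : ℕ → ℝ) (n : ℕ) (hw : ∀ k, 0 ≤ w k) : ∀ k, 0 ≤ MM w n k := by
  intro k
  unfold MM
  by_cases h0 : k = 0
  · rw [if_pos h0]; exact DD_nonneg w n hw _
  · rw [if_neg h0]; exact DD_nonneg w n hw _

lemma max_sub_le (u v V : ℝ) (hvV : v ≤ V) : |max u V - V| ≤ |u - v| := by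
  rcases le_total u V with h | h
  · rw [max_eq_right h]
    simp only [sub_self, abs_zero]
    exact abs_nonneg _
  · rw [max_eq_left h, abs_of_nonneg (by linarith)]
    calc u - V ≤ u - v := by linarith
    _ ≤ |u - v| := le_abs_self _

lemma MM_edge (w : ℕ → ℝ) (n : ℕ) (hn : 5 ≤ n) (hsym : w 0 = w 2) (k : ℕ) (hk : k < n - 1) :
    |MM w n k - MM w n (k + 1)| ≤ |w k - w (k + 1)| := by
  by_cases h0 : k = 0
  · subst h0
    rw [MM_zero w n hn, MM_rec w n hn 1 (by omega) (by omega)]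
    rw [abs_sub_comm]
    have h := max_sub_le (w 1) (w 2) (MM w n 2) (MM_ge w n hn 2 (by omega) (by omega))
    calc |max (w 1) (MM w n 2) - MM w n 2| ≤ |w 1 - w 2| := h
    _ = |w 0 - w 1| := by rw [hsym, abs_sub_comm]
  · rcases Nat.lt_or_ge k (n - 1) with _ | _
    · rw [MM_rec w n hn k (by omega) (by omega)]
      exact max_sub_le (w k) (w (k + 1)) (MM w n (k + 1))
        (MM_ge w n hn (k + 1) (by omega) (by omega))
    · omega

lemma MM_chord (w : ℕ → ℝ) (n : ℕ) (hn : 5 ≤ n) (hsym : w 0 = w 2) :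
    |MM w n 0 - MM w n 3| ≤ |w 0 - w 3| := by
  rw [MM_zero w n hn, MM_rec w n hn 2 (by omega) (by omega)]
  have h := max_sub_le (w 2) (w 3) (MM w n 3) (MM_ge w n hn 3 (by omega) (by omega))
  calc |max (w 2) (MM w n 3) - MM w n 3| ≤ |w 2 - w 3| := h
  _ = |w 0 - w 3| := by rw [hsym]

lemma EE_MM_le (n : ℕ) (hn : 5 ≤ n) {p : ℝ} (hp : 0 ≤ p) (w : ℕ → ℝ) (hsym : w 0 = w 2) :
    EE 3 n p (MM w n) ≤ EE 3 n p w := by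
  unfold EE
  apply add_le_add
  · apply Finset.sum_le_sum
    intro k hk
    simp only [Finset.mem_range] at hk
    exact Real.rpow_le_rpow (abs_nonneg _) (MM_edge w n hn hsym k hk) hp
  · exact Real.rpow_le_rpow (abs_nonneg _) (MM_chord w n hn hsym) hp

lemma NN_MM_ge (n : ℕ) (hn : 5 ≤ n) {p : ℝ} (hp : 0 ≤ p) (w : ℕ → ℝ) (hw : ∀ k, 0 ≤ w k)
    (hsym : w 0 = w 2) : NN 3 n p w ≤ NN 3 n p (MM w n) := by
  apply NN_mono 3 n p (by omega)
  intro j hj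
  apply Real.rpow_le_rpow (abs_nonneg _) _ hp
  rw [abs_of_nonneg (hw j), abs_of_nonneg (MM_nonneg w n hw j)]
  by_cases h0 : j = 0
  · subst h0
    rw [MM_zero w n hn, hsym]
    exact MM_ge w n hn 2 (by omega) (by omega)
  · exact MM_ge w n hn j (by omega) hj

end Tad

namespace Tad

theorem tadpole_comparison' (n : ℕ) (hn : 5 ≤ n) (p : ℝ) (hp : 1 < p) :
    lambda1 (tadpole n 3) p < lambda1 (tadpole n 4) p := by
  obtain ⟨m, rfl⟩ : ∃ m, n = m + 5 := ⟨n - 5, by omega⟩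
  have hp0 : (0:ℝ) < p := by linarith
  have hp0' : (0:ℝ) ≤ p := hp0.le
  have hp1 : (1:ℝ) ≤ p := hp.le
  have hpne : p ≠ 0 := ne_of_gt hp0
  -- peeled forms
  have hpeelE : ∀ (c : ℕ) (z : ℕ → ℝ), EE c (m+5) p z
      = (∑ k ∈ range m, |z (k+4) - z (k+5)| ^ p)
        + (|z 0 - z 1| ^ p + |z 1 - z 2| ^ p + |z 2 - z 3| ^ p + |z 3 - z 4| ^ p)
        + |z 0 - z c| ^ p := by
    intro c z
    unfold EE
    rw [show m + 5 - 1 = m + 4 by omega]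
    rw [sum_peel4 m (fun k => |z k - z (k+1)| ^ p)]
  have hpeelN : ∀ (c : ℕ) (z : ℕ → ℝ), NN c (m+5) p z
      = (∑ k ∈ range m, (|z (k+4)| ^ p + |z (k+5)| ^ p))
        + ((|z 0| ^ p + |z 1| ^ p) + (|z 1| ^ p + |z 2| ^ p) + (|z 2| ^ p + |z 3| ^ p)
            + (|z 3| ^ p + |z 4| ^ p))
        + (|z 0| ^ p + |z c| ^ p) := by
    intro c z
    unfold NN
    rw [show m + 5 - 1 = m + 4 by omega]
    rw [sum_peel4 m (fun k => |z k| ^ p + |z (k+1)| ^ p)]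
  -- minimizer for T_{n,4}
  obtain ⟨f, hfadm, hfpn, hfray⟩ :=
    exists_minimizer (m+5) 3 4 (by norm_num) (by norm_num) (by omega) (by omega) p hp
  set lam := lambda1 (tadpole (m+5) 4) p with hlam
  set v0 : ℕ → ℝ := fun k => if h : k < m + 5 then f ⟨k, h⟩ else 0 with hv0def
  have hv0 : ∀ x : Fin (m+5), v0 x.val = f x := by
    intro x
    simp only [hv0def]
    rw [dif_pos x.isLt]
  have hE0 : energy (tadpole (m+5) 4) p f = EE 3 (m+5) p v0 :=
    energy_eq (m+5) 3 4 (by norm_num) (by norm_num) (by omega) p f v0 hv0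
  have hN0 : pnorm (tadpole (m+5) 4) p f = NN 3 (m+5) p v0 :=
    pnorm_eq (m+5) 3 4 (by norm_num) (by norm_num) (by omega) p f v0 hv0
  have hN0' : NN 3 (m+5) p v0 = 1 := by rw [← hN0]; exact hfpn
  have hE0' : EE 3 (m+5) p v0 = lam := by
    calc EE 3 (m+5) p v0 = energy (tadpole (m+5) 4) p f := hE0.symm
    _ = energy (tadpole (m+5) 4) p f / pnorm (tadpole (m+5) 4) p f := by
        rw [hfpn, div_one]
    _ = rayleigh (tadpole (m+5) 4) p f := rfl
    _ = lam := hfray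
  have hv0last : v0 (m+4) = 0 := by
    have hd : deg (tadpole (m+5) 4) (⟨m+4, by omega⟩ : Fin (m+5)) = 1 :=
      deg_last (m+5) 3 4 (by norm_num) (by norm_num) (by omega)
    have h2 := hfadm ⟨m+4, by omega⟩ hd
    calc v0 (m+4) = f ⟨m+4, by omega⟩ := hv0 ⟨m+4, by omega⟩
    _ = 0 := h2
  have hlam0 : 0 ≤ lam := by rw [← hfray]; exact rayleigh_nonneg _ _ _
  have hlampos : 0 < lam := by
    rcases eq_or_lt_of_le hlam0 with h0 | h0
    · exfalso
      have hEE0 : EE 3 (m+5) p v0 = 0 := by rw [hE0', ← h0]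
      have hch : (0:ℝ) ≤ |v0 0 - v0 3| ^ p := Real.rpow_nonneg (abs_nonneg _) p
      have hsnn : ∀ k ∈ range (m+5-1), (0:ℝ) ≤ |v0 k - v0 (k+1)| ^ p :=
        fun k _ => Real.rpow_nonneg (abs_nonneg _) p
      have hsum0 : (∑ k ∈ range (m+5-1), |v0 k - v0 (k+1)| ^ p) = 0 := by
        unfold EE at hEE0
        have := Finset.sum_nonneg hsnn
        linarith
      have hterms := (Finset.sum_eq_zero_iff_of_nonneg hsnn).1 hsum0
      have hstep : ∀ k, k < m+4 → v0 k = v0 (k+1) := by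
        intro k hk
        have h1 := hterms k (Finset.mem_range.2 (by omega))
        have h2 : |v0 k - v0 (k+1)| = 0 := by
          by_contra hne
          have h3 : 0 < |v0 k - v0 (k+1)| := lt_of_le_of_ne (abs_nonneg _) (Ne.symm hne)
          have := Real.rpow_pos_of_pos h3 p
          linarith
        have := abs_eq_zero.1 h2
        linarith
      have hall : ∀ j, j ≤ m+4 → v0 (m+4-j) = 0 := by
        intro j
        induction j with
        | zero => intro _; simpa using hv0last
        | succ j ih =>
          intro hj
          have h1 : v0 (m+4-(j+1)) = v0 ((m+4-(j+1))+1) := hstep _ (by omega)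
          rw [h1, show (m+4-(j+1))+1 = m+4-j by omega]
          exact ih (by omega)
      have hZ : NN 3 (m+5) p v0 = 0 := by
        apply NN_zero 3 (m+5) p hpne (by omega) v0
        intro k hk
        have := hall (m+4-k) (by omega)
        rw [show m+4-(m+4-k) = k by omega] at this
        exact this
      rw [hN0'] at hZ
      norm_num at hZ
    · exact h0
  -- symmetrization
  have habsE := EE_abs_le 3 (m+5) hp0' v0
  have habsN := NN_abs 3 (m+5) p v0
  set v1 : ℕ → ℝ := fun k => |v0 k| with hv1def
  have hv1nn : ∀ k, 0 ≤ v1 k := fun k => abs_nonneg _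
  have hv1last : v1 (m+4) = 0 := by
    show |v0 (m+4)| = 0
    rw [hv0last, abs_zero]
  have hE1 : EE 3 (m+5) p v1 ≤ lam := le_trans habsE (le_of_eq hE0')
  have hN1 : NN 3 (m+5) p v1 = 1 := habsN.trans hN0'
  have hE2 : EE 3 (m+5) p (fun k => v1 (sw k)) = EE 3 (m+5) p v1 := EE_swap m p v1
  have hN2 : NN 3 (m+5) p (fun k => v1 (sw k)) = 1 := (NN_swap m p v1).trans hN1
  have hmmE := EE_maxmin 3 (m+5) hp1 v1 (fun k => v1 (sw k))
  have hmmN := NN_maxmin 3 (m+5) p v1 (fun k => v1 (sw k))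
  obtain ⟨t, htsym, htnn, htlast, htNpos, htE⟩ :
      ∃ t : ℕ → ℝ, t 0 = t 2 ∧ (∀ k, 0 ≤ t k) ∧ t (m+4) = 0 ∧
        0 < NN 3 (m+5) p t ∧ EE 3 (m+5) p t ≤ lam * NN 3 (m+5) p t := by
    have hunn : ∀ k, 0 ≤ max (v1 k) (v1 (sw k)) := fun k => le_max_of_le_left (hv1nn k)
    have hwnn : ∀ k, 0 ≤ min (v1 k) (v1 (sw k)) := fun k => le_min (hv1nn k) (hv1nn (sw k))
    have husym : max (v1 0) (v1 (sw 0)) = max (v1 2) (v1 (sw 2)) := by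
      rw [show sw 0 = 2 from rfl, show sw 2 = 0 from rfl]
      exact max_comm _ _
    have hwsym : min (v1 0) (v1 (sw 0)) = min (v1 2) (v1 (sw 2)) := by
      rw [show sw 0 = 2 from rfl, show sw 2 = 0 from rfl]
      exact min_comm _ _
    have hulast : max (v1 (m+4)) (v1 (sw (m+4))) = 0 := by
      rw [sw_large (m+4) (by omega), hv1last, max_self]
    have hwlast : min (v1 (m+4)) (v1 (sw (m+4))) = 0 := by
      rw [sw_large (m+4) (by omega), hv1last, min_self]
    have hNu_ge : NN 3 (m+5) p v1 ≤ NN 3 (m+5) p (fun k => max (v1 k) (v1 (sw k))) := by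
      apply NN_mono 3 (m+5) p (by omega)
      intro j _
      apply Real.rpow_le_rpow (abs_nonneg _) _ hp0'
      rw [abs_of_nonneg (hv1nn j), abs_of_nonneg (hunn j)]
      exact le_max_left _ _
    have hNupos : 0 < NN 3 (m+5) p (fun k => max (v1 k) (v1 (sw k))) := by
      rw [hN1] at hNu_ge
      linarith
    have h2lam : EE 3 (m+5) p (fun k => max (v1 k) (v1 (sw k)))
        + EE 3 (m+5) p (fun k => min (v1 k) (v1 (sw k))) ≤ 2 * lam := by
      rw [hE2] at hmmE
      linarith
    have hsum2 : NN 3 (m+5) p (fun k => max (v1 k) (v1 (sw k)))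
        + NN 3 (m+5) p (fun k => min (v1 k) (v1 (sw k))) = 2 := by
      rw [hN1, hN2] at hmmN
      linarith
    by_cases hcase : EE 3 (m+5) p (fun k => min (v1 k) (v1 (sw k)))
        ≤ lam * NN 3 (m+5) p (fun k => min (v1 k) (v1 (sw k)))
        ∧ 0 < NN 3 (m+5) p (fun k => min (v1 k) (v1 (sw k)))
    · exact ⟨fun k => min (v1 k) (v1 (sw k)), hwsym, hwnn, hwlast, hcase.2, hcase.1⟩
    · refine ⟨fun k => max (v1 k) (v1 (sw k)), husym, hunn, hulast, hNupos, ?_⟩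
      by_cases hNw : 0 < NN 3 (m+5) p (fun k => min (v1 k) (v1 (sw k)))
      · have hEw : ¬ (EE 3 (m+5) p (fun k => min (v1 k) (v1 (sw k)))
            ≤ lam * NN 3 (m+5) p (fun k => min (v1 k) (v1 (sw k)))) :=
          fun h => hcase ⟨h, hNw⟩
        have hEwgt := not_le.1 hEw
        have hkey : lam * NN 3 (m+5) p (fun k => max (v1 k) (v1 (sw k)))
            = 2 * lam - lam * NN 3 (m+5) p (fun k => min (v1 k) (v1 (sw k))) := by
          have h' : NN 3 (m+5) p (fun k => max (v1 k) (v1 (sw k)))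
              = 2 - NN 3 (m+5) p (fun k => min (v1 k) (v1 (sw k))) := by linarith
          rw [h']
          ring
        linarith
      · have hNw0 : NN 3 (m+5) p (fun k => min (v1 k) (v1 (sw k))) = 0 :=
          le_antisymm (not_lt.1 hNw) (NN_nonneg _ _ _ _)
        have hEw0 : 0 ≤ EE 3 (m+5) p (fun k => min (v1 k) (v1 (sw k))) := EE_nonneg _ _ _ _
        have hNu2 : NN 3 (m+5) p (fun k => max (v1 k) (v1 (sw k))) = 2 := by linarith
        rw [hNu2]
        linarith
  -- monotone rearrangement
  have hMnn : ∀ k, 0 ≤ MM t (m+5) k := MM_nonneg t (m+5) htnn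
  have hM02 : MM t (m+5) 0 = MM t (m+5) 2 := MM_zero t (m+5) (by omega)
  have hMlast : MM t (m+5) (m+4) = 0 := by
    have h1 := MM_last t (m+5) (by omega)
    rw [show m + 5 - 1 = m + 4 by omega] at h1
    rw [h1]
    have := htlast
    convert this using 2
  have hNM_ge : NN 3 (m+5) p t ≤ NN 3 (m+5) p (MM t (m+5)) :=
    NN_MM_ge (m+5) (by omega) hp0' t htnn htsym
  have hNMpos : 0 < NN 3 (m+5) p (MM t (m+5)) := lt_of_lt_of_le htNpos hNM_ge
  have hEM : EE 3 (m+5) p (MM t (m+5)) ≤ lam * NN 3 (m+5) p (MM t (m+5)) := by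
    calc EE 3 (m+5) p (MM t (m+5)) ≤ EE 3 (m+5) p t := EE_MM_le (m+5) (by omega) hp0' t htsym
    _ ≤ lam * NN 3 (m+5) p t := htE
    _ ≤ lam * NN 3 (m+5) p (MM t (m+5)) := mul_le_mul_of_nonneg_left hNM_ge hlam0
  set M : ℕ → ℝ := MM t (m+5) with hMdef
  have hc_le_a : M 3 ≤ M 2 := by
    have h1 := MM_rec t (m+5) (by omega) 2 (by omega) (by omega)
    show MM t (m+5) 3 ≤ MM t (m+5) 2
    rw [h1]
    exact le_max_right _ _
  have ha_le_b : M 2 ≤ M 1 := MM_le_one t (m+5) (by omega) 2 (by omega)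
  have hbpos : 0 < M 1 := by
    rcases eq_or_lt_of_le (hMnn 1) with hb0 | hb0
    · exfalso
      have hallz : ∀ k, k ≤ m+5-1 → M k = 0 := by
        intro k hk
        refine le_antisymm ?_ (hMnn k)
        calc M k ≤ M 1 := MM_le_one t (m+5) (by omega) k (by omega)
        _ = 0 := hb0.symm
      have := NN_zero 3 (m+5) p hpne (by omega) M hallz
      linarith
    · exact hb0
  -- strictness
  have hstrict : M 3 < M 2 ∨ M 2 < M 1 := by
    by_contra hcon
    push_neg at hcon
    obtain ⟨h1, h2⟩ := hcon
    have heq2 : M 2 = M 1 := le_antisymm ha_le_b h2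
    have heq3 : M 3 = M 1 := (le_antisymm hc_le_a h1).trans heq2
    have heq0 : M 0 = M 1 := hM02.trans heq2
    have hbbp : 0 < (M 1) ^ (p-1) := Real.rpow_pos_of_pos hbpos _
    have hδpos : 0 < lam * (M 1) ^ (p-1) := mul_pos hlampos hbbp
    set ε : ℝ := (lam * (M 1) ^ (p-1) / 2) ^ (1/(p-1)) with hεdef
    have hεpos : 0 < ε := Real.rpow_pos_of_pos (by linarith) _
    have hεp1 : ε ^ (p-1) = lam * (M 1) ^ (p-1) / 2 := by
      rw [hεdef, ← Real.rpow_mul (by linarith : (0:ℝ) ≤ lam * (M 1) ^ (p-1) / 2),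
        one_div_mul_cancel (show p - 1 ≠ 0 from ne_of_gt (by linarith)), Real.rpow_one]
    set M' : ℕ → ℝ := fun k => if k = 1 then M 1 + ε else M k with hM'def
    have e0 : M' 0 = M 0 := by simp [hM'def]
    have e1 : M' 1 = M 1 + ε := by simp [hM'def]
    have e2 : M' 2 = M 2 := by simp [hM'def]
    have e3 : M' 3 = M 3 := by simp [hM'def]
    have e4 : M' 4 = M 4 := by simp [hM'def]
    have htail' : ∀ k ∈ range m, |M' (k+4) - M' (k+5)| ^ p = |M (k+4) - M (k+5)| ^ p := by
      intro k _
      have ha : M' (k+4) = M (k+4) := by simp only [hM'def]; rw [if_neg (by omega)]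
      have hb : M' (k+5) = M (k+5) := by simp only [hM'def]; rw [if_neg (by omega)]
      rw [ha, hb]
    have htailN' : ∀ k ∈ range m, |M' (k+4)| ^ p + |M' (k+5)| ^ p
        = |M (k+4)| ^ p + |M (k+5)| ^ p := by
      intro k _
      have ha : M' (k+4) = M (k+4) := by simp only [hM'def]; rw [if_neg (by omega)]
      have hb : M' (k+5) = M (k+5) := by simp only [hM'def]; rw [if_neg (by omega)]
      rw [ha, hb]
    have hE' : EE 3 (m+5) p M' = EE 3 (m+5) p M + 2 * ε ^ p := by
      rw [hpeelE 3 M', hpeelE 3 M, Finset.sum_congr rfl htail', e0, e1, e2, e3, e4,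
        heq0, heq2, heq3,
        show M 1 - (M 1 + ε) = -ε by ring, show M 1 + ε - M 1 = ε by ring,
        sub_self, abs_neg, abs_zero, abs_of_pos hεpos, Real.zero_rpow hpne]
      ring
    have hN' : NN 3 (m+5) p M' = NN 3 (m+5) p M + 2 * |M 1 + ε| ^ p - 2 * |M 1| ^ p := by
      rw [hpeelN 3 M', hpeelN 3 M, Finset.sum_congr rfl htailN', e0, e1, e2, e3, e4]
      ring
    have hMb1 : |M 1| = M 1 := abs_of_nonneg (hMnn 1)
    have hMb1' : |M 1 + ε| = M 1 + ε := abs_of_nonneg (by linarith [hMnn 1])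
    have hΔ : (M 1) ^ (p-1) * ε ≤ |M 1 + ε| ^ p - |M 1| ^ p := by
      rw [hMb1, hMb1']
      have h1 : (M 1 + ε) ^ ((p-1)+1) = (M 1 + ε) ^ (p-1) * (M 1 + ε) :=
        Real.rpow_add_one (ne_of_gt (by linarith [hMnn 1])) (p-1)
      rw [show (p-1)+1 = p by ring] at h1
      have h2 : (M 1) ^ ((p-1)+1) = (M 1) ^ (p-1) * (M 1) :=
        Real.rpow_add_one (ne_of_gt hbpos) (p-1)
      rw [show (p-1)+1 = p by ring] at h2
      have h3 : (M 1) ^ (p-1) ≤ (M 1 + ε) ^ (p-1) :=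
        Real.rpow_le_rpow (hMnn 1) (by linarith) (by linarith)
      have h4 := mul_le_mul_of_nonneg_right h3 (show (0:ℝ) ≤ M 1 + ε by linarith [hMnn 1])
      have h5 : (M 1) ^ (p-1) * (M 1 + ε) = (M 1) ^ (p-1) * M 1 + (M 1) ^ (p-1) * ε := by
        ring
      linarith [h1, h2, h4, h5]
    have hεpε : ε ^ p = ε ^ (p-1) * ε := by
      have h := Real.rpow_add_one (ne_of_gt hεpos) (p-1)
      rw [show (p-1)+1 = p by ring] at h
      exact h
    have hkey : EE 3 (m+5) p M' < lam * NN 3 (m+5) p M' := by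
      rw [hE', hN']
      have h2εp : 2 * ε ^ p < 2 * (lam * (M 1) ^ (p-1)) * ε := by
        rw [hεpε, hεp1]
        have hde : 0 < lam * (M 1) ^ (p-1) * ε := mul_pos hδpos hεpos
        linarith [hde]
      have h5 : lam * ((M 1) ^ (p-1) * ε) ≤ lam * (|M 1 + ε| ^ p - |M 1| ^ p) :=
        mul_le_mul_of_nonneg_left hΔ hlam0
      linarith [hEM, h2εp, h5]
    -- realize M' on the graph and contradict minimality
    have hE'' : energy (tadpole (m+5) 4) p (fun x : Fin (m+5) => M' x.val) = EE 3 (m+5) p M' :=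
      energy_eq (m+5) 3 4 (by norm_num) (by norm_num) (by omega) p _ M' (fun x => rfl)
    have hN'' : pnorm (tadpole (m+5) 4) p (fun x : Fin (m+5) => M' x.val) = NN 3 (m+5) p M' :=
      pnorm_eq (m+5) 3 4 (by norm_num) (by norm_num) (by omega) p _ M' (fun x => rfl)
    have hNM'pos : 0 < NN 3 (m+5) p M' := by
      have hb : 0 < (M 1) ^ (p-1) * ε := mul_pos hbbp hεpos
      have : NN 3 (m+5) p M ≤ NN 3 (m+5) p M' := by rw [hN']; linarith [hΔ]
      linarith [hNMpos]
    have hadm' : ∀ x : Fin (m+5), deg (tadpole (m+5) 4) x = 1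
        → (fun x : Fin (m+5) => M' x.val) x = 0 := by
      intro x hx
      have hxv := deg_one_imp (m+5) 3 4 (by norm_num) (by norm_num) (by omega) x hx
      show M' x.val = 0
      rw [hxv, show m + 5 - 1 = m + 4 by omega]
      have : M' (m+4) = M (m+4) := by simp only [hM'def]; rw [if_neg (by omega)]
      rw [this]
      exact hMlast
    have hne' : (fun x : Fin (m+5) => M' x.val) ≠ 0 := by
      intro h
      have h1 := congrFun h (⟨1, by omega⟩ : Fin (m+5))
      have h2 : M' 1 = 0 := h1
      rw [e1] at h2
      linarith
    have hray' : rayleigh (tadpole (m+5) 4) p (fun x : Fin (m+5) => M' x.val) < lam := by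
      unfold rayleigh
      rw [hE'', hN'', div_lt_iff₀ hNM'pos]
      exact hkey
    have hle := lambda1_le (tadpole (m+5) 4) p (fun x : Fin (m+5) => M' x.val) hadm' hne'
    rw [← hlam] at hle
    linarith
  -- construct the test function on T_{n,3}
  set g : ℕ → ℝ := fun k => if k ≤ 1 then M 1 else M k with hgdef
  have hg0 : g 0 = M 1 := by simp [hgdef]
  have hg1 : g 1 = M 1 := by simp [hgdef]
  have hgk : ∀ k, 2 ≤ k → g k = M k := by
    intro k hk
    simp only [hgdef]
    rw [if_neg (by omega)]
  have hg2 : g 2 = M 2 := hgk 2 (by omega)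
  have hg3 : g 3 = M 3 := hgk 3 (by omega)
  have hg4 : g 4 = M 4 := hgk 4 (by omega)
  have htailg : ∀ k ∈ range m, |g (k+4) - g (k+5)| ^ p = |M (k+4) - M (k+5)| ^ p := by
    intro k _
    rw [hgk (k+4) (by omega), hgk (k+5) (by omega)]
  have htailgN : ∀ k ∈ range m, |g (k+4)| ^ p + |g (k+5)| ^ p
      = |M (k+4)| ^ p + |M (k+5)| ^ p := by
    intro k _
    rw [hgk (k+4) (by omega), hgk (k+5) (by omega)]
  have hEg : EE 2 (m+5) p g = EE 3 (m+5) p M - |M 2 - M 3| ^ p := by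
    rw [hpeelE 2 g, hpeelE 3 M, Finset.sum_congr rfl htailg, hg0, hg1, hg2, hg3, hg4,
      hM02, sub_self, abs_zero, Real.zero_rpow hpne, abs_sub_comm (M 2) (M 1)]
    ring
  have hNg : NN 2 (m+5) p g = NN 3 (m+5) p M + 2 * |M 1| ^ p - |M 2| ^ p - |M 3| ^ p := by
    rw [hpeelN 2 g, hpeelN 3 M, Finset.sum_congr rfl htailgN, hg0, hg1, hg2, hg3, hg4, hM02]
    ring
  have hr2 : |M 2| ^ p ≤ |M 1| ^ p := by
    apply Real.rpow_le_rpow (abs_nonneg _) _ hp0'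
    rw [abs_of_nonneg (hMnn 2), abs_of_nonneg (hMnn 1)]
    exact ha_le_b
  have hr3 : |M 3| ^ p ≤ |M 1| ^ p := by
    apply Real.rpow_le_rpow (abs_nonneg _) _ hp0'
    rw [abs_of_nonneg (hMnn 3), abs_of_nonneg (hMnn 1)]
    exact le_trans hc_le_a ha_le_b
  have hNg_ge : NN 3 (m+5) p M ≤ NN 2 (m+5) p g := by
    rw [hNg]
    linarith
  have hNg_pos : 0 < NN 2 (m+5) p g := lt_of_lt_of_le hNMpos hNg_ge
  have hkey2 : EE 2 (m+5) p g < lam * NN 2 (m+5) p g := by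
    rcases hstrict with hlt | hlt
    · have hpos : 0 < |M 2 - M 3| ^ p := by
        apply Real.rpow_pos_of_pos
        rw [abs_pos, sub_ne_zero]
        exact ne_of_gt hlt
      have hle' : lam * NN 3 (m+5) p M ≤ lam * NN 2 (m+5) p g :=
        mul_le_mul_of_nonneg_left hNg_ge hlam0
      rw [hEg]
      linarith [hEM]
    · have hstr : |M 2| ^ p < |M 1| ^ p := by
        apply Real.rpow_lt_rpow (abs_nonneg _) _ hp0
        rw [abs_of_nonneg (hMnn 2), abs_of_nonneg (hMnn 1)]
        exact hlt
      have hd : 0 ≤ |M 2 - M 3| ^ p := Real.rpow_nonneg (abs_nonneg _) p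
      have h2 : lam * NN 3 (m+5) p M < lam * NN 2 (m+5) p g := by
        apply mul_lt_mul_of_pos_left _ hlampos
        rw [hNg]
        linarith
      rw [hEg]
      linarith [hEM]
  -- conclude
  have hEg' : energy (tadpole (m+5) 3) p (fun x : Fin (m+5) => g x.val) = EE 2 (m+5) p g :=
    energy_eq (m+5) 2 3 (by norm_num) (by norm_num) (by omega) p _ g (fun x => rfl)
  have hNg' : pnorm (tadpole (m+5) 3) p (fun x : Fin (m+5) => g x.val) = NN 2 (m+5) p g :=
    pnorm_eq (m+5) 2 3 (by norm_num) (by norm_num) (by omega) p _ g (fun x => rfl)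
  have hadmg : ∀ x : Fin (m+5), deg (tadpole (m+5) 3) x = 1
      → (fun x : Fin (m+5) => g x.val) x = 0 := by
    intro x hx
    have hxv := deg_one_imp (m+5) 2 3 (by norm_num) (by norm_num) (by omega) x hx
    show g x.val = 0
    rw [hxv, show m + 5 - 1 = m + 4 by omega, hgk (m+4) (by omega)]
    exact hMlast
  have hgne : (fun x : Fin (m+5) => g x.val) ≠ 0 := by
    intro h
    have h1 := congrFun h (⟨0, by omega⟩ : Fin (m+5))
    have h2 : g 0 = 0 := h1
    rw [hg0] at h2
    linarith
  have hfinal : rayleigh (tadpole (m+5) 3) p (fun x : Fin (m+5) => g x.val) < lam := by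
    unfold rayleigh
    rw [hEg', hNg', div_lt_iff₀ hNg_pos]
    exact hkey2
  exact lt_of_le_of_lt
    (lambda1_le (tadpole (m+5) 3) p (fun x : Fin (m+5) => g x.val) hadmg hgne) hfinal

end Tad

/-- For `n ≥ 5` and `p > 1`, `λ_{1,p}(T_{n,4}) > λ_{1,p}(T_{n,3})`. -/
theorem tadpole_comparison (n : ℕ) (hn : 5 ≤ n) (p : ℝ) (hp : 1 < p) :
    lambda1 (tadpole n 3) p < lambda1 (tadpole n 4) p := by
  exact Tad.tadpole_comparison' n hn p hp
end

section
/- For every integer n ≥ 4 and every real p > 1, λ_{1,p}(P_n) > λ_{1,p}(P_{n+1}), where P_m denotes the path graph on m vertices. -/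
attribute [local instance] Classical.propDecidable

open Finset

open Finset

lemma card_filter_val_eq (n c : ℕ) :
    ((univ : Finset (Fin n)).filter (fun y => y.val = c)).card = if c < n then 1 else 0 := by
  split_ifs with h
  · rw [Finset.card_eq_one]
    exact ⟨⟨c, h⟩, by ext y; simp [Fin.ext_iff]⟩
  · rw [Finset.card_eq_zero, Finset.filter_eq_empty_iff]
    exact fun y _ hy => h (hy ▸ y.isLt)

lemma pathG_adj {n : ℕ} (x y : Fin n) :
    (pathG n).Adj x y ↔ (y.val = x.val + 1 ∨ x.val = y.val + 1) := by
  simp only [pathG, SimpleGraph.fromRel_adj]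
  constructor
  · tauto
  · intro h
    refine ⟨?_, h⟩
    intro hxy
    subst hxy
    omega

lemma deg_pathG {n : ℕ} (x : Fin n) :
    deg (pathG n) x = (if x.val + 1 < n then 1 else 0) + (if x.val ≠ 0 then 1 else 0) := by
  unfold deg
  have h : (univ.filter (fun y => (pathG n).Adj x y)) =
      (univ.filter (fun y : Fin n => y.val = x.val + 1)) ∪
      (univ.filter (fun y : Fin n => y.val = x.val - 1 ∧ x.val ≠ 0)) := by
    ext y
    simp only [Finset.mem_filter, Finset.mem_union, Finset.mem_univ, true_and, pathG_adj]
    omega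
  rw [h, Finset.card_union_of_disjoint]
  · have h2 : ((univ : Finset (Fin n)).filter (fun y => y.val = x.val - 1 ∧ x.val ≠ 0)).card
        = if x.val ≠ 0 then 1 else 0 := by
      by_cases hx : x.val = 0
      · simp [hx]
      · have : ((univ : Finset (Fin n)).filter (fun y => y.val = x.val - 1 ∧ x.val ≠ 0))
            = ((univ : Finset (Fin n)).filter (fun y => y.val = x.val - 1)) := by
          ext y; simp [hx]
        rw [this, card_filter_val_eq]
        have : x.val - 1 < n := by omega
        simp [this, hx]
    rw [h2, card_filter_val_eq]
  · rw [Finset.disjoint_filter]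
    intro y _ h1 h2
    omega

lemma deg_pathG_eq_one_iff {n : ℕ} (hn : 3 ≤ n) (x : Fin n) :
    deg (pathG n) x = 1 ↔ (x.val = 0 ∨ x.val = n - 1) := by
  rw [deg_pathG]
  have := x.isLt
  split_ifs <;> omega
noncomputable def extFn {n : ℕ} (f : Fin n → ℝ) : ℕ → ℝ := fun k =>
  if h : k < n then f ⟨k, h⟩ else 0

lemma extFn_lt {n : ℕ} (f : Fin n → ℝ) (k : ℕ) (h : k < n) : extFn f k = f ⟨k, h⟩ := dif_pos h

lemma extFn_ge {n : ℕ} (f : Fin n → ℝ) (k : ℕ) (h : n ≤ k) : extFn f k = 0 :=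
  dif_neg (by omega)

lemma energy_pathG {n : ℕ} (hn : 1 ≤ n) (p : ℝ) (f : Fin n → ℝ) :
    energy (pathG n) p f = ∑ k ∈ range (n-1), |extFn f k - extFn f (k+1)| ^ p := by
  unfold energy
  have h1 : ∀ x y : Fin n, (if (pathG n).Adj x y then |f x - f y| ^ p else 0) =
      (if y.val = x.val + 1 then |f x - f y| ^ p else 0) +
      (if x.val = y.val + 1 then |f x - f y| ^ p else 0) := by
    intro x y
    by_cases h1 : y.val = x.val + 1
    · by_cases h2 : x.val = y.val + 1
      · exact absurd h1 (by omega)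
      · simp only [pathG_adj, h1, h2]
        simp
        exact fun h => absurd h (by omega)
    · by_cases h2 : x.val = y.val + 1
      · simp only [pathG_adj, h1, h2]
        simp
        exact fun h => absurd h (by omega)
      · simp [pathG_adj, h1, h2]
  have h2 : ∀ (c : ℕ) (t : Fin n → ℝ), (∑ y : Fin n, if y.val = c then t y else 0) =
      if h : c < n then t ⟨c, h⟩ else 0 := by
    intro c t
    split_ifs with h
    · rw [Finset.sum_eq_single_of_mem ⟨c, h⟩ (Finset.mem_univ _)]
      · simp
      · intro y _ hy
        rw [if_neg]
        simpa [Fin.ext_iff] using hy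
    · exact Finset.sum_eq_zero fun y _ => if_neg (by have := y.isLt; omega)
  have hsum : (∑ x : Fin n, ∑ y : Fin n, if (pathG n).Adj x y then |f x - f y| ^ p else 0) =
      2 * ∑ x : Fin n, (if h : x.val + 1 < n then |f x - f ⟨x.val+1, h⟩| ^ p else 0) := by
    calc (∑ x : Fin n, ∑ y : Fin n, if (pathG n).Adj x y then |f x - f y| ^ p else 0)
        = ∑ x : Fin n, ∑ y : Fin n, ((if y.val = x.val + 1 then |f x - f y| ^ p else 0) +
            (if x.val = y.val + 1 then |f x - f y| ^ p else 0)) :=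
          Finset.sum_congr rfl fun x _ => Finset.sum_congr rfl fun y _ => h1 x y
      _ = (∑ x : Fin n, ∑ y : Fin n, if y.val = x.val + 1 then |f x - f y| ^ p else 0) +
          (∑ x : Fin n, ∑ y : Fin n, if x.val = y.val + 1 then |f x - f y| ^ p else 0) := by
          simp [Finset.sum_add_distrib]
      _ = 2 * ∑ x : Fin n, (if h : x.val + 1 < n then |f x - f ⟨x.val+1, h⟩| ^ p else 0) := by
          rw [Finset.sum_comm (f := fun x y : Fin n => if x.val = y.val + 1 then |f x - f y| ^ p else 0)]
          have e1 : (∑ y : Fin n, ∑ x : Fin n, if x.val = y.val + 1 then |f x - f y| ^ p else 0) =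
              (∑ x : Fin n, ∑ y : Fin n, if y.val = x.val + 1 then |f x - f y| ^ p else 0) := by
            refine Finset.sum_congr rfl fun y _ => Finset.sum_congr rfl fun x _ => ?_
            rw [abs_sub_comm]
          rw [e1, ← two_mul]
          congr 1
          exact Finset.sum_congr rfl fun x _ => h2 (x.val+1) (fun y => |f x - f y| ^ p)
  have hred : (∑ x : Fin n, ∑ y : Fin n, if (pathG n).Adj x y then |f x - f y| ^ p else 0) / 2 =
      ∑ x : Fin n, (if h : x.val + 1 < n then |f x - f ⟨x.val+1, h⟩| ^ p else 0) := by
    rw [hsum]; ring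
  rw [hred]
  have h3 : ∀ x : Fin n, (if h : x.val + 1 < n then |f x - f ⟨x.val+1, h⟩| ^ p else 0) =
      (fun k => if k + 1 < n then |extFn f k - extFn f (k+1)| ^ p else 0) x.val := by
    intro x
    by_cases h : x.val + 1 < n
    · rw [dif_pos h]
      simp only [h, if_pos]
      rw [extFn_lt f x.val x.isLt, extFn_lt f (x.val+1) h]
    · rw [dif_neg h]
      simp [h]
  rw [Finset.sum_congr rfl fun x _ => h3 x,
    Fin.sum_univ_eq_sum_range (fun k => if k + 1 < n then |extFn f k - extFn f (k+1)| ^ p else 0) n]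
  rw [← Finset.sum_subset (Finset.range_subset_range.2 (by omega : n - 1 ≤ n))
    (fun k hk hnk => by rw [if_neg]; simp at hk hnk ⊢; omega)]
  exact Finset.sum_congr rfl fun k hk => by rw [if_pos]; simp at hk; omega
lemma pnorm_pathG {n : ℕ} (p : ℝ) (f : Fin n → ℝ) :
    pnorm (pathG n) p f = ∑ k ∈ range n, |extFn f k| ^ p *
      (((if k + 1 < n then 1 else 0) : ℝ) + (if k ≠ 0 then 1 else 0)) := by
  unfold pnorm
  have h : ∀ x : Fin n, |f x| ^ p * ((deg (pathG n) x : ℕ) : ℝ) =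
      (fun k => |extFn f k| ^ p * (((if k + 1 < n then 1 else 0) : ℝ) + (if k ≠ 0 then 1 else 0))) x.val := by
    intro x
    simp only [deg_pathG, extFn_lt f x.val x.isLt, Fin.eta]
    push_cast
    split_ifs <;> norm_num
  rw [Finset.sum_congr rfl fun x _ => h x,
    Fin.sum_univ_eq_sum_range (fun k => |extFn f k| ^ p *
      (((if k + 1 < n then 1 else 0) : ℝ) + (if k ≠ 0 then 1 else 0))) n]

lemma pnorm_pathG_boundary {n : ℕ} (hn : 2 ≤ n) {p : ℝ} (hp : 0 < p) (f : Fin n → ℝ)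
    (h0 : extFn f 0 = 0) (h1 : extFn f (n-1) = 0) :
    pnorm (pathG n) p f = 2 * ∑ k ∈ range n, |extFn f k| ^ p := by
  rw [pnorm_pathG, Finset.mul_sum]
  refine Finset.sum_congr rfl fun k hk => ?_
  rw [Finset.mem_range] at hk
  by_cases hk0 : k = 0
  · subst hk0
    rw [h0]
    simp [Real.zero_rpow (ne_of_gt hp)]
  · by_cases hk1 : k = n - 1
    · subst hk1
      rw [h1]
      simp [Real.zero_rpow (ne_of_gt hp)]
    · have c1 : k + 1 < n := by omega
      simp only [c1, if_pos, hk0, ne_eq, not_false_iff, if_true]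
      ring
lemma key_bounds {n : ℕ} (hn : 4 ≤ n) {p : ℝ} (hp : 1 < p) (f : Fin n → ℝ)
    (hb : ∀ x, deg (pathG n) x = 1 → f x = 0) (hf : f ≠ 0) :
    1 / (((n:ℝ)-1) ^ p * (2*((n:ℝ)-2))) ≤ rayleigh (pathG n) p f ∧
    ∃ g : Fin (n+1) → ℝ, (∀ x, deg (pathG (n+1)) x = 1 → g x = 0) ∧ g ≠ 0 ∧
      rayleigh (pathG (n+1)) p g ≤ (((n:ℝ)-2)/((n:ℝ)-1)) * rayleigh (pathG n) p f := by
  have hp0 : 0 < p := by linarith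
  have hpne : p ≠ 0 := ne_of_gt hp0
  set a : ℕ → ℝ := extFn f with ha
  set A : ℕ → ℝ := fun k => |a k| with hA
  have hAnn : ∀ k, 0 ≤ A k := fun k => abs_nonneg _
  have a0 : a 0 = 0 := by
    rw [ha, extFn_lt f 0 (by omega)]
    exact hb _ ((deg_pathG_eq_one_iff (by omega) _).2 (Or.inl rfl))
  have an1 : a (n-1) = 0 := by
    rw [ha, extFn_lt f (n-1) (by omega)]
    exact hb _ ((deg_pathG_eq_one_iff (by omega) _).2 (Or.inr rfl))
  have atail : ∀ k, n ≤ k → a k = 0 := fun k hk => extFn_ge f k hk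
  -- maximum
  obtain ⟨j, hjmem, hjmax⟩ := Finset.exists_max_image (range n) A ⟨0, mem_range.2 (by omega)⟩
  rw [Finset.mem_range] at hjmem
  set M : ℝ := A j with hM
  have hMub : ∀ k, A k ≤ M := by
    intro k
    by_cases h : k < n
    · exact hjmax k (Finset.mem_range.2 h)
    · rw [hA]; simp only
      rw [atail k (by omega)]
      simpa using hAnn j
  have hMpos : 0 < M := by
    obtain ⟨x, hx⟩ := Function.ne_iff.1 hf
    have : 0 < A x.val := by
      rw [hA]; simp only
      rw [ha, extFn_lt f x.val x.isLt, Fin.eta]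
      simpa using hx
    exact lt_of_lt_of_le this (hMub _)
  have hj0 : j ≠ 0 := by
    intro h
    rw [h, hA] at hM
    simp only [a0, abs_zero] at hM
    exact absurd hM.symm (ne_of_lt hMpos)
  have hjn : j ≤ n - 2 := by
    rcases Nat.lt_or_ge j (n-1) with h | h
    · omega
    · exfalso
      have : j = n - 1 := by omega
      rw [this, hA] at hM
      simp only [an1, abs_zero] at hM
      exact absurd hM.symm (ne_of_lt hMpos)
  -- pnorm
  set S : ℝ := ∑ k ∈ range n, A k ^ p with hS
  have hpnormf : pnorm (pathG n) p f = 2 * S := by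
    rw [pnorm_pathG_boundary (by omega) hp0 f a0 an1]
  have hMpS : M ^ p ≤ S := by
    rw [hS]
    exact Finset.single_le_sum (f := fun k => A k ^ p)
      (fun k _ => Real.rpow_nonneg (hAnn k) p) (Finset.mem_range.2 hjmem)
  have hSpos : 0 < S := lt_of_lt_of_le (Real.rpow_pos_of_pos hMpos p) hMpS
  have hSM : S ≤ ((n:ℝ)-2) * M ^ p := by
    have hsub : Finset.Ico 1 (n-1) ⊆ range n := by
      intro k hk
      rw [Finset.mem_Ico] at hk
      exact Finset.mem_range.2 (by omega)
    have hvan : ∀ k ∈ range n, k ∉ Finset.Ico 1 (n-1) → A k ^ p = 0 := by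
      intro k hk hnk
      rw [Finset.mem_range] at hk
      rw [Finset.mem_Ico] at hnk
      have : A k = 0 := by
        rw [hA]; simp only
        rcases (by omega : k = 0 ∨ k = n - 1) with h | h <;> rw [h] <;> simp [a0, an1]
      rw [this, Real.zero_rpow hpne]
    rw [hS, ← Finset.sum_subset hsub hvan]
    calc ∑ k ∈ Finset.Ico 1 (n-1), A k ^ p
        ≤ (Finset.Ico 1 (n-1)).card • M ^ p :=
          Finset.sum_le_card_nsmul _ _ _
            (fun k _ => Real.rpow_le_rpow (hAnn k) (hMub k) (le_of_lt hp0))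
      _ = ((n:ℝ)-2) * M ^ p := by
          rw [Nat.card_Ico, nsmul_eq_mul]
          congr 1
          push_cast [Nat.cast_sub (by omega : 1 ≤ n - 1), Nat.cast_sub (by omega : 1 ≤ n)]
          ring
  have hpnormpos : 0 < pnorm (pathG n) p f := by rw [hpnormf]; linarith
  -- energy lower bound
  set E : ℝ := ∑ k ∈ range (n-1), |a k - a (k+1)| ^ p with hE
  have henergyf : energy (pathG n) p f = E := energy_pathG (by omega) p f
  have hE0 : 0 ≤ E :=
    Finset.sum_nonneg fun k _ => Real.rpow_nonneg (abs_nonneg _) p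
  have hEM : M ^ p / ((n:ℝ)-1) ^ p ≤ E := by
    have htel : M ≤ ∑ k ∈ range j, |a k - a (k+1)| := by
      have h1 : ∑ k ∈ range j, (a (k+1) - a k) = a j - a 0 := Finset.sum_range_sub a j
      have h2 : M = |∑ k ∈ range j, (a (k+1) - a k)| := by
        rw [h1, a0, sub_zero]
      rw [h2]
      refine le_trans (Finset.abs_sum_le_sum_abs _ _) (le_of_eq ?_)
      exact Finset.sum_congr rfl fun k _ => abs_sub_comm _ _
    have hjpos : (0:ℝ) < (j:ℝ) := by
      have : 0 < j := by omega
      exact_mod_cast this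
    obtain ⟨k0, hk0j, hk0⟩ : ∃ k0 ∈ range j, M / (j:ℝ) ≤ |a k0 - a (k0+1)| := by
      by_contra h
      push_neg at h
      have hlt : ∑ k ∈ range j, |a k - a (k+1)| < ∑ _k ∈ range j, (M/(j:ℝ)) :=
        Finset.sum_lt_sum_of_nonempty ⟨0, Finset.mem_range.2 (by omega)⟩ h
      rw [Finset.sum_const, Finset.card_range, nsmul_eq_mul,
        mul_div_cancel₀ _ (ne_of_gt hjpos)] at hlt
      linarith
    rw [Finset.mem_range] at hk0j
    have hn1pos : (0:ℝ) < (n:ℝ) - 1 := by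
      have : (4:ℝ) ≤ (n:ℝ) := by exact_mod_cast hn
      linarith
    have hstep : M / ((n:ℝ)-1) ≤ |a k0 - a (k0+1)| := by
      refine le_trans ?_ hk0
      apply div_le_div_of_nonneg_left (le_of_lt hMpos) hjpos
      have : (j:ℝ) ≤ (n:ℝ) - 1 := by
        have : j ≤ n - 1 := by omega
        have h4 : ((j:ℕ):ℝ) ≤ ((n-1:ℕ):ℝ) := by exact_mod_cast this
        rwa [Nat.cast_sub (by omega), Nat.cast_one] at h4
      exact this
    have hterm : |a k0 - a (k0+1)| ^ p ≤ E := by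
      rw [hE]
      exact Finset.single_le_sum (f := fun k => |a k - a (k+1)| ^ p)
        (fun k _ => Real.rpow_nonneg (abs_nonneg _) p)
        (Finset.mem_range.2 (by omega))
    calc M ^ p / ((n:ℝ)-1) ^ p = (M / ((n:ℝ)-1)) ^ p :=
          (Real.div_rpow (le_of_lt hMpos) (le_of_lt hn1pos) p).symm
      _ ≤ |a k0 - a (k0+1)| ^ p :=
          Real.rpow_le_rpow (by positivity) hstep (le_of_lt hp0)
      _ ≤ E := hterm
  have hn1pos : (0:ℝ) < (n:ℝ) - 1 := by
    have : (4:ℝ) ≤ (n:ℝ) := by exact_mod_cast hn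
    linarith
  have hn2pos : (0:ℝ) < (n:ℝ) - 2 := by
    have : (4:ℝ) ≤ (n:ℝ) := by exact_mod_cast hn
    linarith
  have hMppos : 0 < M ^ p := Real.rpow_pos_of_pos hMpos p
  have hn1ppos : 0 < ((n:ℝ)-1) ^ p := Real.rpow_pos_of_pos hn1pos p
  constructor
  · unfold rayleigh
    rw [henergyf, hpnormf]
    calc 1 / (((n:ℝ)-1) ^ p * (2*((n:ℝ)-2)))
        = (M ^ p / ((n:ℝ)-1) ^ p) / (2*(((n:ℝ)-2) * M ^ p)) := by
          field_simp
      _ ≤ E / (2*S) :=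
          div_le_div₀ hE0 hEM (by linarith) (by linarith)
  -- construction of g
  · set g : Fin (n+1) → ℝ := fun x => if x.val ≤ j then A x.val else A (x.val - 1) with hg
    have hbfun : ∀ k, extFn g k = if k ≤ j then A k else A (k-1) := by
      intro k
      by_cases h : k < n + 1
      · rw [extFn_lt g k h]
      · rw [extFn_ge g k (by omega)]
        rw [if_neg (by omega)]
        rw [hA]; simp only
        rw [atail (k-1) (by omega), abs_zero]
    have hg0 : extFn g 0 = 0 := by
      rw [hbfun, if_pos (by omega)]
      rw [hA]; simp only [a0, abs_zero]
    have hgn : extFn g ((n+1)-1) = 0 := by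
      rw [hbfun]
      simp only [Nat.add_sub_cancel]
      rw [if_neg (by omega), hA]
      simp only
      have : n - 1 = n - 1 := rfl
      rw [(by omega : n - 1 = n - 1)]
      simp only [an1, abs_zero]
    refine ⟨g, ?_, ?_, ?_⟩
    · intro x hx
      rw [deg_pathG_eq_one_iff (by omega) x] at hx
      rcases hx with h | h
      · rw [hg]; simp only
        rw [if_pos (by omega), h, hA]
        simp [a0]
      · rw [hg]; simp only
        simp only [Nat.add_sub_cancel] at h
        rw [if_neg (by omega), h]
        rw [hA]; simp only
        simp [an1]
    · intro h
      have := congrFun h ⟨j, by omega⟩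
      rw [hg] at this
      simp only [if_pos (le_refl j)] at this
      exact absurd this (ne_of_gt hMpos)
    · have hpng : pnorm (pathG (n+1)) p g = 2 * (S + M ^ p) := by
        rw [pnorm_pathG_boundary (by omega) hp0 g hg0 hgn]
        congr 1
        have hterm : ∀ k, |extFn g k| ^ p = if k ≤ j then A k ^ p else A (k-1) ^ p := by
          intro k
          rw [hbfun k]
          rw [abs_of_nonneg (by split_ifs <;> exact hAnn _)]
          exact apply_ite (fun x : ℝ => x ^ p) _ _ _
        rw [Finset.sum_congr rfl fun k _ => hterm k]
        rw [Finset.range_eq_Ico, ← Finset.sum_Ico_consecutive _ (by omega : 0 ≤ j+1) (by omega : j+1 ≤ n+1)]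
        have e1 : ∑ k ∈ Finset.Ico 0 (j+1), (if k ≤ j then A k ^ p else A (k-1) ^ p) =
            (∑ k ∈ range j, A k ^ p) + M ^ p := by
          rw [← Finset.range_eq_Ico]
          rw [Finset.sum_congr rfl (fun k hk => if_pos (by rw [Finset.mem_range] at hk; omega))]
          rw [Finset.sum_range_succ]
        have e2 : ∑ k ∈ Finset.Ico (j+1) (n+1), (if k ≤ j then A k ^ p else A (k-1) ^ p) =
            ∑ k ∈ Finset.Ico j n, A k ^ p := by
          rw [Finset.sum_congr rfl (fun k hk => if_neg (by rw [Finset.mem_Ico] at hk; omega))]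
          rw [Finset.sum_Ico_eq_sum_range, Finset.sum_Ico_eq_sum_range]
          have : n + 1 - (j + 1) = n - j := by omega
          rw [this]
          refine Finset.sum_congr rfl fun i _ => ?_
          have : j + 1 + i - 1 = j + i := by omega
          rw [this]
        rw [e1, e2, hS, Finset.range_eq_Ico, Finset.range_eq_Ico,
          ← Finset.sum_Ico_consecutive _ (by omega : 0 ≤ j) (by omega : j ≤ n),
          ← Finset.range_eq_Ico]
        ring
      have heng : energy (pathG (n+1)) p g ≤ E := by
        rw [energy_pathG (by omega) p g]
        simp only [Nat.add_sub_cancel]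
        have split1 : ∑ k ∈ range n, |extFn g k - extFn g (k+1)| ^ p =
            (∑ k ∈ range j, |extFn g k - extFn g (k+1)| ^ p) +
            ∑ k ∈ Finset.Ico j n, |extFn g k - extFn g (k+1)| ^ p := by
          rw [Finset.range_eq_Ico, ← Finset.sum_Ico_consecutive _ (by omega : 0 ≤ j) (by omega : j ≤ n),
            ← Finset.range_eq_Ico]
        rw [split1, Finset.sum_eq_sum_Ico_succ_bot (by omega : j < n)]
        have tj : |extFn g j - extFn g (j+1)| ^ p = 0 := by
          rw [hbfun j, hbfun (j+1), if_pos (le_refl j), if_neg (by omega)]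
          simp only [Nat.add_sub_cancel, sub_self, abs_zero]
          exact Real.zero_rpow hpne
        rw [tj]
        have e3 : ∑ k ∈ range j, |extFn g k - extFn g (k+1)| ^ p =
            ∑ k ∈ range j, |A k - A (k+1)| ^ p := by
          refine Finset.sum_congr rfl fun k hk => ?_
          rw [Finset.mem_range] at hk
          rw [hbfun k, hbfun (k+1), if_pos (by omega), if_pos (by omega)]
        have e4 : ∑ k ∈ Finset.Ico (j+1) n, |extFn g k - extFn g (k+1)| ^ p =
            ∑ k ∈ Finset.Ico j (n-1), |A k - A (k+1)| ^ p := by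
          rw [Finset.sum_Ico_eq_sum_range, Finset.sum_Ico_eq_sum_range]
          have : n - (j+1) = n - 1 - j := by omega
          rw [this]
          refine Finset.sum_congr rfl fun i hi => ?_
          rw [Finset.mem_range] at hi
          rw [hbfun (j+1+i), hbfun (j+1+i+1), if_neg (by omega), if_neg (by omega)]
          have c1 : j + 1 + i - 1 = j + i := by omega
          have c2 : j + 1 + i + 1 - 1 = j + i + 1 := by omega
          rw [c1, c2]
        rw [e3, e4]
        have e5 : (∑ k ∈ range j, |A k - A (k+1)| ^ p) + (0 + ∑ k ∈ Finset.Ico j (n-1), |A k - A (k+1)| ^ p) =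
            ∑ k ∈ range (n-1), |A k - A (k+1)| ^ p := by
          rw [zero_add, Finset.range_eq_Ico, Finset.range_eq_Ico,
            ← Finset.sum_Ico_consecutive _ (by omega : 0 ≤ j) (by omega : j ≤ n-1),
            ← Finset.range_eq_Ico]
        rw [e5, hE]
        refine Finset.sum_le_sum fun k _ => ?_
        refine Real.rpow_le_rpow (abs_nonneg _) ?_ (le_of_lt hp0)
        exact abs_abs_sub_abs_le_abs_sub _ _
      have hdpos : (0:ℝ) < 2 * (S + M ^ p) := by linarith
      have hdenom : 2*S*(((n:ℝ)-1)/((n:ℝ)-2)) ≤ 2*(S+M^p) := by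
        rw [mul_div_assoc', div_le_iff₀ hn2pos]
        nlinarith [hSM, hSpos, hMppos]
      have h3 : E / (2*S*(((n:ℝ)-1)/((n:ℝ)-2))) = ((n:ℝ)-2)/((n:ℝ)-1) * (E/(2*S)) := by
        field_simp
      unfold rayleigh
      rw [henergyf, hpnormf, hpng]
      calc energy (pathG (n+1)) p g / (2 * (S + M ^ p))
          ≤ E / (2 * (S + M ^ p)) :=
            div_le_div₀ hE0 heng hdpos (le_refl _)
        _ ≤ E / (2*S*(((n:ℝ)-1)/((n:ℝ)-2))) := by
            apply div_le_div_of_nonneg_left hE0 (by positivity) hdenom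
        _ = ((n:ℝ)-2)/((n:ℝ)-1) * (E/(2*S)) := h3
lemma rayleigh_nonneg {V : Type*} [Fintype V] (G : SimpleGraph V) (p : ℝ) (f : V → ℝ) :
    0 ≤ rayleigh G p f := by
  unfold rayleigh
  apply div_nonneg
  · unfold energy
    apply div_nonneg _ (by norm_num)
    apply Finset.sum_nonneg
    intro x _
    apply Finset.sum_nonneg
    intro y _
    split_ifs
    · exact Real.rpow_nonneg (abs_nonneg _) _
    · exact le_refl 0
  · unfold pnorm
    exact Finset.sum_nonneg fun x _ =>
      mul_nonneg (Real.rpow_nonneg (abs_nonneg _) _) (Nat.cast_nonneg _)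

/-- For `n ≥ 4` and `p > 1`, `λ_{1,p}(P_n) > λ_{1,p}(P_{n+1})` for path graphs. -/
theorem path_comparison (n : ℕ) (hn : 4 ≤ n) (p : ℝ) (hp : 1 < p) :
    lambda1 (pathG (n + 1)) p < lambda1 (pathG n) p := by
  have hnR : (4:ℝ) ≤ (n:ℝ) := by exact_mod_cast hn
  set c : ℝ := ((n:ℝ)-2)/((n:ℝ)-1) with hc
  have hcpos : 0 < c := by apply div_pos <;> linarith
  have hc1 : c < 1 := by rw [hc, div_lt_one (by linarith)]; linarith
  set Sn : Set ℝ := { r : ℝ | ∃ f : Fin n → ℝ,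
    (∀ x, deg (pathG n) x = 1 → f x = 0) ∧ f ≠ 0 ∧ r = rayleigh (pathG n) p f } with hSn
  set Sm : Set ℝ := { r : ℝ | ∃ f : Fin (n+1) → ℝ,
    (∀ x, deg (pathG (n+1)) x = 1 → f x = 0) ∧ f ≠ 0 ∧ r = rayleigh (pathG (n+1)) p f } with hSm
  have hl1 : lambda1 (pathG n) p = sInf Sn := rfl
  have hl2 : lambda1 (pathG (n+1)) p = sInf Sm := rfl
  set ε : ℝ := 1 / (((n:ℝ)-1) ^ p * (2*((n:ℝ)-2))) with hε
  have hεpos : 0 < ε := by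
    apply div_pos (by norm_num)
    apply mul_pos (Real.rpow_pos_of_pos (by linarith) p) (by linarith)
  have hne : Sn.Nonempty := by
    refine ⟨rayleigh (pathG n) p (fun x => if x.val = 1 then 1 else 0),
      fun x => if x.val = 1 then 1 else 0, ?_, ?_, rfl⟩
    · intro x hx
      rw [deg_pathG_eq_one_iff (by omega) x] at hx
      show (if x.val = 1 then (1:ℝ) else 0) = 0
      rw [if_neg (by omega)]
    · intro h
      have := congrFun h ⟨1, by omega⟩
      simp at this
  have hlow : ∀ r ∈ Sn, ε ≤ r := by
    rintro r ⟨f, hb, h0, rfl⟩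
    exact (key_bounds hn hp f hb h0).1
  have hlpos : 0 < lambda1 (pathG n) p := by
    rw [hl1]
    exact lt_of_lt_of_le hεpos (le_csInf hne hlow)
  have hbdd : BddBelow Sm := by
    refine ⟨0, ?_⟩
    rintro r ⟨f, _, _, rfl⟩
    exact rayleigh_nonneg _ _ _
  have hkey : ∀ r ∈ Sn, sInf Sm ≤ c * r := by
    rintro r ⟨f, hbnd, h0, rfl⟩
    obtain ⟨g, hg1, hg2, hg3⟩ := (key_bounds hn hp f hbnd h0).2
    exact le_trans (csInf_le hbdd ⟨g, hg1, hg2, rfl⟩) hg3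
  have hstep : lambda1 (pathG (n+1)) p ≤ c * lambda1 (pathG n) p := by
    rw [hl1, hl2]
    have h1 : ∀ r ∈ Sn, sInf Sm / c ≤ r := by
      intro r hr
      rw [div_le_iff₀ hcpos]
      rw [mul_comm]
      exact hkey r hr
    have h2 : sInf Sm / c ≤ sInf Sn := le_csInf hne h1
    rw [div_le_iff₀ hcpos] at h2
    linarith [h2]
  calc lambda1 (pathG (n+1)) p ≤ c * lambda1 (pathG n) p := hstep
    _ < lambda1 (pathG n) p := by
        nlinarith [hlpos, hc1, hcpos]
end

section
/- For every integer n ≥ 4 and every real p > 1, λ_{1,p}(P_{n+1}) > λ_{1,p}(T_{n,3}), where P_{n+1} denotes the path graph on n+1 vertices. -/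
attribute [local instance] Classical.propDecidable

open Finset

open Fin.NatCast

namespace PTaux

lemma ite_or_add {P Q : Prop} [Decidable P] [Decidable Q] (h : ¬(P ∧ Q)) (a : ℝ) :
    (if P ∨ Q then a else 0) = (if P then a else 0) + (if Q then a else 0) := by
  by_cases hP : P
  · have hQ : ¬Q := fun hQ => h ⟨hP, hQ⟩
    simp [hP, hQ]
  · by_cases hQ : Q <;> simp [hP, hQ]

lemma sum_ite_val {N : ℕ} (c : ℕ) (hc : c < N) (v : Fin N → ℝ) :
    (∑ x : Fin N, if x.val = c then v x else 0) = v ⟨c, hc⟩ := by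
  have h1 : ∀ x : Fin N, (x.val = c ↔ x = ⟨c, hc⟩) := by
    intro x
    constructor
    · intro h; exact Fin.ext h
    · intro h; rw [h]
  calc (∑ x : Fin N, if x.val = c then v x else 0)
      = ∑ x : Fin N, if x = ⟨c, hc⟩ then v x else 0 :=
        Finset.sum_congr rfl fun x _ => if_congr (h1 x) rfl rfl
    _ = v ⟨c, hc⟩ := by rw [Finset.sum_ite_eq' univ (⟨c, hc⟩ : Fin N) v]; simp

lemma castEq {N : ℕ} [NeZero N] {c : ℕ} (hc : c < N) : (↑c : Fin N) = ⟨c, hc⟩ :=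
  Fin.ext (Fin.val_cast_of_lt hc)

lemma succ_sum (N : ℕ) (w : Fin (N+1) → Fin (N+1) → ℝ) :
    (∑ x : Fin (N+1), ∑ y : Fin (N+1), if y.val = x.val + 1 then w x y else 0)
      = ∑ k ∈ Finset.range N, w ↑k ↑(k+1) := by
  have key : ∀ x : Fin (N+1), (∑ y : Fin (N+1), if y.val = x.val + 1 then w x y else 0)
      = (fun k : ℕ => if k < N then w ↑k ↑(k+1) else 0) x.val := by
    intro x
    by_cases hx : x.val < N
    · have hlt : x.val + 1 < N + 1 := by omega
      rw [sum_ite_val (x.val + 1) hlt (fun y => w x y)]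
      show w x ⟨x.val + 1, hlt⟩ = if x.val < N then w ↑x.val ↑(x.val+1) else 0
      rw [if_pos hx, Fin.cast_val_eq_self x, castEq hlt]
    · show _ = if x.val < N then w ↑x.val ↑(x.val+1) else 0
      rw [if_neg hx, Finset.sum_eq_zero]
      intro y _
      have : ¬(y.val = x.val + 1) := by have := y.isLt; have := x.isLt; omega
      rw [if_neg this]
  rw [Finset.sum_congr rfl fun x _ => key x]
  rw [Fin.sum_univ_eq_sum_range (fun k : ℕ => if k < N then w ↑k ↑(k+1) else 0) (N+1)]
  rw [Finset.sum_range_succ]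
  simp only [lt_irrefl, if_neg, not_false_iff, add_zero, if_false]
  refine Finset.sum_congr rfl fun k hk => ?_
  rw [if_pos (Finset.mem_range.mp hk)]

lemma pair_sum {N : ℕ} [NeZero N] (a b : ℕ) (ha : a < N) (hb : b < N) (w : Fin N → Fin N → ℝ) :
    (∑ x : Fin N, ∑ y : Fin N, if x.val = a ∧ y.val = b then w x y else 0)
      = w ↑a ↑b := by
  have inner : ∀ x : Fin N, (∑ y : Fin N, if x.val = a ∧ y.val = b then w x y else 0)
      = (if x.val = a then w x ↑b else 0) := by
    intro x
    by_cases hx : x.val = a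
    · simp only [hx, true_and, if_pos]
      rw [sum_ite_val b hb (fun y => w x y), castEq hb]
    · simp only [hx, false_and, if_false, if_neg, not_false_iff]
      exact Finset.sum_eq_zero fun y _ => rfl
  rw [Finset.sum_congr rfl fun x _ => inner x, sum_ite_val a ha (fun x => w x ↑b), castEq ha]


lemma path_adj (n : ℕ) (x y : Fin (n+1)) :
    (pathG (n+1)).Adj x y ↔ (y.val = x.val + 1 ∨ x.val = y.val + 1) := by
  rw [pathG, SimpleGraph.fromRel_adj]
  constructor
  · rintro ⟨-, h⟩; exact h
  · intro h
    refine ⟨?_, h⟩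
    rintro rfl
    rcases h with h | h <;> omega

lemma tadpole_adj (n : ℕ) (x y : Fin n) :
    (tadpole n 3).Adj x y ↔
      ((y.val = x.val + 1 ∨ x.val = y.val + 1) ∨
        ((x.val = 0 ∧ y.val = 2) ∨ (y.val = 0 ∧ x.val = 2))) := by
  rw [tadpole, SimpleGraph.fromRel_adj]
  have h31 : (3:ℕ) - 1 = 2 := rfl
  rw [h31]
  constructor
  · rintro ⟨hne, h⟩
    tauto
  · intro h
    constructor
    · intro heq
      subst heq
      rcases h with (h | h) | (h | h) <;> omega
    · tauto

lemma path_double_sum (n : ℕ) (w : Fin (n+1) → Fin (n+1) → ℝ) :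
    (∑ x : Fin (n+1), ∑ y : Fin (n+1), if (pathG (n+1)).Adj x y then w x y else 0)
      = ∑ k ∈ Finset.range n, (w ↑k ↑(k+1) + w ↑(k+1) ↑k) := by
  have step : ∀ x y : Fin (n+1), (if (pathG (n+1)).Adj x y then w x y else 0)
      = (if y.val = x.val + 1 then w x y else 0) + (if x.val = y.val + 1 then w x y else 0) := by
    intro x y
    rw [if_congr (path_adj n x y) rfl rfl]
    exact ite_or_add (by omega) (w x y)
  calc (∑ x : Fin (n+1), ∑ y : Fin (n+1), if (pathG (n+1)).Adj x y then w x y else 0)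
      = ∑ x : Fin (n+1), ∑ y : Fin (n+1),
          ((if y.val = x.val + 1 then w x y else 0) + (if x.val = y.val + 1 then w x y else 0)) :=
        Finset.sum_congr rfl fun x _ => Finset.sum_congr rfl fun y _ => step x y
    _ = (∑ x : Fin (n+1), ∑ y : Fin (n+1), if y.val = x.val + 1 then w x y else 0)
        + (∑ x : Fin (n+1), ∑ y : Fin (n+1), if x.val = y.val + 1 then w x y else 0) := by
        rw [← Finset.sum_add_distrib]
        exact Finset.sum_congr rfl fun x _ => by rw [← Finset.sum_add_distrib]
    _ = (∑ k ∈ Finset.range n, w ↑k ↑(k+1)) + (∑ k ∈ Finset.range n, w ↑(k+1) ↑k) := by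
        rw [succ_sum n w]
        congr 1
        rw [Finset.sum_comm]
        exact succ_sum n (fun a b => w b a)
    _ = ∑ k ∈ Finset.range n, (w ↑k ↑(k+1) + w ↑(k+1) ↑k) := by rw [← Finset.sum_add_distrib]

lemma tadpole_double_sum (n : ℕ) [NeZero n] (hn : 4 ≤ n) (w : Fin n → Fin n → ℝ) :
    (∑ x : Fin n, ∑ y : Fin n, if (tadpole n 3).Adj x y then w x y else 0)
      = (∑ k ∈ Finset.range (n-1), (w ↑k ↑(k+1) + w ↑(k+1) ↑k))
        + (w ↑(0:ℕ) ↑(2:ℕ) + w ↑(2:ℕ) ↑(0:ℕ)) := by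
  obtain ⟨N, rfl⟩ : ∃ N, n = N + 1 := ⟨n - 1, by omega⟩
  have hN : 3 ≤ N := by omega
  have hrange : (N + 1) - 1 = N := by omega
  rw [hrange]
  have step : ∀ x y : Fin (N+1), (if (tadpole (N+1) 3).Adj x y then w x y else 0)
      = ((if y.val = x.val + 1 then w x y else 0) + (if x.val = y.val + 1 then w x y else 0))
        + ((if x.val = 0 ∧ y.val = 2 then w x y else 0)
            + (if y.val = 0 ∧ x.val = 2 then w x y else 0)) := by
    intro x y
    rw [if_congr (tadpole_adj (N+1) x y) rfl rfl]
    rw [ite_or_add (by rintro ⟨h1 | h1, ⟨h2, h3⟩ | ⟨h2, h3⟩⟩ <;> omega) (w x y)]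
    congr 1
    · exact ite_or_add (by omega) (w x y)
    · exact ite_or_add (by rintro ⟨⟨h1, h2⟩, h3, h4⟩; omega) (w x y)
  calc (∑ x : Fin (N+1), ∑ y : Fin (N+1), if (tadpole (N+1) 3).Adj x y then w x y else 0)
      = ∑ x : Fin (N+1), ∑ y : Fin (N+1),
        (((if y.val = x.val + 1 then w x y else 0) + (if x.val = y.val + 1 then w x y else 0))
        + ((if x.val = 0 ∧ y.val = 2 then w x y else 0)
            + (if y.val = 0 ∧ x.val = 2 then w x y else 0))) :=
        Finset.sum_congr rfl fun x _ => Finset.sum_congr rfl fun y _ => step x y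
    _ = (((∑ x : Fin (N+1), ∑ y : Fin (N+1), if y.val = x.val + 1 then w x y else 0)
        + (∑ x : Fin (N+1), ∑ y : Fin (N+1), if x.val = y.val + 1 then w x y else 0))
        + ((∑ x : Fin (N+1), ∑ y : Fin (N+1), if x.val = 0 ∧ y.val = 2 then w x y else 0)
        + (∑ x : Fin (N+1), ∑ y : Fin (N+1), if y.val = 0 ∧ x.val = 2 then w x y else 0))) := by
        simp only [← Finset.sum_add_distrib]
    _ = ((∑ k ∈ Finset.range N, w ↑k ↑(k+1)) + (∑ k ∈ Finset.range N, w ↑(k+1) ↑k))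
        + (w ↑(0:ℕ) ↑(2:ℕ) + w ↑(2:ℕ) ↑(0:ℕ)) := by
        congr 1
        · congr 1
          · exact succ_sum N w
          · rw [Finset.sum_comm]; exact succ_sum N (fun a b => w b a)
        · congr 1
          · exact pair_sum 0 2 (by omega) (by omega) w
          · rw [Finset.sum_comm]
            exact pair_sum 0 2 (by omega) (by omega) (fun a b => w b a)
    _ = (∑ k ∈ Finset.range N, (w ↑k ↑(k+1) + w ↑(k+1) ↑k))
        + (w ↑(0:ℕ) ↑(2:ℕ) + w ↑(2:ℕ) ↑(0:ℕ)) := by rw [← Finset.sum_add_distrib]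


lemma energy_path (n : ℕ) (p : ℝ) (f : Fin (n+1) → ℝ) :
    energy (pathG (n+1)) p f = ∑ k ∈ Finset.range n, |f ↑k - f ↑(k+1)| ^ p := by
  rw [energy, path_double_sum n (fun x y => |f x - f y| ^ p)]
  have h1 : ∀ k : ℕ, (|f ↑k - f ↑(k+1)| ^ p + |f ↑(k+1) - f ↑k| ^ p)
      = 2 * |f ↑k - f ↑(k+1)| ^ p := by
    intro k
    rw [abs_sub_comm (f ↑(k+1)) (f ↑k)]
    ring
  rw [Finset.sum_congr rfl fun k _ => h1 k, ← Finset.mul_sum]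
  ring

lemma deg_eq_sum (V : Type*) [Fintype V] (G : SimpleGraph V) (x : V) (c : ℝ) :
    c * (deg G x : ℝ) = ∑ y : V, if G.Adj x y then c else 0 := by
  rw [deg, Finset.card_filter]
  rw [Nat.cast_sum]
  rw [Finset.mul_sum]
  refine Finset.sum_congr rfl fun y _ => ?_
  by_cases h : G.Adj x y <;> simp [h]

lemma pnorm_path (n : ℕ) (p : ℝ) (f : Fin (n+1) → ℝ) :
    pnorm (pathG (n+1)) p f = ∑ k ∈ Finset.range n, (|f ↑k| ^ p + |f ↑(k+1)| ^ p) := by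
  rw [pnorm]
  rw [Finset.sum_congr rfl fun x _ => deg_eq_sum (Fin (n+1)) (pathG (n+1)) x (|f x| ^ p)]
  exact path_double_sum n (fun x y => |f x| ^ p)

lemma energy_tadpole (n : ℕ) [NeZero n] (hn : 4 ≤ n) (p : ℝ) (f : Fin n → ℝ) :
    energy (tadpole n 3) p f
      = (∑ k ∈ Finset.range (n-1), |f ↑k - f ↑(k+1)| ^ p) + |f ↑(0:ℕ) - f ↑(2:ℕ)| ^ p := by
  rw [energy, tadpole_double_sum n hn (fun x y => |f x - f y| ^ p)]
  have h1 : ∀ k : ℕ, (|f ↑k - f ↑(k+1)| ^ p + |f ↑(k+1) - f ↑k| ^ p)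
      = 2 * |f ↑k - f ↑(k+1)| ^ p := by
    intro k
    rw [abs_sub_comm (f ↑(k+1)) (f ↑k)]
    ring
  rw [Finset.sum_congr rfl fun k _ => h1 k]
  rw [abs_sub_comm (f ↑(2:ℕ)) (f ↑(0:ℕ)), ← Finset.mul_sum]
  ring

lemma pnorm_tadpole (n : ℕ) [NeZero n] (hn : 4 ≤ n) (p : ℝ) (f : Fin n → ℝ) :
    pnorm (tadpole n 3) p f
      = (∑ k ∈ Finset.range (n-1), (|f ↑k| ^ p + |f ↑(k+1)| ^ p))
        + (|f ↑(0:ℕ)| ^ p + |f ↑(2:ℕ)| ^ p) := by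
  rw [pnorm]
  rw [Finset.sum_congr rfl fun x _ => deg_eq_sum (Fin n) (tadpole n 3) x (|f x| ^ p)]
  exact tadpole_double_sum n hn (fun x y => |f x| ^ p)

lemma path_deg_one_iff (n : ℕ) (hn : 1 ≤ n) (x : Fin (n+1)) :
    deg (pathG (n+1)) x = 1 ↔ (x.val = 0 ∨ x.val = n) := by
  constructor
  · intro hdeg
    by_contra hcon
    push_neg at hcon
    obtain ⟨hx0, hxn⟩ := hcon
    have hxlt := x.isLt
    have hsub : ({⟨x.val - 1, by omega⟩, ⟨x.val + 1, by omega⟩} : Finset (Fin (n+1)))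
        ⊆ Finset.univ.filter (fun y => (pathG (n+1)).Adj x y) := by
      intro y hy
      rw [Finset.mem_insert, Finset.mem_singleton] at hy
      rw [Finset.mem_filter]
      refine ⟨Finset.mem_univ _, ?_⟩
      rcases hy with rfl | rfl
      · rw [path_adj]
        right
        show x.val = (x.val - 1) + 1
        omega
      · rw [path_adj]
        left
        rfl
    have hcard : 2 ≤ deg (pathG (n+1)) x := by
      rw [deg]
      calc 2 = ({⟨x.val - 1, by omega⟩, ⟨x.val + 1, by omega⟩} : Finset (Fin (n+1))).card := by
              rw [Finset.card_insert_of_notMem, Finset.card_singleton]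
              rw [Finset.mem_singleton]
              intro hcontra
              simp only [Fin.mk.injEq] at hcontra
              omega
        _ ≤ _ := Finset.card_le_card hsub
    omega
  · intro hx
    rw [deg]
    rcases hx with hx | hx
    · have : Finset.univ.filter (fun y => (pathG (n+1)).Adj x y)
          = {(⟨1, by omega⟩ : Fin (n+1))} := by
        ext y
        rw [Finset.mem_filter, Finset.mem_singleton, path_adj, Fin.ext_iff]
        have hv : (⟨1, by omega⟩ : Fin (n+1)).val = 1 := rfl
        rw [hv]
        have := y.isLt
        constructor
        · rintro ⟨-, h | h⟩ <;> omega
        · intro h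
          refine ⟨Finset.mem_univ _, Or.inl (by omega)⟩
      rw [this, Finset.card_singleton]
    · have : Finset.univ.filter (fun y => (pathG (n+1)).Adj x y)
          = {(⟨n - 1, by omega⟩ : Fin (n+1))} := by
        ext y
        rw [Finset.mem_filter, Finset.mem_singleton, path_adj, Fin.ext_iff]
        have hv : (⟨n - 1, by omega⟩ : Fin (n+1)).val = n - 1 := rfl
        rw [hv]
        have := y.isLt
        constructor
        · rintro ⟨-, h | h⟩ <;> omega
        · intro h
          refine ⟨Finset.mem_univ _, Or.inr (by omega)⟩
      rw [this, Finset.card_singleton]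

lemma tadpole_deg_ne_one (n : ℕ) (hn : 4 ≤ n) (x : Fin n) (hx : x.val ≠ n - 1) :
    deg (tadpole n 3) x ≠ 1 := by
  have hxlt := x.isLt
  have key : ∃ y z : Fin n, y ≠ z ∧ (tadpole n 3).Adj x y ∧ (tadpole n 3).Adj x z := by
    by_cases h0 : x.val = 0
    · refine ⟨⟨1, by omega⟩, ⟨2, by omega⟩, ?_, ?_, ?_⟩
      · intro hcontra
        simp only [Fin.mk.injEq] at hcontra
        omega
      · rw [tadpole_adj]; left; left; show (1:ℕ) = x.val + 1; omega
      · rw [tadpole_adj]; right; left; exact ⟨h0, rfl⟩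
    · refine ⟨⟨x.val - 1, by omega⟩, ⟨x.val + 1, by omega⟩, ?_, ?_, ?_⟩
      · intro hcontra
        simp only [Fin.mk.injEq] at hcontra
        omega
      · rw [tadpole_adj]; left; right; show x.val = (x.val - 1) + 1; omega
      · rw [tadpole_adj]; left; left; rfl
  obtain ⟨y, z, hyz, hy, hz⟩ := key
  have hsub : ({y, z} : Finset (Fin n)) ⊆ Finset.univ.filter (fun u => (tadpole n 3).Adj x u) := by
    intro u hu
    rw [Finset.mem_insert, Finset.mem_singleton] at hu
    rw [Finset.mem_filter]
    rcases hu with rfl | rfl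
    · exact ⟨Finset.mem_univ _, hy⟩
    · exact ⟨Finset.mem_univ _, hz⟩
  have hcard : 2 ≤ deg (tadpole n 3) x := by
    rw [deg]
    calc 2 = ({y, z} : Finset (Fin n)).card := by
            rw [Finset.card_insert_of_notMem (by rwa [Finset.mem_singleton]), Finset.card_singleton]
      _ ≤ _ := Finset.card_le_card hsub
  omega


lemma energy_nonneg {V : Type*} [Fintype V] (G : SimpleGraph V) (p : ℝ) (f : V → ℝ) :
    0 ≤ energy G p f := by
  apply div_nonneg _ (by norm_num)
  apply Finset.sum_nonneg; intro x _
  apply Finset.sum_nonneg; intro y _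
  by_cases h : G.Adj x y
  · rw [if_pos h]; exact Real.rpow_nonneg (abs_nonneg _) p
  · rw [if_neg h]

lemma pnorm_nonneg {V : Type*} [Fintype V] (G : SimpleGraph V) (p : ℝ) (f : V → ℝ) :
    0 ≤ pnorm G p f := by
  apply Finset.sum_nonneg; intro x _
  exact mul_nonneg (Real.rpow_nonneg (abs_nonneg _) p) (Nat.cast_nonneg _)

lemma rayleigh_nonneg {V : Type*} [Fintype V] (G : SimpleGraph V) (p : ℝ) (f : V → ℝ) :
    0 ≤ rayleigh G p f :=
  div_nonneg (energy_nonneg G p f) (pnorm_nonneg G p f)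

lemma pnorm_path_pos (n : ℕ) (hn : 1 ≤ n) {p : ℝ} (hp : 0 < p) (f : Fin (n+1) → ℝ)
    (hf : f ≠ 0) : 0 < pnorm (pathG (n+1)) p f := by
  obtain ⟨x, hx⟩ : ∃ x, f x ≠ 0 := Function.ne_iff.mp hf
  rw [pnorm_path]
  apply Finset.sum_pos'
  · intro k _
    exact add_nonneg (Real.rpow_nonneg (abs_nonneg _) p) (Real.rpow_nonneg (abs_nonneg _) p)
  · have hxlt := x.isLt
    refine ⟨min x.val (n-1), Finset.mem_range.mpr (by omega), ?_⟩
    by_cases hc : x.val < n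
    · have hmin : min x.val (n-1) = x.val := by omega
      rw [hmin, Fin.cast_val_eq_self x]
      have h1 : 0 < |f x| ^ p := Real.rpow_pos_of_pos (abs_pos.mpr hx) p
      have h2 : 0 ≤ |f ↑(x.val+1)| ^ p := Real.rpow_nonneg (abs_nonneg _) p
      linarith
    · have hmin : min x.val (n-1) = n - 1 := by omega
      rw [hmin]
      have hn1 : n - 1 + 1 = n := by omega
      rw [hn1]
      have hxeq : (↑n : Fin (n+1)) = x := by
        apply Fin.ext
        rw [Fin.val_cast_of_lt (by omega)]
        omega
      rw [hxeq]
      have h1 : 0 < |f x| ^ p := Real.rpow_pos_of_pos (abs_pos.mpr hx) p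
      have h2 : 0 ≤ |f ↑(n-1)| ^ p := Real.rpow_nonneg (abs_nonneg _) p
      linarith

lemma energy_path_reflect (n : ℕ) (p : ℝ) (f : Fin (n+1) → ℝ) :
    energy (pathG (n+1)) p (fun v => f ↑(n - v.val)) = energy (pathG (n+1)) p f := by
  rw [energy_path, energy_path]
  have step1 : ∀ k ∈ Finset.range n,
      |(fun v : Fin (n+1) => f ↑(n - v.val)) ↑k
        - (fun v : Fin (n+1) => f ↑(n - v.val)) ↑(k+1)| ^ p
        = |f ↑(n - k) - f ↑(n - (k+1))| ^ p := by
    intro k hk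
    have hk' := Finset.mem_range.mp hk
    simp only
    rw [Fin.val_cast_of_lt (by omega : k < n + 1), Fin.val_cast_of_lt (by omega : k + 1 < n + 1)]
  rw [Finset.sum_congr rfl step1]
  have hrefl := Finset.sum_range_reflect (fun j : ℕ => |f ↑(n - j) - f ↑(n - (j+1))| ^ p) n
  rw [← hrefl]
  refine Finset.sum_congr rfl fun j hj => ?_
  have hj' := Finset.mem_range.mp hj
  have e1 : n - (n - 1 - j) = j + 1 := by omega
  have e2 : n - ((n - 1 - j) + 1) = j := by omega
  rw [e1, e2, abs_sub_comm]

lemma pnorm_path_reflect (n : ℕ) (p : ℝ) (f : Fin (n+1) → ℝ) :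
    pnorm (pathG (n+1)) p (fun v => f ↑(n - v.val)) = pnorm (pathG (n+1)) p f := by
  rw [pnorm_path, pnorm_path]
  have step1 : ∀ k ∈ Finset.range n,
      (|(fun v : Fin (n+1) => f ↑(n - v.val)) ↑k| ^ p
        + |(fun v : Fin (n+1) => f ↑(n - v.val)) ↑(k+1)| ^ p)
        = (|f ↑(n - k)| ^ p + |f ↑(n - (k+1))| ^ p) := by
    intro k hk
    have hk' := Finset.mem_range.mp hk
    simp only
    rw [Fin.val_cast_of_lt (by omega : k < n + 1), Fin.val_cast_of_lt (by omega : k + 1 < n + 1)]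
  rw [Finset.sum_congr rfl step1]
  have hrefl := Finset.sum_range_reflect (fun j : ℕ => |f ↑(n - j)| ^ p + |f ↑(n - (j+1))| ^ p) n
  rw [← hrefl]
  refine Finset.sum_congr rfl fun j hj => ?_
  have hj' := Finset.mem_range.mp hj
  have e1 : n - (n - 1 - j) = j + 1 := by omega
  have e2 : n - ((n - 1 - j) + 1) = j := by omega
  rw [e1, e2, add_comm]

lemma telescope (n : ℕ) (f : Fin (n+1) → ℝ) (h0 : f ↑(0:ℕ) = 0) :
    ∀ m, m ≤ n → |f ↑m| ≤ ∑ k ∈ Finset.range m, |f ↑(k+1) - f ↑k| := by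
  intro m
  induction m with
  | zero => intro _; rw [h0]; simp
  | succ m ih =>
    intro hm
    have h1 := ih (by omega)
    rw [Finset.sum_range_succ]
    have h2 : |f ↑(m+1)| ≤ |f ↑m| + |f ↑(m+1) - f ↑m| := by
      have h3 := abs_add_le (f ↑m) (f ↑(m+1) - f ↑m)
      have e : f ↑m + (f ↑(m+1) - f ↑m) = f ↑(m+1) := by ring
      rw [e] at h3
      exact h3
    linarith

lemma sum_rpow_bound {p : ℝ} (hp : 1 ≤ p) (m : ℕ) (a : ℕ → ℝ) (ha : ∀ k, 0 ≤ a k) :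
    (∑ k ∈ Finset.range m, a k) ^ p ≤ (m : ℝ) ^ (p - 1) * ∑ k ∈ Finset.range m, (a k) ^ p := by
  rcases Nat.eq_zero_or_pos m with rfl | hm
  · simp [Real.zero_rpow (by linarith : p ≠ 0)]
  · have hm' : (0:ℝ) < m := by exact_mod_cast hm
    have hw : ∀ k ∈ Finset.range m, (0:ℝ) ≤ (m:ℝ)⁻¹ := fun _ _ => by positivity
    have hw' : ∑ _k ∈ Finset.range m, (m:ℝ)⁻¹ = 1 := by
      rw [Finset.sum_const, Finset.card_range, nsmul_eq_mul]
      field_simp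
    have hz : ∀ k ∈ Finset.range m, 0 ≤ a k := fun k _ => ha k
    have H := Real.rpow_arith_mean_le_arith_mean_rpow (Finset.range m)
        (fun _ => (m:ℝ)⁻¹) a hw hw' hz hp
    rw [← Finset.mul_sum, ← Finset.mul_sum] at H
    rw [Real.mul_rpow (by positivity) (Finset.sum_nonneg hz)] at H
    rw [Real.inv_rpow (le_of_lt hm') p] at H
    have hmp : (0:ℝ) < (m:ℝ) ^ p := Real.rpow_pos_of_pos hm' p
    have h2 : (∑ k ∈ Finset.range m, a k) ^ p
        ≤ (m:ℝ) ^ p * ((m:ℝ)⁻¹ * ∑ k ∈ Finset.range m, a k ^ p) := by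
      have h2a : (∑ k ∈ Finset.range m, a k) ^ p
          = (m:ℝ) ^ p * (((m:ℝ) ^ p)⁻¹ * (∑ k ∈ Finset.range m, a k) ^ p) := by
        field_simp
      rw [h2a]
      exact mul_le_mul_of_nonneg_left H (le_of_lt hmp)
    have h3 : (m:ℝ) ^ p * ((m:ℝ)⁻¹ * ∑ k ∈ Finset.range m, a k ^ p)
        = (m:ℝ) ^ (p-1) * ∑ k ∈ Finset.range m, a k ^ p := by
      rw [← mul_assoc]
      congr 1
      rw [Real.rpow_sub hm', Real.rpow_one]
      field_simp
    exact h2.trans_eq h3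

lemma rayleigh_path_lower (n : ℕ) (hn : 1 ≤ n) {p : ℝ} (hp : 1 < p) (f : Fin (n+1) → ℝ)
    (hf : f ≠ 0) (h0 : f ↑(0:ℕ) = 0) :
    1 / (2 * n * (n:ℝ) ^ (p-1)) ≤ rayleigh (pathG (n+1)) p f := by
  obtain ⟨m₀, -, hmax⟩ := Finset.exists_max_image Finset.univ (fun x : Fin (n+1) => |f x|)
    ⟨0, Finset.mem_univ 0⟩
  set M := |f m₀| with hM
  have hMnn : 0 ≤ M := abs_nonneg _
  have hp0 : (0:ℝ) < p := by linarith
  have hNle : pnorm (pathG (n+1)) p f ≤ 2 * n * M ^ p := by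
    rw [pnorm_path]
    have hb : ∀ k ∈ Finset.range n, |f ↑k| ^ p + |f ↑(k+1)| ^ p ≤ M ^ p + M ^ p := by
      intro k _
      have h1 : |f ↑k| ^ p ≤ M ^ p :=
        Real.rpow_le_rpow (abs_nonneg _) (hmax _ (Finset.mem_univ _)) (le_of_lt hp0)
      have h2 : |f ↑(k+1)| ^ p ≤ M ^ p :=
        Real.rpow_le_rpow (abs_nonneg _) (hmax _ (Finset.mem_univ _)) (le_of_lt hp0)
      linarith
    calc (∑ k ∈ Finset.range n, (|f ↑k| ^ p + |f ↑(k+1)| ^ p))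
        ≤ ∑ _k ∈ Finset.range n, (M ^ p + M ^ p) := Finset.sum_le_sum hb
      _ = 2 * n * M ^ p := by
          rw [Finset.sum_const, Finset.card_range, nsmul_eq_mul]
          ring
  have hME : M ^ p ≤ (n:ℝ) ^ (p-1) * energy (pathG (n+1)) p f := by
    have hm₀lt := m₀.isLt
    have htel := telescope n f h0 m₀.val (by omega)
    have hMm : M = |f ↑(m₀.val)| := by rw [Fin.cast_val_eq_self]
    have hS : M ≤ ∑ k ∈ Finset.range m₀.val, |f ↑(k+1) - f ↑k| := by rw [hMm]; exact htel
    have h1 : M ^ p ≤ (∑ k ∈ Finset.range m₀.val, |f ↑(k+1) - f ↑k|) ^ p :=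
      Real.rpow_le_rpow hMnn hS (le_of_lt hp0)
    have h2 := sum_rpow_bound (le_of_lt hp) m₀.val (fun k => |f ↑(k+1) - f ↑k|)
      (fun k => abs_nonneg _)
    have h3 : ∑ k ∈ Finset.range m₀.val, |f ↑(k+1) - f ↑k| ^ p
        ≤ ∑ k ∈ Finset.range n, |f ↑(k+1) - f ↑k| ^ p :=
      Finset.sum_le_sum_of_subset_of_nonneg (Finset.range_subset_range.mpr (by omega))
        (fun k _ _ => Real.rpow_nonneg (abs_nonneg _) p)
    have h4 : ∑ k ∈ Finset.range n, |f ↑(k+1) - f ↑k| ^ p = energy (pathG (n+1)) p f := by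
      rw [energy_path]
      exact Finset.sum_congr rfl fun k _ => by rw [abs_sub_comm]
    have h5 : ((m₀.val:ℝ)) ^ (p-1) ≤ (n:ℝ) ^ (p-1) := by
      apply Real.rpow_le_rpow (Nat.cast_nonneg _) _ (by linarith)
      exact_mod_cast (by omega : m₀.val ≤ n)
    calc M ^ p ≤ (m₀.val:ℝ) ^ (p-1) * ∑ k ∈ Finset.range m₀.val, |f ↑(k+1) - f ↑k| ^ p :=
          h1.trans h2
      _ ≤ (n:ℝ) ^ (p-1) * ∑ k ∈ Finset.range n, |f ↑(k+1) - f ↑k| ^ p := by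
          apply mul_le_mul h5 h3
          · exact Finset.sum_nonneg fun k _ => Real.rpow_nonneg (abs_nonneg _) p
          · exact Real.rpow_nonneg (Nat.cast_nonneg _) _
      _ = (n:ℝ) ^ (p-1) * energy (pathG (n+1)) p f := by rw [h4]
  have hN : 0 < pnorm (pathG (n+1)) p f := pnorm_path_pos n hn hp0 f hf
  have hnR : (0:ℝ) < n := by exact_mod_cast hn
  have hD : (0:ℝ) < 2 * n * (n:ℝ) ^ (p-1) := by
    have := Real.rpow_pos_of_pos hnR (p-1)
    positivity
  have hbound : pnorm (pathG (n+1)) p f ≤ (2 * n * (n:ℝ) ^ (p-1)) * energy (pathG (n+1)) p f := by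
    calc pnorm (pathG (n+1)) p f ≤ 2 * n * M ^ p := hNle
      _ ≤ 2 * n * ((n:ℝ) ^ (p-1) * energy (pathG (n+1)) p f) := by
          apply mul_le_mul_of_nonneg_left hME
          positivity
      _ = (2 * n * (n:ℝ) ^ (p-1)) * energy (pathG (n+1)) p f := by ring
  rw [rayleigh, le_div_iff₀ hN]
  calc 1 / (2 * n * (n:ℝ) ^ (p-1)) * pnorm (pathG (n+1)) p f
      ≤ 1 / (2 * n * (n:ℝ) ^ (p-1)) * ((2 * n * (n:ℝ) ^ (p-1)) * energy (pathG (n+1)) p f) := by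
        apply mul_le_mul_of_nonneg_left hbound
        positivity
    _ = energy (pathG (n+1)) p f := by field_simp


lemma transplant (n : ℕ) (hn : 4 ≤ n) {p : ℝ} (hp : 1 < p) (g : Fin (n+1) → ℝ)
    (hnn : ∀ x, 0 ≤ g x) (hg0 : g ↑(0:ℕ) = 0) (hgn : g ↑n = 0)
    (m : ℕ) (hm3 : 3 ≤ m) (hmn : m ≤ n)
    (hmax : ∀ x, g x ≤ g ↑m) (hpos : 0 < g ↑m) :
    ∃ h : Fin n → ℝ,
      (∀ x, deg (tadpole n 3) x = 1 → h x = 0) ∧ h ≠ 0 ∧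
      energy (tadpole n 3) p h ≤ energy (pathG (n+1)) p g ∧
      pnorm (pathG (n+1)) p g + (g ↑m) ^ p ≤ pnorm (tadpole n 3) p h := by
  haveI : NeZero n := ⟨by omega⟩
  have hp0 : (0:ℝ) < p := by linarith
  have hpne : p ≠ 0 := by linarith
  have happ : ∀ k : ℕ, k < n → (fun v : Fin n => g ↑(max (v.val+1) m)) ↑k
      = g ↑(max (k+1) m) := by
    intro k hk
    simp only
    rw [Fin.val_cast_of_lt hk]
  refine ⟨fun v => g ↑(max (v.val+1) m), ?_, ?_, ?_, ?_⟩
  · -- boundary condition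
    intro x hx
    have hxval : x.val = n - 1 := by
      by_contra h'
      exact tadpole_deg_ne_one n hn x h' hx
    show g ↑(max (x.val+1) m) = 0
    rw [hxval, show (n-1) + 1 = n from by omega, max_eq_left hmn]
    exact hgn
  · -- nonzero
    intro hzero
    have h0 := congrFun hzero (↑(0:ℕ) : Fin n)
    rw [Fin.val_cast_of_lt (show (0:ℕ) < n from by omega)] at h0
    rw [show (0+1) ⊔ m = m from max_eq_right (by omega)] at h0
    simp only [Pi.zero_apply] at h0
    exact hpos.ne' h0
  · -- energy bound
    rw [energy_tadpole n hn, energy_path]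
    have hextra : |(fun v : Fin n => g ↑(max (v.val+1) m)) ↑(0:ℕ)
        - (fun v : Fin n => g ↑(max (v.val+1) m)) ↑(2:ℕ)| ^ p = 0 := by
      rw [happ 0 (by omega), happ 2 (by omega)]
      rw [show max (0+1) m = m from max_eq_right (by omega)]
      rw [show max (2+1) m = m from max_eq_right (by omega)]
      rw [sub_self, abs_zero, Real.zero_rpow hpne]
    rw [hextra, add_zero]
    have tail : ∀ k ∈ Finset.range (n-1),
        |(fun v : Fin n => g ↑(max (v.val+1) m)) ↑k
          - (fun v : Fin n => g ↑(max (v.val+1) m)) ↑(k+1)| ^ p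
        ≤ |g ↑(k+1) - g ↑(k+1+1)| ^ p := by
      intro k hk
      have hk' := Finset.mem_range.mp hk
      rw [happ k (by omega), happ (k+1) (by omega)]
      by_cases hc : k + 1 < m
      · rw [show max (k+1) m = m from max_eq_right (by omega),
            show max (k+1+1) m = m from max_eq_right (by omega)]
        rw [sub_self, abs_zero, Real.zero_rpow hpne]
        exact Real.rpow_nonneg (abs_nonneg _) p
      · rw [show max (k+1) m = k+1 from max_eq_left (by omega),
            show max (k+1+1) m = k+1+1 from max_eq_left (by omega)]
    refine le_trans (Finset.sum_le_sum tail) ?_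
    have hr : Finset.range n = Finset.range ((n-1)+1) := by
      rw [show (n-1)+1 = n from by omega]
    have hsucc : ∑ k ∈ Finset.range n, |g ↑k - g ↑(k+1)| ^ p
        = (∑ k ∈ Finset.range (n-1), |g ↑(k+1) - g ↑(k+1+1)| ^ p)
          + |g ↑(0:ℕ) - g ↑((0:ℕ)+1)| ^ p := by
      rw [hr, Finset.sum_range_succ']
    rw [hsucc]
    have : (0:ℝ) ≤ |g ↑(0:ℕ) - g ↑((0:ℕ)+1)| ^ p := Real.rpow_nonneg (abs_nonneg _) p
    linarith
  · -- pnorm bound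
    rw [pnorm_tadpole n hn, pnorm_path]
    have hGnn : ∀ j : ℕ, 0 ≤ |g ↑j| ^ p := fun j => Real.rpow_nonneg (abs_nonneg _) p
    have hG0 : |g ↑(0:ℕ)| ^ p = 0 := by rw [hg0, abs_zero, Real.zero_rpow hpne]
    have hGn : |g ↑n| ^ p = 0 := by rw [hgn, abs_zero, Real.zero_rpow hpne]
    have hGle : ∀ j : ℕ, |g ↑j| ^ p ≤ (g ↑m) ^ p := by
      intro j
      have h1 : |g ↑j| = g ↑j := abs_of_nonneg (hnn _)
      have h2 : (g ↑m) = |g ↑m| := (abs_of_nonneg (hnn _)).symm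
      rw [h1, h2]
      exact Real.rpow_le_rpow (hnn _) (by rw [← h2]; exact hmax _) (le_of_lt hp0)
    have hMabs : |g ↑m| ^ p = (g ↑m) ^ p := by rw [abs_of_nonneg (hnn _)]
    -- extra terms
    have hex0 : |(fun v : Fin n => g ↑(max (v.val+1) m)) ↑(0:ℕ)| ^ p = (g ↑m) ^ p := by
      rw [happ 0 (by omega), show max (0+1) m = m from max_eq_right (by omega), hMabs]
    have hex2 : |(fun v : Fin n => g ↑(max (v.val+1) m)) ↑(2:ℕ)| ^ p = (g ↑m) ^ p := by
      rw [happ 2 (by omega), show max (2+1) m = m from max_eq_right (by omega), hMabs]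
    rw [hex0, hex2]
    -- tail lower bound
    have tail : ∀ k ∈ Finset.range (n-1),
        (|g ↑(k+1)| ^ p + |g ↑(k+1+1)| ^ p)
        ≤ (|(fun v : Fin n => g ↑(max (v.val+1) m)) ↑k| ^ p
          + |(fun v : Fin n => g ↑(max (v.val+1) m)) ↑(k+1)| ^ p) := by
      intro k hk
      have hk' := Finset.mem_range.mp hk
      rw [happ k (by omega), happ (k+1) (by omega)]
      have hb1 : |g ↑(k+1)| ^ p ≤ |g ↑(max (k+1) m)| ^ p := by
        rcases max_cases (k+1) m with ⟨he, -⟩ | ⟨he, hle⟩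
        · rw [he]
        · rw [he, hMabs]; exact hGle _
      have hb2 : |g ↑(k+1+1)| ^ p ≤ |g ↑(max (k+1+1) m)| ^ p := by
        rcases max_cases (k+1+1) m with ⟨he, -⟩ | ⟨he, hle⟩
        · rw [he]
        · rw [he, hMabs]; exact hGle _
      linarith
    have htail := Finset.sum_le_sum tail
    -- index shifting identities
    have hr : Finset.range n = Finset.range ((n-1)+1) := by
      rw [show (n-1)+1 = n from by omega]
    have hr2 : Finset.range (n-1) = Finset.range ((n-2)+1) := by
      rw [show (n-2)+1 = n-1 from by omega]
    have s1 : ∑ k ∈ Finset.range n, |g ↑k| ^ p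
        = ∑ k ∈ Finset.range (n-1), |g ↑(k+1)| ^ p := by
      rw [hr, Finset.sum_range_succ', hG0, add_zero]
    have s2 : ∑ k ∈ Finset.range n, |g ↑(k+1)| ^ p
        = ∑ k ∈ Finset.range (n-1), |g ↑(k+1)| ^ p := by
      rw [hr, Finset.sum_range_succ, show (n-1)+1 = n from by omega, hGn, add_zero]
    have s3 : ∑ k ∈ Finset.range (n-1), |g ↑(k+1)| ^ p
        ≤ (∑ k ∈ Finset.range (n-1), |g ↑(k+1+1)| ^ p) + (g ↑m) ^ p := by
      have a1 : ∑ k ∈ Finset.range (n-1), |g ↑(k+1)| ^ p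
          = (∑ k ∈ Finset.range (n-2), |g ↑(k+1+1)| ^ p) + |g ↑((0:ℕ)+1)| ^ p := by
        rw [hr2, Finset.sum_range_succ']
      have a2 : ∑ k ∈ Finset.range (n-1), |g ↑(k+1+1)| ^ p
          = (∑ k ∈ Finset.range (n-2), |g ↑(k+1+1)| ^ p) + |g ↑((n-2)+1+1)| ^ p := by
        rw [hr2, Finset.sum_range_succ]
      have a3 : |g ↑((n-2)+1+1)| ^ p = 0 := by
        rw [show (n-2)+1+1 = n from by omega, hGn]
      have a4 : |g ↑((0:ℕ)+1)| ^ p ≤ (g ↑m) ^ p := hGle _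
      rw [a1, a2, a3]
      linarith
    -- combine
    have lhs_split : ∑ k ∈ Finset.range n, (|g ↑k| ^ p + |g ↑(k+1)| ^ p)
        = (∑ k ∈ Finset.range n, |g ↑k| ^ p) + ∑ k ∈ Finset.range n, |g ↑(k+1)| ^ p :=
      Finset.sum_add_distrib
    have mid_split : ∑ k ∈ Finset.range (n-1), (|g ↑(k+1)| ^ p + |g ↑(k+1+1)| ^ p)
        = (∑ k ∈ Finset.range (n-1), |g ↑(k+1)| ^ p)
          + ∑ k ∈ Finset.range (n-1), |g ↑(k+1+1)| ^ p :=
      Finset.sum_add_distrib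
    rw [lhs_split, s1, s2]
    rw [mid_split] at htail
    linarith

lemma special4 {p : ℝ} (hp : 1 < p) (g : Fin (4+1) → ℝ)
    (hnn : ∀ x, 0 ≤ g x) (hg0 : g ↑(0:ℕ) = 0) (hg4 : g ↑(4:ℕ) = 0)
    (h13 : g ↑(1:ℕ) ≤ g ↑(3:ℕ)) (h32 : g ↑(3:ℕ) ≤ g ↑(2:ℕ)) (h12 : g ↑(1:ℕ) ≤ g ↑(2:ℕ))
    (hpos : 0 < g ↑(2:ℕ)) :
    ∃ h : Fin 4 → ℝ,
      (∀ x, deg (tadpole 4 3) x = 1 → h x = 0) ∧ h ≠ 0 ∧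
      energy (tadpole 4 3) p h ≤ energy (pathG (4+1)) p g ∧
      pnorm (pathG (4+1)) p g + (g ↑(2:ℕ)) ^ p ≤ pnorm (tadpole 4 3) p h := by
  have hp0 : (0:ℝ) < p := by linarith
  have hpne : p ≠ 0 := by linarith
  have happ : ∀ k : ℕ, k < 4 → (fun v : Fin 4 => g ↑(max (v.val+1) 2)) ↑k
      = g ↑(max (k+1) 2) := by
    intro k hk
    simp only
    rw [Fin.val_cast_of_lt hk]
  have hval : ∀ k : ℕ, k < 4 → ((↑k : Fin 4) : ℕ) = k := fun k hk => Fin.val_cast_of_lt hk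
  refine ⟨fun v : Fin 4 => g ↑(max (v.val+1) 2), ?_, ?_, ?_, ?_⟩
  · intro x hx
    have hxval : x.val = 3 := by
      by_contra h'
      exact tadpole_deg_ne_one 4 (by norm_num) x (by simpa using h') hx
    show g ↑(max (x.val+1) 2) = 0
    rw [hxval, show max (3+1) 2 = 4 from by norm_num]
    exact hg4
  · intro hzero
    have h0 := congrFun hzero (↑(0:ℕ) : Fin 4)
    rw [Fin.val_cast_of_lt (show (0:ℕ) < 4 from by norm_num)] at h0
    rw [show (0+1) ⊔ 2 = 2 from by norm_num] at h0
    simp only [Pi.zero_apply] at h0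
    exact hpos.ne' h0
  · rw [energy_tadpole 4 (by norm_num), energy_path 4]
    rw [show (4:ℕ) - 1 = 3 from rfl]
    simp only [Finset.sum_range_succ, Finset.sum_range_zero, zero_add]
    rw [hval 0 (by norm_num), hval 1 (by norm_num), hval 2 (by norm_num),
      hval (2+1) (by norm_num)]
    rw [show max (0+1) 2 = 2 from by norm_num, show max (1+1) 2 = 2 from by norm_num,
      show max (2+1) 2 = 3 from by norm_num, show max (2+1+1) 2 = 4 from by norm_num]
    rw [show ((1:ℕ)+1) = 2 from rfl, show ((2:ℕ)+1) = 3 from rfl,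
      show ((3:ℕ)+1) = 4 from rfl]
    have z1 : |g ↑(2:ℕ) - g ↑(2:ℕ)| ^ p = 0 := by
      rw [sub_self, abs_zero, Real.zero_rpow hpne]
    rw [z1]
    have hkey : |g ↑(2:ℕ) - g ↑(3:ℕ)| ^ p ≤ |g ↑(1:ℕ) - g ↑(2:ℕ)| ^ p := by
      apply Real.rpow_le_rpow (abs_nonneg _) _ (le_of_lt hp0)
      rw [abs_of_nonneg (sub_nonneg.mpr h32), abs_sub_comm, abs_of_nonneg (sub_nonneg.mpr h12)]
      linarith
    have hnn1 : (0:ℝ) ≤ |g ↑(0:ℕ) - g ↑(1:ℕ)| ^ p := Real.rpow_nonneg (abs_nonneg _) p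
    linarith
  · rw [pnorm_tadpole 4 (by norm_num), pnorm_path 4]
    rw [show (4:ℕ) - 1 = 3 from rfl]
    simp only [Finset.sum_range_succ, Finset.sum_range_zero, zero_add]
    rw [hval 0 (by norm_num), hval 1 (by norm_num), hval 2 (by norm_num),
      hval (2+1) (by norm_num)]
    rw [show max (0+1) 2 = 2 from by norm_num, show max (1+1) 2 = 2 from by norm_num,
      show max (2+1) 2 = 3 from by norm_num, show max (2+1+1) 2 = 4 from by norm_num]
    rw [show ((1:ℕ)+1) = 2 from rfl, show ((2:ℕ)+1) = 3 from rfl,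
      show ((3:ℕ)+1) = 4 from rfl]
    have hz0 : |g ↑(0:ℕ)| ^ p = 0 := by rw [hg0, abs_zero, Real.zero_rpow hpne]
    have hz4 : |g ↑(4:ℕ)| ^ p = 0 := by rw [hg4, abs_zero, Real.zero_rpow hpne]
    rw [hz0, hz4]
    have habs2 : |g ↑(2:ℕ)| ^ p = (g ↑(2:ℕ)) ^ p := by rw [abs_of_nonneg (hnn _)]
    have hb1 : |g ↑(1:ℕ)| ^ p ≤ |g ↑(3:ℕ)| ^ p := by
      apply Real.rpow_le_rpow (abs_nonneg _) _ (le_of_lt hp0)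
      rw [abs_of_nonneg (hnn _), abs_of_nonneg (hnn _)]
      exact h13
    have hb2 : |g ↑(1:ℕ)| ^ p ≤ |g ↑(2:ℕ)| ^ p := by
      apply Real.rpow_le_rpow (abs_nonneg _) _ (le_of_lt hp0)
      rw [abs_of_nonneg (hnn _), abs_of_nonneg (hnn _)]
      exact h12
    rw [← habs2]
    linarith

lemma key (n : ℕ) (hn : 4 ≤ n) {p : ℝ} (hp : 1 < p) (f : Fin (n+1) → ℝ)
    (hbd : ∀ x, deg (pathG (n+1)) x = 1 → f x = 0) (hf0 : f ≠ 0) :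
    lambda1 (tadpole n 3) p
      ≤ (2*(n:ℝ)/(2*(n:ℝ)+1)) * rayleigh (pathG (n+1)) p f := by
  have hp0 : (0:ℝ) < p := by linarith
  have hn1 : 1 ≤ n := by omega
  have hdeg0 : deg (pathG (n+1)) (↑(0:ℕ) : Fin (n+1)) = 1 := by
    rw [path_deg_one_iff n hn1]
    left; exact Fin.val_cast_of_lt (by omega)
  have hdegn : deg (pathG (n+1)) (↑n : Fin (n+1)) = 1 := by
    rw [path_deg_one_iff n hn1]
    right; exact Fin.val_cast_of_lt (by omega)
  have hf0' : f ↑(0:ℕ) = 0 := hbd _ hdeg0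
  have hfn : f ↑n = 0 := hbd _ hdegn
  set g : Fin (n+1) → ℝ := fun x => |f x| with hgdef
  have hgnn : ∀ x, 0 ≤ g x := fun x => abs_nonneg _
  have hg0 : g ↑(0:ℕ) = 0 := by show |f _| = 0; rw [hf0', abs_zero]
  have hgn : g ↑n = 0 := by show |f _| = 0; rw [hfn, abs_zero]
  have hEg : energy (pathG (n+1)) p g ≤ energy (pathG (n+1)) p f := by
    rw [energy_path, energy_path]
    apply Finset.sum_le_sum
    intro k _
    apply Real.rpow_le_rpow (abs_nonneg _) _ (le_of_lt hp0)
    exact abs_abs_sub_abs_le_abs_sub _ _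
  have hNg : pnorm (pathG (n+1)) p g = pnorm (pathG (n+1)) p f := by
    rw [pnorm_path, pnorm_path]
    refine Finset.sum_congr rfl fun k _ => ?_
    show (|(|f _|)| ^ p + |(|f _|)| ^ p) = _
    rw [abs_abs, abs_abs]
  obtain ⟨m₀, -, hmax⟩ := Finset.exists_max_image Finset.univ g ⟨0, Finset.mem_univ 0⟩
  obtain ⟨x₀, hx₀⟩ : ∃ x, f x ≠ 0 := Function.ne_iff.mp hf0
  have hMpos : 0 < g m₀ := lt_of_lt_of_le (abs_pos.mpr hx₀) (hmax x₀ (Finset.mem_univ _))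
  have hm₀lt := m₀.isLt
  have hm₀0 : m₀.val ≠ 0 := by
    intro hc
    have he : m₀ = ↑(0:ℕ) := by
      apply Fin.ext; rw [Fin.val_cast_of_lt (by omega)]; exact hc
    rw [he, hg0] at hMpos; exact lt_irrefl _ hMpos
  have hm₀n : m₀.val ≠ n := by
    intro hc
    have he : m₀ = ↑n := by
      apply Fin.ext; rw [Fin.val_cast_of_lt (by omega)]; exact hc
    rw [he, hgn] at hMpos; exact lt_irrefl _ hMpos
  have main : ∃ h : Fin n → ℝ, (∀ x, deg (tadpole n 3) x = 1 → h x = 0) ∧ h ≠ 0 ∧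
      energy (tadpole n 3) p h ≤ energy (pathG (n+1)) p f ∧
      pnorm (pathG (n+1)) p f + (g m₀) ^ p ≤ pnorm (tadpole n 3) p h := by
    by_cases hc1 : 3 ≤ m₀.val
    · obtain ⟨h, hb, hne, hE, hN⟩ := transplant n hn hp g hgnn hg0 hgn m₀.val hc1 (by omega)
        (fun x => by rw [Fin.cast_val_eq_self]; exact hmax x (Finset.mem_univ _))
        (by rw [Fin.cast_val_eq_self]; exact hMpos)
      rw [Fin.cast_val_eq_self] at hN
      exact ⟨h, hb, hne, hE.trans hEg, by rw [← hNg]; exact hN⟩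
    · by_cases hc2 : 3 ≤ n - m₀.val
      · have hg'0 : (fun v : Fin (n+1) => g ↑(n - v.val)) ↑(0:ℕ) = 0 := by
          simp only
          rw [Fin.val_cast_of_lt (show (0:ℕ) < n+1 from by omega), Nat.sub_zero]
          exact hgn
        have hg'n : (fun v : Fin (n+1) => g ↑(n - v.val)) ↑n = 0 := by
          simp only
          rw [Fin.val_cast_of_lt (show n < n+1 from by omega), Nat.sub_self]
          exact hg0
        have hg'max : ∀ x, (fun v : Fin (n+1) => g ↑(n - v.val)) x
            ≤ (fun v : Fin (n+1) => g ↑(n - v.val)) ↑(n - m₀.val) := by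
          intro x
          simp only
          rw [Fin.val_cast_of_lt (show n - m₀.val < n+1 from by omega),
            show n - (n - m₀.val) = m₀.val from by omega, Fin.cast_val_eq_self]
          exact hmax _ (Finset.mem_univ _)
        have hg'pos : 0 < (fun v : Fin (n+1) => g ↑(n - v.val)) ↑(n - m₀.val) := by
          simp only
          rw [Fin.val_cast_of_lt (show n - m₀.val < n+1 from by omega),
            show n - (n - m₀.val) = m₀.val from by omega, Fin.cast_val_eq_self]
          exact hMpos
        obtain ⟨h, hb, hne, hE, hN⟩ := transplant n hn hp
          (fun v : Fin (n+1) => g ↑(n - v.val)) (fun x => hgnn _) hg'0 hg'n (n - m₀.val)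
          hc2 (by omega) hg'max hg'pos
        refine ⟨h, hb, hne, ?_, ?_⟩
        · calc energy (tadpole n 3) p h
              ≤ energy (pathG (n+1)) p (fun v : Fin (n+1) => g ↑(n - v.val)) := hE
            _ = energy (pathG (n+1)) p g := energy_path_reflect n p g
            _ ≤ energy (pathG (n+1)) p f := hEg
        · have h1 : pnorm (pathG (n+1)) p (fun v : Fin (n+1) => g ↑(n - v.val))
              = pnorm (pathG (n+1)) p g := pnorm_path_reflect n p g
          rw [h1, hNg] at hN
          beta_reduce at hN
          rw [Fin.val_cast_of_lt (show n - m₀.val < n+1 from by omega)] at hN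
          rw [show n - (n - m₀.val) = m₀.val from by omega] at hN
          rw [Fin.cast_val_eq_self] at hN
          exact hN
      · have hn4 : n = 4 := by omega
        have hm2 : m₀.val = 2 := by omega
        subst hn4
        have hm₀eq : (↑(2:ℕ) : Fin (4+1)) = m₀ := by
          apply Fin.ext; rw [Fin.val_cast_of_lt (by norm_num)]; omega
        have h32 : g ↑(3:ℕ) ≤ g ↑(2:ℕ) := by
          rw [hm₀eq]; exact hmax _ (Finset.mem_univ _)
        have h12' : g ↑(1:ℕ) ≤ g ↑(2:ℕ) := by
          rw [hm₀eq]; exact hmax _ (Finset.mem_univ _)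
        have hpos2 : 0 < g ↑(2:ℕ) := by rw [hm₀eq]; exact hMpos
        by_cases hle : g ↑(1:ℕ) ≤ g ↑(3:ℕ)
        · obtain ⟨h, hb, hne, hE, hN⟩ := special4 hp g hgnn hg0 hgn hle h32 h12'
            hpos2
          rw [hm₀eq] at hN
          refine ⟨h, hb, hne, hE.trans hEg, ?_⟩
          rw [← hNg]
          exact hN
        · push_neg at hle
          have g'app : ∀ k : ℕ, k < 5 →
              (fun v : Fin (4+1) => g ↑(4 - v.val)) ↑k = g ↑(4 - k) := by
            intro k hk
            simp only
            rw [Fin.val_cast_of_lt hk]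
          have hg'0 : (fun v : Fin (4+1) => g ↑(4 - v.val)) ↑(0:ℕ) = 0 := by
            rw [g'app 0 (by norm_num), show (4:ℕ) - 0 = 4 from rfl]
            exact hgn
          have hg'4 : (fun v : Fin (4+1) => g ↑(4 - v.val)) ↑(4:ℕ) = 0 := by
            rw [g'app 4 (by norm_num), show (4:ℕ) - 4 = 0 from rfl]
            exact hg0
          have h13' : (fun v : Fin (4+1) => g ↑(4 - v.val)) ↑(1:ℕ)
              ≤ (fun v : Fin (4+1) => g ↑(4 - v.val)) ↑(3:ℕ) := by
            rw [g'app 1 (by norm_num), g'app 3 (by norm_num),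
              show (4:ℕ) - 1 = 3 from rfl, show (4:ℕ) - 3 = 1 from rfl]
            exact le_of_lt hle
          have h32' : (fun v : Fin (4+1) => g ↑(4 - v.val)) ↑(3:ℕ)
              ≤ (fun v : Fin (4+1) => g ↑(4 - v.val)) ↑(2:ℕ) := by
            rw [g'app 3 (by norm_num), g'app 2 (by norm_num),
              show (4:ℕ) - 3 = 1 from rfl, show (4:ℕ) - 2 = 2 from rfl]
            exact h12'
          have h12'' : (fun v : Fin (4+1) => g ↑(4 - v.val)) ↑(1:ℕ)
              ≤ (fun v : Fin (4+1) => g ↑(4 - v.val)) ↑(2:ℕ) := by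
            rw [g'app 1 (by norm_num), g'app 2 (by norm_num),
              show (4:ℕ) - 1 = 3 from rfl, show (4:ℕ) - 2 = 2 from rfl]
            exact h32
          have hpos2' : 0 < (fun v : Fin (4+1) => g ↑(4 - v.val)) ↑(2:ℕ) := by
            rw [g'app 2 (by norm_num), show (4:ℕ) - 2 = 2 from rfl]
            exact hpos2
          obtain ⟨h, hb, hne, hE, hN⟩ := special4 hp
            (fun v : Fin (4+1) => g ↑(4 - v.val)) (fun x => hgnn _) hg'0 hg'4 h13' h32'
            h12'' hpos2'
          refine ⟨h, hb, hne, ?_, ?_⟩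
          · calc energy (tadpole 4 3) p h
                ≤ energy (pathG (4+1)) p (fun v : Fin (4+1) => g ↑(4 - v.val)) := hE
              _ = energy (pathG (4+1)) p g := energy_path_reflect 4 p g
              _ ≤ energy (pathG (4+1)) p f := hEg
          · have h1 : pnorm (pathG (4+1)) p (fun v : Fin (4+1) => g ↑(4 - v.val))
                = pnorm (pathG (4+1)) p g := pnorm_path_reflect 4 p g
            rw [h1, hNg] at hN
            beta_reduce at hN
            rw [Fin.val_cast_of_lt (show (2:ℕ) < 4+1 from by norm_num)] at hN
            rw [show (4:ℕ) - 2 = 2 from rfl, hm₀eq] at hN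
            exact hN
  obtain ⟨h, hb, hne, hE, hN⟩ := main
  have hEnn : 0 ≤ energy (pathG (n+1)) p f := energy_nonneg _ _ _
  have hNpos : 0 < pnorm (pathG (n+1)) p f := pnorm_path_pos n hn1 hp0 f hf0
  have hnR : (0:ℝ) < n := by
    have : (0:ℕ) < n := by omega
    exact_mod_cast this
  have hMppos : 0 < (g m₀) ^ p := Real.rpow_pos_of_pos hMpos p
  have hMp : pnorm (pathG (n+1)) p f / (2*(n:ℝ)) ≤ (g m₀) ^ p := by
    rw [div_le_iff₀ (by positivity)]
    rw [pnorm_path]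
    have hb' : ∀ k ∈ Finset.range n, |f ↑k| ^ p + |f ↑(k+1)| ^ p
        ≤ (g m₀) ^ p + (g m₀) ^ p := by
      intro k _
      have habs : ∀ j : Fin (n+1), |f j| ^ p ≤ (g m₀) ^ p := by
        intro j
        have h1 : |f j| ≤ g m₀ := hmax j (Finset.mem_univ _)
        exact Real.rpow_le_rpow (abs_nonneg _) h1 (le_of_lt hp0)
      have := habs ↑k
      have := habs ↑(k+1)
      linarith
    calc (∑ k ∈ Finset.range n, (|f ↑k| ^ p + |f ↑(k+1)| ^ p))
        ≤ ∑ _k ∈ Finset.range n, ((g m₀) ^ p + (g m₀) ^ p) := Finset.sum_le_sum hb'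
      _ = (g m₀) ^ p * (2*(n:ℝ)) := by
          rw [Finset.sum_const, Finset.card_range, nsmul_eq_mul]
          ring
  have hbdd : BddBelow {r : ℝ | ∃ f0 : Fin n → ℝ,
      (∀ x : Fin n, deg (tadpole n 3) x = 1 → f0 x = 0) ∧ f0 ≠ 0 ∧
      r = rayleigh (tadpole n 3) p f0} := by
    refine ⟨0, ?_⟩
    rintro r ⟨f0, -, -, rfl⟩
    exact rayleigh_nonneg _ _ _
  have hmem : rayleigh (tadpole n 3) p h ∈ {r : ℝ | ∃ f0 : Fin n → ℝ,
      (∀ x : Fin n, deg (tadpole n 3) x = 1 → f0 x = 0) ∧ f0 ≠ 0 ∧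
      r = rayleigh (tadpole n 3) p f0} := ⟨h, hb, hne, rfl⟩
  have hlam : lambda1 (tadpole n 3) p ≤ rayleigh (tadpole n 3) p h := csInf_le hbdd hmem
  have hNTpos : 0 < pnorm (tadpole n 3) p h :=
    lt_of_lt_of_le (by positivity) hN
  have h1 : rayleigh (tadpole n 3) p h
      ≤ energy (pathG (n+1)) p f / (pnorm (pathG (n+1)) p f + (g m₀) ^ p) := by
    rw [rayleigh]
    exact div_le_div₀ hEnn hE (by positivity) hN
  have h2 : energy (pathG (n+1)) p f / (pnorm (pathG (n+1)) p f + (g m₀) ^ p)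
      ≤ energy (pathG (n+1)) p f
        / (pnorm (pathG (n+1)) p f + pnorm (pathG (n+1)) p f / (2*(n:ℝ))) := by
    apply div_le_div_of_nonneg_left hEnn (by positivity)
    linarith
  have h3 : energy (pathG (n+1)) p f
        / (pnorm (pathG (n+1)) p f + pnorm (pathG (n+1)) p f / (2*(n:ℝ)))
      = (2*(n:ℝ)/(2*(n:ℝ)+1)) * (energy (pathG (n+1)) p f / pnorm (pathG (n+1)) p f) := by
    have hN0 : pnorm (pathG (n+1)) p f ≠ 0 := ne_of_gt hNpos
    have hn0 : (n:ℝ) ≠ 0 := ne_of_gt hnR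
    have h2n1 : (2*(n:ℝ)+1) ≠ 0 := by positivity
    field_simp
  rw [rayleigh]
  calc lambda1 (tadpole n 3) p ≤ rayleigh (tadpole n 3) p h := hlam
    _ ≤ energy (pathG (n+1)) p f / (pnorm (pathG (n+1)) p f + (g m₀) ^ p) := h1
    _ ≤ energy (pathG (n+1)) p f
        / (pnorm (pathG (n+1)) p f + pnorm (pathG (n+1)) p f / (2*(n:ℝ))) := h2
    _ = (2*(n:ℝ)/(2*(n:ℝ)+1)) * (energy (pathG (n+1)) p f / pnorm (pathG (n+1)) p f) := h3

end PTaux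

/-- For `n ≥ 4` and `p > 1`, `λ_{1,p}(P_{n+1}) > λ_{1,p}(T_{n,3})`. -/
theorem path_tadpole_comparison (n : ℕ) (hn : 4 ≤ n) (p : ℝ) (hp : 1 < p) :
    lambda1 (tadpole n 3) p < lambda1 (pathG (n + 1)) p := by
  have hn1 : 1 ≤ n := by omega
  have hp0 : (0:ℝ) < p := by linarith
  have hnR : (0:ℝ) < n := by
    have : (0:ℕ) < n := by omega
    exact_mod_cast this
  have hPdef : lambda1 (pathG (n+1)) p = sInf {r : ℝ | ∃ f : Fin (n+1) → ℝ,
      (∀ x : Fin (n+1), deg (pathG (n+1)) x = 1 → f x = 0) ∧ f ≠ 0 ∧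
      r = rayleigh (pathG (n+1)) p f} := rfl
  -- the witness test function on the path
  have hSne : ∃ r : ℝ, r ∈ {r : ℝ | ∃ f : Fin (n+1) → ℝ,
      (∀ x : Fin (n+1), deg (pathG (n+1)) x = 1 → f x = 0) ∧ f ≠ 0 ∧
      r = rayleigh (pathG (n+1)) p f} := by
    refine ⟨rayleigh (pathG (n+1)) p
      (fun x => if x = (↑(1:ℕ) : Fin (n+1)) then (1:ℝ) else 0),
      (fun x => if x = (↑(1:ℕ) : Fin (n+1)) then (1:ℝ) else 0), ?_, ?_, rfl⟩
    · intro x hx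
      rw [PTaux.path_deg_one_iff n hn1] at hx
      have h1v : ((↑(1:ℕ) : Fin (n+1))).val = 1 := Fin.val_cast_of_lt (by omega)
      simp only
      rw [if_neg]
      intro hc
      rw [hc] at hx
      rw [h1v] at hx
      omega
    · intro hzero
      have := congrFun hzero (↑(1:ℕ) : Fin (n+1))
      simp only [if_pos rfl, Pi.zero_apply] at this
      exact one_ne_zero this
  -- positive lower bound for the path eigenvalue
  have hlowbound : ∀ r ∈ {r : ℝ | ∃ f : Fin (n+1) → ℝ,
      (∀ x : Fin (n+1), deg (pathG (n+1)) x = 1 → f x = 0) ∧ f ≠ 0 ∧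
      r = rayleigh (pathG (n+1)) p f},
      1 / (2 * n * (n:ℝ) ^ (p-1)) ≤ r := by
    rintro r ⟨f, hbd, hf0, rfl⟩
    have hdeg0 : deg (pathG (n+1)) (↑(0:ℕ) : Fin (n+1)) = 1 := by
      rw [PTaux.path_deg_one_iff n hn1]
      left; exact Fin.val_cast_of_lt (by omega)
    exact PTaux.rayleigh_path_lower n hn1 hp f hf0 (hbd _ hdeg0)
  have hlow : 1 / (2 * n * (n:ℝ) ^ (p-1)) ≤ lambda1 (pathG (n+1)) p := by
    rw [hPdef]
    exact le_csInf hSne hlowbound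
  have hcpos : (0:ℝ) < 1 / (2 * n * (n:ℝ) ^ (p-1)) := by
    have := Real.rpow_pos_of_pos hnR (p-1)
    positivity
  have hPpos : 0 < lambda1 (pathG (n+1)) p := lt_of_lt_of_le hcpos hlow
  -- the key comparison
  have hq : (0:ℝ) < 2*(n:ℝ)/(2*(n:ℝ)+1) := by positivity
  have hq1 : 2*(n:ℝ)/(2*(n:ℝ)+1) < 1 := by
    rw [div_lt_one (by positivity)]
    linarith
  have hkey : ∀ r ∈ {r : ℝ | ∃ f : Fin (n+1) → ℝ,
      (∀ x : Fin (n+1), deg (pathG (n+1)) x = 1 → f x = 0) ∧ f ≠ 0 ∧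
      r = rayleigh (pathG (n+1)) p f},
      lambda1 (tadpole n 3) p / (2*(n:ℝ)/(2*(n:ℝ)+1)) ≤ r := by
    rintro r ⟨f, hbd, hf0, rfl⟩
    rw [div_le_iff₀ hq]
    rw [mul_comm]
    exact PTaux.key n hn hp f hbd hf0
  have h2b : lambda1 (tadpole n 3) p / (2*(n:ℝ)/(2*(n:ℝ)+1)) ≤ lambda1 (pathG (n+1)) p := by
    rw [hPdef]
    exact le_csInf hSne hkey
  have h2c : lambda1 (tadpole n 3) p ≤ lambda1 (pathG (n+1)) p * (2*(n:ℝ)/(2*(n:ℝ)+1)) :=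
    (div_le_iff₀ hq).mp h2b
  calc lambda1 (tadpole n 3) p
      ≤ lambda1 (pathG (n+1)) p * (2*(n:ℝ)/(2*(n:ℝ)+1)) := h2c
    _ < lambda1 (pathG (n+1)) p := mul_lt_of_lt_one_right hPpos hq1
end
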